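/- arXiv:2412.07661 — 8 statements merged into one kernel-verified Lean document; each statement's English description precedes it below -/
import Mathlib

section
/- If 1 ≤ p ≤ ∞, α > 1/p' (p' the conjugate exponent), f : ℝ → ℂ is measurable and f(x)|x|^α ∈ L^p, then |1 - e^{2πi x}|^k · f(x) is integrable for every integer k ≥ α, with ‖f(x)(1-e^{2πi x})^k‖_{L¹} ≤ C ‖f(x)|x|^α‖_{L^p}. -/
open MeasureTheory Real Filter FourierTransform Topology
open scoped ENNReal NNReal


lemma norm_one_sub_exp_mul_I_le (θ : ℝ) : ‖1 - Complex.exp (θ * Complex.I)‖ ≤ |θ| := by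
  have hid : (1 : ℂ) - Complex.exp (θ * Complex.I)
      = Complex.ofReal (1 - Real.cos θ) + Complex.ofReal (-Real.sin θ) * Complex.I := by
    rw [Complex.exp_mul_I, ← Complex.ofReal_cos, ← Complex.ofReal_sin]
    push_cast
    ring
  rw [hid, Complex.norm_add_mul_I]
  have h1 : Real.sin (θ/2) ^ 2 = (1 - Real.cos θ) / 2 := by
    rw [← sq_abs, Real.abs_sin_half, Real.sq_sqrt]
    nlinarith [Real.cos_le_one θ]
  have h2 : |Real.sin (θ/2)| ≤ |θ/2| := Real.abs_sin_le_abs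
  have h3 : Real.sin (θ/2) ^ 2 ≤ (θ/2) ^ 2 := by
    rw [← sq_abs, ← sq_abs (θ/2)]
    exact pow_le_pow_left₀ (abs_nonneg _) h2 2
  have h4 : (1 - Real.cos θ) ^ 2 + (-Real.sin θ) ^ 2 ≤ θ ^ 2 := by
    have hc : Real.sin θ ^ 2 + Real.cos θ ^ 2 = 1 := Real.sin_sq_add_cos_sq θ
    nlinarith
  calc Real.sqrt ((1 - Real.cos θ) ^ 2 + (-Real.sin θ) ^ 2) ≤ Real.sqrt (θ ^ 2) :=
        Real.sqrt_le_sqrt h4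
    _ = |θ| := Real.sqrt_sq_eq_abs θ

lemma memLp_w (p' : ℝ≥0∞) (hp'0 : p' ≠ 0) (α : ℝ) (hα0 : 0 < α) (hα : (1/p').toReal < α) :
    MemLp (fun x : ℝ => (2 / (1 + |x|)) ^ α) p' volume := by
  have hwmeas : AEStronglyMeasurable (fun x : ℝ => (2 / (1 + |x|)) ^ α) volume := by
    apply Measurable.aestronglyMeasurable; fun_prop
  have hwpos : ∀ x : ℝ, (0:ℝ) < 1 + |x| := fun x => by positivity
  by_cases htop : p' = ⊤
  · subst htop
    apply memLp_top_of_bound hwmeas ((2:ℝ) ^ α)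
    filter_upwards with x
    rw [Real.norm_eq_abs, abs_of_nonneg (Real.rpow_nonneg (by positivity) _)]
    apply Real.rpow_le_rpow (by positivity) _ hα0.le
    rw [div_le_iff₀ (hwpos x)]
    nlinarith [abs_nonneg x]
  · set q := p'.toReal with hq
    have hq0 : 0 < q := ENNReal.toReal_pos hp'0 htop
    have hαq : 1 < α * q := by
      rw [one_div, ENNReal.toReal_inv] at hα
      have h1 : q⁻¹ * q = 1 := inv_mul_cancel₀ hq0.ne'
      nlinarith
    have hint : Integrable (fun x : ℝ => (2:ℝ) ^ (α*q) * (1 + ‖x‖) ^ (-(α*q))) volume := by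
      apply Integrable.const_mul
      apply integrable_one_add_norm
      simpa using hαq
    have heq : (fun x : ℝ => ‖(2 / (1 + |x|)) ^ α‖ ^ q)
        = fun x : ℝ => (2:ℝ) ^ (α*q) * (1 + ‖x‖) ^ (-(α*q)) := by
      funext x
      rw [Real.norm_eq_abs (((2 / (1 + |x|)) ^ α)), abs_of_nonneg (Real.rpow_nonneg (by positivity) _),
        ← Real.rpow_mul (by positivity : (0:ℝ) ≤ 2 / (1 + |x|)),
        Real.div_rpow (by norm_num) (hwpos x).le, Real.rpow_neg (by positivity),
        div_eq_mul_inv, Real.norm_eq_abs]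
    apply (memLp_norm_rpow_iff hwmeas hp'0 htop).mp
    rw [ENNReal.div_self hp'0 htop, ← hq, heq]
    exact memLp_one_iff_integrable.mpr hint


lemma key_bound (α : ℝ) (hα0 : 0 < α) (k : ℕ) (hk : α ≤ k) (x : ℝ) :
    ‖(1 - Complex.exp (2 * π * Complex.I * x)) ^ k * (((|x| ^ α : ℝ) : ℂ))⁻¹‖
      ≤ (2*π)^k * (2 / (1 + |x|)) ^ α := by
  have hkpos : k ≠ 0 := by
    have : (0:ℝ) < k := lt_of_lt_of_le hα0 hk
    exact_mod_cast Nat.pos_of_ne_zero (fun h => by simp [h] at this) |>.ne'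
  by_cases hx : x = 0
  · subst hx
    simp only [Complex.ofReal_zero, mul_zero, Complex.exp_zero, sub_self, zero_pow hkpos,
      zero_mul, norm_zero]
    positivity
  · have hxpos : 0 < |x| := abs_pos.mpr hx
    have harg : 2 * (π:ℂ) * Complex.I * (x:ℂ) = ((2*π*x : ℝ):ℂ) * Complex.I := by
      push_cast; ring
    set t := min 1 |x| with ht
    have ht0 : 0 < t := lt_min one_pos hxpos
    have ht1 : t ≤ 1 := min_le_left _ _
    have h2 : ‖1 - Complex.exp (2 * π * Complex.I * x)‖ ≤ 2*π*t := by
      rw [harg]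
      rcases le_total (|x|) 1 with hle | hle
      · have : t = |x| := min_eq_right hle
        rw [this]
        calc ‖1 - Complex.exp (((2*π*x : ℝ):ℂ) * Complex.I)‖ ≤ |2*π*x| :=
              norm_one_sub_exp_mul_I_le _
          _ = 2*π*|x| := by
              rw [abs_mul, abs_of_pos (by positivity : (0:ℝ) < 2*π)]
      · have : t = 1 := min_eq_left hle
        rw [this, mul_one]
        calc ‖1 - Complex.exp (((2*π*x : ℝ):ℂ) * Complex.I)‖
            ≤ ‖(1:ℂ)‖ + ‖Complex.exp (((2*π*x : ℝ):ℂ) * Complex.I)‖ := norm_sub_le _ _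
          _ = 2 := by rw [norm_one, Complex.norm_exp_ofReal_mul_I]; norm_num
          _ ≤ 2*π := by nlinarith [Real.pi_gt_three]
    have hnorm : ‖(1 - Complex.exp (2 * π * Complex.I * x)) ^ k * (((|x| ^ α : ℝ) : ℂ))⁻¹‖
        = ‖1 - Complex.exp (2 * π * Complex.I * x)‖ ^ k * ((|x| ^ α)⁻¹ : ℝ) := by
      rw [norm_mul, norm_pow, norm_inv, Complex.norm_real, Real.norm_eq_abs,
        abs_of_nonneg (Real.rpow_nonneg (abs_nonneg x) _)]
    rw [hnorm]
    have hinv0 : (0:ℝ) ≤ (|x| ^ α)⁻¹ := by positivity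
    calc ‖1 - Complex.exp (2 * π * Complex.I * x)‖ ^ k * ((|x| ^ α)⁻¹ : ℝ)
        ≤ (2*π*t) ^ k * (|x| ^ α)⁻¹ := by
          apply mul_le_mul_of_nonneg_right _ hinv0
          exact pow_le_pow_left₀ (norm_nonneg _) h2 k
      _ = (2*π)^k * (t ^ k * (|x| ^ α)⁻¹) := by rw [mul_pow]; ring
      _ ≤ (2*π)^k * (t ^ α * (|x| ^ α)⁻¹) := by
          apply mul_le_mul_of_nonneg_left _ (by positivity)
          apply mul_le_mul_of_nonneg_right _ hinv0
          rw [← Real.rpow_natCast t k]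
          exact Real.rpow_le_rpow_of_exponent_ge ht0 ht1 hk
      _ = (2*π)^k * (t / |x|) ^ α := by
          rw [Real.div_rpow ht0.le (abs_nonneg x), div_eq_mul_inv]
      _ ≤ (2*π)^k * (2 / (1 + |x|)) ^ α := by
          apply mul_le_mul_of_nonneg_left _ (by positivity)
          apply Real.rpow_le_rpow (by positivity) _ hα0.le
          rw [div_le_div_iff₀ hxpos (by positivity)]
          rcases le_total (|x|) 1 with hle | hle
          · have : t = |x| := min_eq_right hle
            rw [this]; nlinarith
          · have : t = 1 := min_eq_left hle
            rw [this]; nlinarith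

/-- if α > 1/p' and f(x)|x|^α ∈ L^p, then (1-e^{2πix})^k f is integrable
for every integer k ≥ α, with L¹ norm controlled by the L^p norm. -/
theorem stmt2 (p p' : ℝ≥0∞) (hconj : 1/p + 1/p' = 1) (α : ℝ) (hα : (1/p').toReal < α)
    (k : ℕ) (hk : α ≤ k) :
    ∃ C : ℝ, 0 < C ∧ ∀ f : ℝ → ℂ, AEStronglyMeasurable f volume →
      eLpNorm (fun x : ℝ => f x * ((|x| ^ α : ℝ) : ℂ)) p volume < ⊤ →
      Integrable (fun x : ℝ => f x * (1 - Complex.exp (2 * Real.pi * Complex.I * x)) ^ k) ∧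
      eLpNorm (fun x : ℝ => f x * (1 - Complex.exp (2 * Real.pi * Complex.I * x)) ^ k) 1 volume ≤
        ENNReal.ofReal C * eLpNorm (fun x : ℝ => f x * ((|x| ^ α : ℝ) : ℂ)) p volume := by
  have hp'le : 1/p' ≤ 1 := by
    calc 1/p' ≤ 1/p + 1/p' := self_le_add_left _ _
      _ = 1 := hconj
  have hp'1 : (1:ℝ≥0∞) ≤ p' := by rwa [one_div, ENNReal.inv_le_one] at hp'le
  have hp'0 : p' ≠ 0 := (zero_lt_one.trans_le hp'1).ne'
  have hα0 : 0 < α := lt_of_le_of_lt ENNReal.toReal_nonneg hα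
  have hk0 : k ≠ 0 := by
    have : (0:ℝ) < k := lt_of_lt_of_le hα0 hk
    exact_mod_cast (Nat.pos_of_ne_zero (fun h => by simp [h] at this)).ne'
  set φ : ℝ → ℂ :=
    fun x => (1 - Complex.exp (2 * π * Complex.I * x)) ^ k * (((|x| ^ α : ℝ) : ℂ))⁻¹ with hφ
  have hφmeas : AEStronglyMeasurable φ volume := by
    apply Measurable.aestronglyMeasurable; fun_prop
  have hφmem : MemLp φ p' volume := by
    have hw := memLp_w p' hp'0 α hα0 hα
    have hwc : MemLp (fun x : ℝ => (2*π)^k * (2 / (1 + |x|)) ^ α) p' volume := hw.const_mul _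
    apply hwc.of_le hφmeas
    filter_upwards with x
    rw [Real.norm_eq_abs ((2*π)^k * (2 / (1 + |x|)) ^ α), abs_of_nonneg (by positivity)]
    exact key_bound α hα0 k hk x
  refine ⟨(eLpNorm φ p' volume).toReal + 1, by positivity, ?_⟩
  intro f hf hfin
  set g : ℝ → ℂ := fun x => f x * ((|x| ^ α : ℝ) : ℂ) with hg
  have hgmeas : AEStronglyMeasurable g volume := by
    apply hf.mul
    apply Measurable.aestronglyMeasurable; fun_prop
  have hkey : (fun x : ℝ => f x * (1 - Complex.exp (2 * π * Complex.I * x)) ^ k) = φ • g := by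
    funext x
    simp only [Pi.smul_apply, smul_eq_mul, Pi.mul_apply, hφ, hg]
    by_cases hx : x = 0
    · subst hx
      have h0 : |(0:ℝ)| ^ α = 0 := by rw [abs_zero, Real.zero_rpow hα0.ne']
      simp [h0, hk0]
    · have hne : ((|x| ^ α : ℝ) : ℂ) ≠ 0 := by
        simp only [ne_eq, Complex.ofReal_eq_zero]
        exact (Real.rpow_pos_of_pos (abs_pos.mpr hx) α).ne'
      field_simp
  have hC : eLpNorm φ p' volume ≤ ENNReal.ofReal ((eLpNorm φ p' volume).toReal + 1) :=
    calc eLpNorm φ p' volume = ENNReal.ofReal (eLpNorm φ p' volume).toReal :=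
          (ENNReal.ofReal_toReal hφmem.2.ne).symm
      _ ≤ _ := ENNReal.ofReal_le_ofReal (by linarith)
  have hhold : eLpNorm (φ • g) 1 volume ≤ eLpNorm φ p' volume * eLpNorm g p volume := by
    haveI : ENNReal.HolderTriple p' p 1 := ⟨by rw [inv_one, add_comm, ← one_div, ← one_div]; exact hconj⟩
    apply eLpNorm_smul_le_mul_eLpNorm hgmeas hφmeas
  constructor
  · rw [← memLp_one_iff_integrable]
    constructor
    · apply hf.mul
      apply Measurable.aestronglyMeasurable; fun_prop
    · rw [hkey]
      exact lt_of_le_of_lt hhold (ENNReal.mul_lt_top hφmem.2 hfin)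
  · calc eLpNorm (fun x : ℝ => f x * (1 - Complex.exp (2 * π * Complex.I * x)) ^ k) 1 volume
        = eLpNorm (φ • g) 1 volume := by rw [hkey]
      _ ≤ eLpNorm φ p' volume * eLpNorm g p volume := hhold
      _ ≤ ENNReal.ofReal ((eLpNorm φ p' volume).toReal + 1) * eLpNorm g p volume :=
          mul_le_mul_left hC _
end

section
/- Let 1 ≤ p < ∞, φ a Schwartz function, α ∈ ℝ, (Δ_k)_{k=0}^N a sequence with Δ_k ≥ 1, and (c_k)_{k=0}^N complex numbers. Set F(x) = Σ_{k=0}^N c_k Δ_k φ((x-k)Δ_k). Then ‖F(x)(1+|x|)^α‖_{L^p} ≤ C (Σ_{k=0}^N |c_k|^p (k+1)^{pα} Δ_k^{p-1})^{1/p}, with C depending only on φ, p, α. -/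
open MeasureTheory Real Filter FourierTransform Topology
open scoped ENNReal NNReal

lemma aux_summable : Summable (fun n : ℕ => ((1 + (n:ℝ))^2)⁻¹) := by
  have : Summable (fun n : ℕ => 1 / ((n:ℝ))^2) := summable_one_div_nat_pow.mpr one_lt_two
  have h := (summable_nat_add_iff 1).mpr this
  refine h.congr fun n => ?_
  push_cast
  rw [one_div]
  ring_nf

lemma aux_card (x : ℝ) (s : Finset ℕ) (j : ℕ) :
    (s.filter (fun k : ℕ => ⌊|x - (k:ℝ)|⌋₊ = j)).card ≤ 2 := by
  classical
  have hsub : s.filter (fun k : ℕ => ⌊|x - (k:ℝ)|⌋₊ = j) ⊆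
      {(⌊x⌋ - j).toNat, (⌈x⌉ + j).toNat} := by
    intro k hk
    simp only [Finset.mem_filter] at hk
    have h1 : (j:ℝ) ≤ |x - k| := by
      rw [← hk.2]; exact Nat.floor_le (abs_nonneg _)
    have h2 : |x - (k:ℝ)| < j + 1 := by
      rw [← hk.2]; push_cast; exact Nat.lt_floor_add_one _
    simp only [Finset.mem_insert, Finset.mem_singleton]
    rcases le_or_gt (k:ℝ) x with hkx | hkx
    · left
      have habs : |x - (k:ℝ)| = x - k := abs_of_nonneg (by linarith)
      rw [habs] at h1 h2
      have hfl : ⌊x - (j:ℝ)⌋ = (k:ℤ) := by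
        rw [Int.floor_eq_iff]
        constructor <;> push_cast <;> linarith
      have : (⌊x⌋ - (j:ℤ)) = (k:ℤ) := by
        rw [← Int.floor_sub_natCast x j]; exact_mod_cast hfl
      omega
    · right
      have habs : |x - (k:ℝ)| = k - x := by
        rw [abs_of_nonpos (by linarith)]; ring
      rw [habs] at h1 h2
      have hcl : ⌈x + (j:ℝ)⌉ = (k:ℤ) := by
        rw [Int.ceil_eq_iff]
        constructor <;> push_cast <;> linarith
      have : (⌈x⌉ + (j:ℤ)) = (k:ℤ) := by
        rw [← Int.ceil_add_intCast x j]; exact_mod_cast hcl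
      omega
  calc (s.filter (fun k : ℕ => ⌊|x - (k:ℝ)|⌋₊ = j)).card
      ≤ ({(⌊x⌋ - j).toNat, (⌈x⌉ + j).toNat} : Finset ℕ).card := Finset.card_le_card hsub
    _ ≤ 2 := (Finset.card_insert_le _ _).trans (by simp)

lemma aux_overlap (x : ℝ) (s : Finset ℕ) :
    ∑ k ∈ s, ((1 + |x - (k:ℝ)|)^2)⁻¹ ≤ 2 * ∑' n : ℕ, ((1 + (n:ℝ))^2)⁻¹ := by
  classical
  set u : ℕ → ℝ := fun n => ((1 + (n:ℝ))^2)⁻¹ with hu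
  have hun : ∀ n, 0 ≤ u n := fun n => by positivity
  set g : ℕ → ℕ := fun k => ⌊|x - (k:ℝ)|⌋₊ with hg
  have step1 : ∑ k ∈ s, ((1 + |x - (k:ℝ)|)^2)⁻¹ ≤ ∑ k ∈ s, u (g k) := by
    refine Finset.sum_le_sum fun k _ => ?_
    refine inv_anti₀ (by positivity) ?_
    refine pow_le_pow_left₀ (by positivity) ?_ 2
    have := Nat.floor_le (abs_nonneg (x - (k:ℝ)))
    linarith
  have step2 : ∑ k ∈ s, u (g k) = ∑ j ∈ s.image g, ∑ k ∈ s.filter (fun k => g k = j), u (g k) :=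
    (Finset.sum_fiberwise_of_maps_to (fun k hk => Finset.mem_image_of_mem g hk) _).symm
  have step3 : ∀ j ∈ s.image g, ∑ k ∈ s.filter (fun k => g k = j), u (g k) ≤ 2 * u j := by
    intro j _
    have : ∑ k ∈ s.filter (fun k => g k = j), u (g k)
        = ∑ k ∈ s.filter (fun k => g k = j), u j := by
      refine Finset.sum_congr rfl fun k hk => ?_
      rw [(Finset.mem_filter.mp hk).2]
    rw [this, Finset.sum_const, nsmul_eq_mul]
    have hcard := aux_card x s j
    have : ((s.filter (fun k => g k = j)).card : ℝ) ≤ 2 := by exact_mod_cast hcard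
    nlinarith [hun j]
  calc ∑ k ∈ s, ((1 + |x - (k:ℝ)|)^2)⁻¹ ≤ ∑ k ∈ s, u (g k) := step1
    _ = ∑ j ∈ s.image g, ∑ k ∈ s.filter (fun k => g k = j), u (g k) := step2
    _ ≤ ∑ j ∈ s.image g, 2 * u j := Finset.sum_le_sum step3
    _ = 2 * ∑ j ∈ s.image g, u j := by rw [Finset.mul_sum]
    _ ≤ 2 * ∑' n : ℕ, u n := by
        have := Summable.sum_le_tsum (s.image g) (fun n _ => hun n) aux_summable
        nlinarith

lemma schwartz_decay_pow (φ : SchwartzMap ℝ ℝ) (m : ℕ) :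
    ∃ D : ℝ, 0 < D ∧ ∀ y : ℝ, (1 + |y|)^m * |φ y| ≤ D := by
  obtain ⟨C0, hC0, h0⟩ := φ.decay 0 0
  obtain ⟨Cm, hCm, hm⟩ := φ.decay m 0
  refine ⟨2^m * (C0 + Cm), by positivity, fun y => ?_⟩
  have h0y : |φ y| ≤ C0 := by simpa [norm_iteratedFDeriv_zero, Real.norm_eq_abs] using h0 y
  have hmy : |y|^m * |φ y| ≤ Cm := by
    simpa [norm_iteratedFDeriv_zero, Real.norm_eq_abs] using hm y
  have hb : (1 + |y|)^m ≤ 2^m * (1 + |y|^m) := by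
    calc (1 + |y|)^m ≤ (2 * max 1 |y|)^m := by
          refine pow_le_pow_left₀ (by positivity) ?_ m
          have := le_max_left (1:ℝ) |y|; have := le_max_right (1:ℝ) |y|; linarith
      _ = 2^m * (max 1 |y|)^m := mul_pow 2 _ m
      _ ≤ 2^m * (1 + |y|^m) := by
          refine mul_le_mul_of_nonneg_left ?_ (by positivity)
          rcases le_total (1:ℝ) |y| with h | h
          · rw [max_eq_right h]; nlinarith [pow_nonneg (abs_nonneg y) m]
          · rw [max_eq_left h, one_pow]
            nlinarith [pow_nonneg (abs_nonneg y) m]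
  calc (1 + |y|)^m * |φ y| ≤ (2^m * (1 + |y|^m)) * |φ y| :=
        mul_le_mul_of_nonneg_right hb (abs_nonneg _)
    _ = 2^m * (|φ y| + |y|^m * |φ y|) := by ring
    _ ≤ 2^m * (C0 + Cm) := by
        refine mul_le_mul_of_nonneg_left (by linarith) (by positivity)

lemma aux_pow_bound (y : ℝ) (m : ℕ) : (1 + |y|)^m ≤ 2^m * (1 + |y|^m) := by
  calc (1 + |y|)^m ≤ (2 * max 1 |y|)^m := by
        refine pow_le_pow_left₀ (by positivity) ?_ m
        have := le_max_left (1:ℝ) |y|; have := le_max_right (1:ℝ) |y|; linarith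
    _ = 2^m * (max 1 |y|)^m := mul_pow 2 _ m
    _ ≤ 2^m * (1 + |y|^m) := by
        refine mul_le_mul_of_nonneg_left ?_ (by positivity)
        rcases le_total (1:ℝ) |y| with h | h
        · rw [max_eq_right h]; nlinarith [pow_nonneg (abs_nonneg y) m]
        · rw [max_eq_left h, one_pow]
          nlinarith [pow_nonneg (abs_nonneg y) m]

/-- weighted L^p bound for F(x)=Σ c_k Δ_k φ((x-k)Δ_k). -/
theorem stmt6 (p : ℝ) (hp : 1 ≤ p) (φ : SchwartzMap ℝ ℝ) (α : ℝ) :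
    ∃ C : ℝ, 0 < C ∧ ∀ (N : ℕ) (Δ : ℕ → ℝ), (∀ k, 1 ≤ Δ k) → ∀ c : ℕ → ℂ,
      eLpNorm
        (fun x : ℝ => (∑ k ∈ Finset.range (N + 1),
            c k * (Δ k : ℂ) * ((φ ((x - k) * Δ k) : ℝ) : ℂ)) * (((1 + |x|) ^ α : ℝ) : ℂ))
        (ENNReal.ofReal p) volume ≤
      ENNReal.ofReal (C * (∑ k ∈ Finset.range (N + 1),
        ‖c k‖ ^ p * ((k : ℝ) + 1) ^ (p * α) * Δ k ^ (p - 1)) ^ (1 / p)) := by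
  have hp0 : 0 < p := lt_of_lt_of_le one_pos hp
  set β : ℝ := p * α with hβdef
  set m : ℕ := ⌈|β|⌉₊ with hmdef
  set h : ℝ → ℝ := fun u => (1 + |u|)^m * |φ u| with hhdef
  have h_nn : ∀ u, 0 ≤ h u := fun u => by positivity
  have h_cont : Continuous h :=
    ((continuous_const.add continuous_abs).pow m).mul φ.continuous.abs
  have h_int : Integrable h volume := by
    refine Integrable.mono'
      (((φ.integrable (μ := volume)).norm.add (φ.integrable_pow_mul volume m)).const_mul (2^m))
      h_cont.aestronglyMeasurable (Eventually.of_forall fun u => ?_)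
    rw [Real.norm_eq_abs, abs_of_nonneg (h_nn u)]
    have := aux_pow_bound u m
    have h1 : h u ≤ 2^m * (1 + |u|^m) * |φ u| :=
      mul_le_mul_of_nonneg_right this (abs_nonneg _)
    refine h1.trans (le_of_eq ?_)
    simp only [Real.norm_eq_abs, abs_abs, Pi.add_apply]
    ring
  obtain ⟨D, hD, hDle⟩ := schwartz_decay_pow φ 2
  have htsum_nn : 0 ≤ ∑' n : ℕ, ((1 + (n:ℝ))^2)⁻¹ := tsum_nonneg fun n => by positivity
  set A : ℝ := D * (2 * ∑' n : ℕ, ((1 + (n:ℝ))^2)⁻¹) + 1 with hAdef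
  have hA0 : 0 < A := by
    have h0 : 0 ≤ D * (2 * ∑' n : ℕ, ((1 + (n:ℝ))^2)⁻¹) := mul_nonneg hD.le (by linarith)
    rw [hAdef]
    linarith
  set B : ℝ := (∫ u, h u) + 1 with hBdef
  have hIh : 0 ≤ ∫ u, h u := integral_nonneg h_nn
  have hB0 : 0 < B := by linarith
  have hApow : 0 < A^(p-1) := Real.rpow_pos_of_pos hA0 _
  refine ⟨(A^(p-1) * B)^(1/p), Real.rpow_pos_of_pos (mul_pos hApow hB0) _, ?_⟩
  intro N Δ hΔ c
  have hΔpos : ∀ k, 0 < Δ k := fun k => lt_of_lt_of_le one_pos (hΔ k)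
  set w : ℝ → ℝ := fun x => (1+|x|)^β with hwdef
  have hw_pos : ∀ x, 0 < w x := fun x => Real.rpow_pos_of_pos (by positivity) _
  have hw_cont : Continuous w :=
    (continuous_const.add continuous_abs).rpow_const (fun x => Or.inl (by positivity : (0:ℝ) < 1 + |x|).ne')
  set gk : ℕ → ℝ → ℝ := fun k x => |φ ((x - (k:ℝ)) * Δ k)| with hgkdef
  have hgk_nn : ∀ k x, 0 ≤ gk k x := fun k x => abs_nonneg _
  have hgk_cont : ∀ k, Continuous (gk k) := fun k =>
    (φ.continuous.comp ((continuous_id.sub continuous_const).mul continuous_const)).abs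
  -- key single-bump bound
  have key : ∀ k : ℕ, (∫⁻ x, ENNReal.ofReal (w x * gk k x)) ≤
      ENNReal.ofReal (((k:ℝ)+1)^β * (Δ k)⁻¹ * B) := by
    intro k
    have hk1 : (0:ℝ) < (k:ℝ)+1 := by positivity
    -- pointwise bound
    have hP : ∀ x : ℝ, w x * gk k x ≤ ((k:ℝ)+1)^β * h ((x - (k:ℝ)) * Δ k) := by
      intro x
      have habs1 : |x| ≤ |x - (k:ℝ)| + k := by
        have h1 : |x| = |(x - (k:ℝ)) + k| := by ring_nf
        have h2 : |(x - (k:ℝ)) + k| ≤ |x - (k:ℝ)| + |(k:ℝ)| := abs_add_le _ _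
        have h3 : |(k:ℝ)| = k := abs_of_nonneg (by positivity)
        linarith [h1 ▸ h2, h3 ▸ h2]
      have habs2 : (k:ℝ) ≤ |x - (k:ℝ)| + |x| := by
        have h1 : |(k:ℝ)| = |x - (x - (k:ℝ))| := by ring_nf
        have h2 : |x - (x - (k:ℝ))| ≤ |x| + |x - (k:ℝ)| := abs_sub _ _
        have h3 : |(k:ℝ)| = k := abs_of_nonneg (by positivity)
        linarith [h1 ▸ h2]
      set t : ℝ := (1+|x|)/((k:ℝ)+1) with htdef
      have ht0 : 0 < t := by positivity
      have h1 : t ≤ 1 + |x - (k:ℝ)| := by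
        rw [htdef, div_le_iff₀ hk1]
        nlinarith [abs_nonneg (x - (k:ℝ)), abs_nonneg x]
      have h2 : t⁻¹ ≤ 1 + |x - (k:ℝ)| := by
        rw [htdef, inv_div, div_le_iff₀ (by positivity : (0:ℝ) < 1 + |x|)]
        nlinarith [abs_nonneg (x - (k:ℝ)), abs_nonneg x]
      have h3 : t^β ≤ (1 + |x - (k:ℝ)|)^|β| := by
        rcases le_or_gt 0 β with hb | hb
        · rw [abs_of_nonneg hb]; exact Real.rpow_le_rpow ht0.le h1 hb
        · rw [abs_of_neg hb]
          have e : t^β = (t⁻¹)^(-β) := by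
            rw [Real.inv_rpow ht0.le, Real.rpow_neg ht0.le, inv_inv]
          rw [e]
          exact Real.rpow_le_rpow (by positivity) h2 (by linarith)
      have h4 : (1 + |x - (k:ℝ)|)^|β| ≤ (1 + |x - (k:ℝ)|)^(m:ℝ) :=
        Real.rpow_le_rpow_of_exponent_le (by linarith [abs_nonneg (x - (k:ℝ))]) (Nat.le_ceil _)
      have h5 : (1 + |x - (k:ℝ)|)^(m:ℝ) = (1 + |x - (k:ℝ)|)^m := Real.rpow_natCast _ m
      have h6 : (1 + |x - (k:ℝ)|)^m ≤ (1 + |(x - (k:ℝ)) * Δ k|)^m := by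
        refine pow_le_pow_left₀ (by positivity) ?_ m
        rw [abs_mul, abs_of_pos (hΔpos k)]
        nlinarith [abs_nonneg (x - (k:ℝ)), hΔ k]
      have hwx : w x ≤ ((k:ℝ)+1)^β * (1 + |(x - (k:ℝ)) * Δ k|)^m := by
        have e : (1+|x|) = ((k:ℝ)+1) * t := by
          rw [htdef]; field_simp
        rw [hwdef]
        simp only []
        rw [e, Real.mul_rpow hk1.le ht0.le]
        refine mul_le_mul_of_nonneg_left ?_ (Real.rpow_nonneg hk1.le β)
        calc t^β ≤ (1 + |x - (k:ℝ)|)^|β| := h3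
          _ ≤ (1 + |x - (k:ℝ)|)^(m:ℝ) := h4
          _ = (1 + |x - (k:ℝ)|)^m := h5
          _ ≤ (1 + |(x - (k:ℝ)) * Δ k|)^m := h6
      calc w x * gk k x ≤ (((k:ℝ)+1)^β * (1 + |(x - (k:ℝ)) * Δ k|)^m) * gk k x :=
            mul_le_mul_of_nonneg_right hwx (hgk_nn k x)
        _ = ((k:ℝ)+1)^β * h ((x - (k:ℝ)) * Δ k) := by
            simp only [hhdef, hgkdef]; ring
    -- integrability of the dominating function
    have hint1 : Integrable (fun y : ℝ => h (y * Δ k)) volume :=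
      h_int.comp_mul_right' (hΔpos k).ne'
    have hint : Integrable (fun x : ℝ => ((k:ℝ)+1)^β * h ((x - (k:ℝ)) * Δ k)) volume := by
      exact (hint1.comp_sub_right (k:ℝ)).const_mul _
    have hIcomp : (∫ x : ℝ, h ((x - (k:ℝ)) * Δ k)) = (Δ k)⁻¹ * ∫ u, h u := by
      rw [integral_sub_right_eq_self (fun y => h (y * Δ k)) (k:ℝ)]
      rw [MeasureTheory.Measure.integral_comp_mul_right h (Δ k)]
      rw [abs_of_pos (inv_pos.mpr (hΔpos k)), smul_eq_mul]
    calc (∫⁻ x, ENNReal.ofReal (w x * gk k x))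
        ≤ ∫⁻ x, ENNReal.ofReal (((k:ℝ)+1)^β * h ((x - (k:ℝ)) * Δ k)) :=
          lintegral_mono fun x => ENNReal.ofReal_le_ofReal (hP x)
      _ = ENNReal.ofReal (∫ x, ((k:ℝ)+1)^β * h ((x - (k:ℝ)) * Δ k)) :=
          (ofReal_integral_eq_lintegral_ofReal hint
            (Eventually.of_forall fun x => by positivity)).symm
      _ ≤ ENNReal.ofReal (((k:ℝ)+1)^β * (Δ k)⁻¹ * B) := by
          refine ENNReal.ofReal_le_ofReal ?_
          rw [integral_const_mul, hIcomp]
          have hk1' : 0 ≤ ((k:ℝ)+1)^β := Real.rpow_nonneg hk1.le β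
          have hΔinv : 0 ≤ (Δ k)⁻¹ := (inv_pos.mpr (hΔpos k)).le
          have : (∫ u, h u) ≤ B := by rw [hBdef]; linarith
          calc ((k:ℝ)+1)^β * ((Δ k)⁻¹ * ∫ u, h u)
              ≤ ((k:ℝ)+1)^β * ((Δ k)⁻¹ * B) := by
                refine mul_le_mul_of_nonneg_left (mul_le_mul_of_nonneg_left this hΔinv) hk1'
            _ = ((k:ℝ)+1)^β * (Δ k)⁻¹ * B := by ring
  -- overlap bound
  have overlap : ∀ x : ℝ, ∑ k ∈ Finset.range (N+1), gk k x ≤ A := by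
    intro x
    have hterm : ∀ k ∈ Finset.range (N+1), gk k x ≤ D * ((1 + |x - (k:ℝ)|)^2)⁻¹ := by
      intro k _
      have h1 := hDle ((x - (k:ℝ)) * Δ k)
      have h2 : (1 + |x - (k:ℝ)|)^2 ≤ (1 + |(x - (k:ℝ)) * Δ k|)^2 := by
        refine pow_le_pow_left₀ (by positivity) ?_ 2
        rw [abs_mul, abs_of_pos (hΔpos k)]
        nlinarith [abs_nonneg (x - (k:ℝ)), hΔ k]
      have h3 : gk k x * (1 + |x - (k:ℝ)|)^2 ≤ D := by
        calc gk k x * (1 + |x - (k:ℝ)|)^2 ≤ gk k x * (1 + |(x - (k:ℝ)) * Δ k|)^2 :=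
              mul_le_mul_of_nonneg_left h2 (hgk_nn k x)
          _ = (1 + |(x - (k:ℝ)) * Δ k|)^2 * |φ ((x - (k:ℝ)) * Δ k)| := by
              simp only [hgkdef]; ring
          _ ≤ D := h1
      have hpos2 : (0:ℝ) < (1 + |x - (k:ℝ)|)^2 := by positivity
      calc gk k x = (gk k x * (1 + |x - (k:ℝ)|)^2) * ((1 + |x - (k:ℝ)|)^2)⁻¹ := by
            field_simp
        _ ≤ D * ((1 + |x - (k:ℝ)|)^2)⁻¹ :=
            mul_le_mul_of_nonneg_right h3 (by positivity)
    calc ∑ k ∈ Finset.range (N+1), gk k x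
        ≤ ∑ k ∈ Finset.range (N+1), D * ((1 + |x - (k:ℝ)|)^2)⁻¹ := Finset.sum_le_sum hterm
      _ = D * ∑ k ∈ Finset.range (N+1), ((1 + |x - (k:ℝ)|)^2)⁻¹ := by rw [Finset.mul_sum]
      _ ≤ D * (2 * ∑' n : ℕ, ((1 + (n:ℝ))^2)⁻¹) :=
          mul_le_mul_of_nonneg_left (aux_overlap x _) hD.le
      _ ≤ A := by rw [hAdef]; linarith
  have hwp : ∀ x : ℝ, ((1+|x|) ^ α) ^ p = w x := by
    intro x
    rw [hwdef]
    simp only []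
    rw [← Real.rpow_mul (by positivity), show α * p = β from by rw [hβdef]; ring]
  -- pointwise p-th power bound
  have pw : ∀ x : ℝ, ‖(∑ k ∈ Finset.range (N + 1),
      c k * (Δ k : ℂ) * ((φ ((x - k) * Δ k) : ℝ) : ℂ)) * (((1 + |x|) ^ α : ℝ) : ℂ)‖ ^ p
      ≤ A^(p-1) * ∑ k ∈ Finset.range (N+1), ((‖c k‖ * Δ k)^p * (gk k x * w x)) := by
    intro x
    set T : ℝ := ∑ k ∈ Finset.range (N+1), gk k x * (‖c k‖ * Δ k)^p with hTdef
    have hT0 : 0 ≤ T :=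
      Finset.sum_nonneg fun k _ => mul_nonneg (hgk_nn k x)
        (Real.rpow_nonneg (mul_nonneg (norm_nonneg _) (hΔpos k).le) _)
    have normF : ‖∑ k ∈ Finset.range (N + 1),
        c k * (Δ k : ℂ) * ((φ ((x - k) * Δ k) : ℝ) : ℂ)‖
        ≤ ∑ k ∈ Finset.range (N+1), gk k x * (‖c k‖ * Δ k) := by
      refine (norm_sum_le _ _).trans (le_of_eq (Finset.sum_congr rfl fun k _ => ?_))
      rw [norm_mul, norm_mul, Complex.norm_real, Complex.norm_real, Real.norm_eq_abs,
        Real.norm_eq_abs, abs_of_pos (hΔpos k)]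
      simp only [hgkdef]
      ring
    have holder : ∑ k ∈ Finset.range (N+1), gk k x * (‖c k‖ * Δ k) ≤ A^(1-p⁻¹) * T^p⁻¹ := by
      have H := Real.inner_le_weight_mul_Lp_of_nonneg (Finset.range (N+1)) hp
        (fun k => gk k x) (fun k => ‖c k‖ * Δ k) (fun k => hgk_nn k x)
        (fun k => mul_nonneg (norm_nonneg _) (hΔpos k).le)
      refine H.trans ?_
      refine mul_le_mul_of_nonneg_right ?_ (Real.rpow_nonneg hT0 _)
      refine Real.rpow_le_rpow (Finset.sum_nonneg fun k _ => hgk_nn k x) (overlap x) ?_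
      rw [sub_nonneg]
      exact inv_le_one_of_one_le₀ hp
    have e0 : ‖(∑ k ∈ Finset.range (N + 1),
        c k * (Δ k : ℂ) * ((φ ((x - k) * Δ k) : ℝ) : ℂ)) * (((1 + |x|) ^ α : ℝ) : ℂ)‖
        = ‖∑ k ∈ Finset.range (N + 1),
        c k * (Δ k : ℂ) * ((φ ((x - k) * Δ k) : ℝ) : ℂ)‖ * (1+|x|)^α := by
      rw [norm_mul, Complex.norm_real, Real.norm_eq_abs,
        abs_of_pos (Real.rpow_pos_of_pos (by positivity) α)]
    rw [e0]
    calc (‖∑ k ∈ Finset.range (N + 1),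
          c k * (Δ k : ℂ) * ((φ ((x - k) * Δ k) : ℝ) : ℂ)‖ * (1+|x|)^α) ^ p
        ≤ ((A^(1-p⁻¹) * T^p⁻¹) * (1+|x|)^α)^p := by
          refine Real.rpow_le_rpow (by positivity) ?_ hp0.le
          exact mul_le_mul_of_nonneg_right (normF.trans holder)
            (Real.rpow_nonneg (by positivity) α)
      _ = (A^(1-p⁻¹))^p * (T^p⁻¹)^p * ((1+|x|)^α)^p := by
          rw [Real.mul_rpow (mul_nonneg (Real.rpow_nonneg hA0.le _) (Real.rpow_nonneg hT0 _))
            (Real.rpow_nonneg (by positivity) α),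
            Real.mul_rpow (Real.rpow_nonneg hA0.le _) (Real.rpow_nonneg hT0 _)]
      _ = A^(p-1) * (T * w x) := by
          rw [← Real.rpow_mul hA0.le, ← Real.rpow_mul hT0, hwp x,
            show (1-p⁻¹)*p = p - 1 from by rw [sub_mul, one_mul, inv_mul_cancel₀ hp0.ne'],
            inv_mul_cancel₀ hp0.ne', Real.rpow_one]
          ring
      _ = A^(p-1) * ∑ k ∈ Finset.range (N+1), ((‖c k‖ * Δ k)^p * (gk k x * w x)) := by
          rw [hTdef, Finset.sum_mul]
          congr 1
          refine Finset.sum_congr rfl fun k _ => by ring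
  -- measurability
  have meas_k : ∀ k : ℕ, Measurable fun x => (‖c k‖ * Δ k)^p * (gk k x * w x) := fun k =>
    (((hgk_cont k).mul hw_cont).measurable).const_mul _
  have meas_sum : Measurable fun x =>
      ∑ k ∈ Finset.range (N+1), (‖c k‖ * Δ k)^p * (gk k x * w x) :=
    Finset.measurable_sum _ (fun k _ => meas_k k)
  have hofne : (ENNReal.ofReal p) ≠ 0 := by
    simp only [ne_eq, ENNReal.ofReal_eq_zero, not_le]; exact hp0
  rw [eLpNorm_eq_lintegral_rpow_enorm_toReal hofne ENNReal.ofReal_ne_top,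
    ENNReal.toReal_ofReal hp0.le]
  set S : ℝ := ∑ k ∈ Finset.range (N + 1), ‖c k‖ ^ p * ((k : ℝ) + 1) ^ β * Δ k ^ (p - 1)
    with hSdef
  have hterm_nn : ∀ k : ℕ, (0:ℝ) ≤ ‖c k‖ ^ p * ((k : ℝ) + 1) ^ β * Δ k ^ (p - 1) := fun k =>
    mul_nonneg (mul_nonneg (Real.rpow_nonneg (norm_nonneg _) _)
      (Real.rpow_nonneg (by positivity) _)) (Real.rpow_nonneg (hΔpos k).le _)
  have hS0 : 0 ≤ S := Finset.sum_nonneg fun k _ => hterm_nn k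
  have main : (∫⁻ x, (‖(∑ k ∈ Finset.range (N + 1),
      c k * (Δ k : ℂ) * ((φ ((x - k) * Δ k) : ℝ) : ℂ)) * (((1 + |x|) ^ α : ℝ) : ℂ)‖₊ : ℝ≥0∞) ^ p)
      ≤ ENNReal.ofReal (A^(p-1) * (B * S)) := by
    calc (∫⁻ x, (‖(∑ k ∈ Finset.range (N + 1),
        c k * (Δ k : ℂ) * ((φ ((x - k) * Δ k) : ℝ) : ℂ)) * (((1 + |x|) ^ α : ℝ) : ℂ)‖₊ : ℝ≥0∞) ^ p)
        = ∫⁻ x, ENNReal.ofReal (‖(∑ k ∈ Finset.range (N + 1),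
          c k * (Δ k : ℂ) * ((φ ((x - k) * Δ k) : ℝ) : ℂ)) * (((1 + |x|) ^ α : ℝ) : ℂ)‖ ^ p) := by
          refine lintegral_congr fun x => ?_
          rw [← enorm_eq_nnnorm, ← ofReal_norm, ENNReal.ofReal_rpow_of_nonneg (norm_nonneg _) hp0.le]
      _ ≤ ∫⁻ x, ENNReal.ofReal (A^(p-1) *
          ∑ k ∈ Finset.range (N+1), (‖c k‖ * Δ k)^p * (gk k x * w x)) :=
          lintegral_mono fun x => ENNReal.ofReal_le_ofReal (pw x)
      _ = ENNReal.ofReal (A^(p-1)) * ∫⁻ x, ENNReal.ofReal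
          (∑ k ∈ Finset.range (N+1), (‖c k‖ * Δ k)^p * (gk k x * w x)) := by
          simp_rw [ENNReal.ofReal_mul (Real.rpow_nonneg hA0.le (p-1))]
          rw [lintegral_const_mul _ meas_sum.ennreal_ofReal]
      _ = ENNReal.ofReal (A^(p-1)) * ∑ k ∈ Finset.range (N+1),
          ∫⁻ x, ENNReal.ofReal ((‖c k‖ * Δ k)^p * (gk k x * w x)) := by
          congr 1
          rw [← lintegral_finset_sum _ (fun k _ => (meas_k k).ennreal_ofReal)]
          refine lintegral_congr fun x => ?_
          rw [ENNReal.ofReal_sum_of_nonneg (fun k _ => mul_nonneg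
            (Real.rpow_nonneg (mul_nonneg (norm_nonneg _) (hΔpos k).le) _)
            (mul_nonneg (hgk_nn k x) (hw_pos x).le))]
      _ ≤ ENNReal.ofReal (A^(p-1)) * ∑ k ∈ Finset.range (N+1),
          ENNReal.ofReal (B * (‖c k‖ ^ p * ((k:ℝ)+1)^β * Δ k^(p-1))) := by
          refine mul_le_mul_right (Finset.sum_le_sum fun k _ => ?_) _
          have hak : (0:ℝ) ≤ (‖c k‖ * Δ k)^p :=
            Real.rpow_nonneg (mul_nonneg (norm_nonneg _) (hΔpos k).le) _
          calc ∫⁻ x, ENNReal.ofReal ((‖c k‖ * Δ k)^p * (gk k x * w x))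
              = ENNReal.ofReal ((‖c k‖ * Δ k)^p) * ∫⁻ x, ENNReal.ofReal (w x * gk k x) := by
                simp_rw [mul_comm (gk k _) (w _), ENNReal.ofReal_mul hak]
                exact lintegral_const_mul _ ((hw_cont.mul (hgk_cont k)).measurable).ennreal_ofReal
            _ ≤ ENNReal.ofReal ((‖c k‖ * Δ k)^p) * ENNReal.ofReal (((k:ℝ)+1)^β * (Δ k)⁻¹ * B) :=
                mul_le_mul_right (key k) _
            _ = ENNReal.ofReal ((‖c k‖ * Δ k)^p * (((k:ℝ)+1)^β * (Δ k)⁻¹ * B)) :=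
                (ENNReal.ofReal_mul hak).symm
            _ = ENNReal.ofReal (B * (‖c k‖ ^ p * ((k:ℝ)+1)^β * Δ k^(p-1))) := by
                congr 1
                rw [Real.mul_rpow (norm_nonneg _) (hΔpos k).le,
                  show Δ k^(p-1) = Δ k^p * (Δ k)⁻¹ from by
                    rw [← Real.rpow_neg_one (Δ k), ← Real.rpow_add (hΔpos k)]; ring_nf]
                ring
      _ = ENNReal.ofReal (A^(p-1)) * ENNReal.ofReal (B * S) := by
          congr 1
          rw [← ENNReal.ofReal_sum_of_nonneg (fun k _ => mul_nonneg hB0.le (hterm_nn k))]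
          congr 1
          rw [hSdef, Finset.mul_sum]
      _ = ENNReal.ofReal (A^(p-1) * (B * S)) :=
          (ENNReal.ofReal_mul (Real.rpow_nonneg hA0.le _)).symm
  refine le_trans (ENNReal.rpow_le_rpow main (by positivity : (0:ℝ) ≤ 1/p)) (le_of_eq ?_)
  rw [ENNReal.ofReal_rpow_of_nonneg (mul_nonneg (Real.rpow_nonneg hA0.le _)
    (mul_nonneg hB0.le hS0)) (by positivity : (0:ℝ) ≤ 1/p)]
  congr 1
  rw [show A^(p-1) * (B*S) = (A^(p-1)*B) * S from by ring,
    Real.mul_rpow (mul_nonneg (Real.rpow_nonneg hA0.le _) hB0.le) hS0]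
end

section
/- Let φ be a Schwartz function, M ∈ ℕ, (Δ_k) an increasing sequence with Δ_k ≥ 1, and (c_k)_{k=0}^N a bounded sequence. Set F(x) = Σ_{k=0}^N c_k Δ_k φ((x-k)Δ_k). Then there is a constant K_M (depending on φ and M) such that for every positive integer n, |F(n) - φ(0) Δ_n c_n| ≤ K_M ‖c‖_∞ (n^{-1} + Δ_{⌊n/2⌋}^{-1})^{M} (with c_k interpreted as 0 for k > N). -/
open MeasureTheory Real Filter FourierTransform Topology
open scoped ENNReal NNReal

private lemma basel (m : ℕ) : ∑ j ∈ Finset.range m, ((1:ℝ)/((j:ℝ)+1)^2) ≤ 2 := by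
  have h : ∀ m : ℕ, ∑ j ∈ Finset.range m, ((1:ℝ)/((j:ℝ)+1)^2) ≤ 2 - 2/((m:ℝ)+1) := by
    intro m
    induction m with
    | zero => norm_num
    | succ m ih =>
      rw [Finset.sum_range_succ]
      have hm : (0:ℝ) < (m:ℝ)+1 := by positivity
      have hm2 : (0:ℝ) < (m:ℝ)+2 := by positivity
      have key : (1:ℝ)/(((m:ℕ):ℝ)+1)^2 ≤ 2/((m:ℝ)+1) - 2/((m:ℝ)+2) := by
        rw [div_sub_div _ _ hm.ne' hm2.ne', div_le_div_iff₀ (by positivity) (by positivity)]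
        nlinarith [sq_nonneg ((m:ℝ))]
      push_cast at key ⊢
      have he : 2/((m:ℝ)+1+1) = 2/((m:ℝ)+2) := by ring_nf
      rw [he]
      linarith
  have h2 : (0:ℝ) < 2/((m:ℝ)+1) := by positivity
  linarith [h m]

private lemma sum_inv_sq (N n : ℕ) :
    ∑ k ∈ (Finset.range (N+1)).erase n, (1:ℝ)/(((n:ℝ)-k)^2) ≤ 4 := by
  have hsub : (Finset.range (N+1)).erase n ⊆ Finset.range n ∪ Finset.Ico (n+1) (N+1) := by
    intro k hk
    simp only [Finset.mem_erase, Finset.mem_range] at hk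
    simp only [Finset.mem_union, Finset.mem_range, Finset.mem_Ico]
    omega
  have hnonneg : ∀ k ∈ Finset.range n ∪ Finset.Ico (n+1) (N+1),
      k ∉ (Finset.range (N+1)).erase n → (0:ℝ) ≤ 1/(((n:ℝ)-k)^2) := by
    intro k _ _; positivity
  have h1 : ∑ k ∈ Finset.range n, (1:ℝ)/(((n:ℝ)-k)^2) ≤ 2 := by
    rw [← Finset.sum_range_reflect]
    calc ∑ j ∈ Finset.range n, (1:ℝ)/(((n:ℝ)-((n-1-j : ℕ):ℝ))^2)
        = ∑ j ∈ Finset.range n, (1:ℝ)/(((j:ℝ)+1)^2) := by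
          apply Finset.sum_congr rfl
          intro j hj
          rw [Finset.mem_range] at hj
          congr 1
          have h : (n - 1 - j : ℕ) = n - (j+1) := by omega
          rw [h, Nat.cast_sub (by omega)]
          push_cast; ring
        _ ≤ 2 := basel n
  have h2 : ∑ k ∈ Finset.Ico (n+1) (N+1), (1:ℝ)/(((n:ℝ)-k)^2) ≤ 2 := by
    rw [Finset.sum_Ico_eq_sum_range]
    calc ∑ j ∈ Finset.range (N+1-(n+1)), (1:ℝ)/(((n:ℝ)-((n+1+j : ℕ):ℝ))^2)
        = ∑ j ∈ Finset.range (N+1-(n+1)), (1:ℝ)/(((j:ℝ)+1)^2) := by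
          apply Finset.sum_congr rfl
          intro j _
          congr 1
          push_cast; ring
        _ ≤ 2 := basel _
  have hdisj : Disjoint (Finset.range n) (Finset.Ico (n+1) (N+1)) := by
    rw [Finset.disjoint_left]
    intro k hk hk'
    simp only [Finset.mem_range] at hk
    simp only [Finset.mem_Ico] at hk'
    omega
  calc ∑ k ∈ (Finset.range (N+1)).erase n, (1:ℝ)/(((n:ℝ)-k)^2)
      ≤ ∑ k ∈ Finset.range n ∪ Finset.Ico (n+1) (N+1), (1:ℝ)/(((n:ℝ)-k)^2) :=
        Finset.sum_le_sum_of_subset_of_nonneg hsub hnonneg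
    _ = (∑ k ∈ Finset.range n, (1:ℝ)/(((n:ℝ)-k)^2))
        + ∑ k ∈ Finset.Ico (n+1) (N+1), (1:ℝ)/(((n:ℝ)-k)^2) := Finset.sum_union hdisj
    _ ≤ 4 := by linarith

/-- |F(n) - φ(0) Δ_n c_n| ≤ K_M ‖c‖_∞ (n⁻¹ + Δ_{⌊n/2⌋}⁻¹)^M. -/
theorem stmt7 (φ : SchwartzMap ℝ ℝ) (M : ℕ) :
    ∃ K : ℝ, ∀ Δ : ℕ → ℝ, Monotone Δ → (∀ k, 1 ≤ Δ k) →
      ∀ (N : ℕ) (c : ℕ → ℂ) (Cb : ℝ), (∀ k, ‖c k‖ ≤ Cb) → (∀ k, N < k → c k = 0) →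
      ∀ n : ℕ, 1 ≤ n →
      ‖(∑ k ∈ Finset.range (N + 1), c k * (Δ k : ℂ) * ((φ (((n : ℝ) - k) * Δ k) : ℝ) : ℂ))
          - ((φ 0 : ℝ) : ℂ) * (Δ n : ℂ) * c n‖ ≤
        K * Cb * (((n : ℝ))⁻¹ + (Δ (n / 2))⁻¹) ^ M := by
  obtain ⟨C, hC, hdecay⟩ := φ.decay (2*M+2) 0
  refine ⟨C * 2^M * 4, ?_⟩
  intro Δ hΔmono hΔ1 N c Cb hCb hc0 n hn
  have hCb0 : 0 ≤ Cb := le_trans (norm_nonneg _) (hCb 0)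
  have hΔpos : ∀ k, (0:ℝ) < Δ k := fun k => lt_of_lt_of_le one_pos (hΔ1 k)
  have hnpos : (0:ℝ) < n := by exact_mod_cast hn
  obtain ⟨P, hP⟩ : ∃ P : ℝ, P = ((n:ℝ))⁻¹ + (Δ (n/2))⁻¹ := ⟨_, rfl⟩
  rw [← hP]
  have hP0 : 0 ≤ P := by
    rw [hP]; exact add_nonneg (by positivity) (le_of_lt (inv_pos.2 (hΔpos _)))
  have hterm : ∀ k ∈ (Finset.range (N+1)).erase n,
      ‖c k * (Δ k : ℂ) * ((φ (((n : ℝ) - k) * Δ k) : ℝ) : ℂ)‖ ≤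
        (Cb * (C * 2^M * P^M)) * (1/(((n:ℝ)-k)^2)) := by
    intro k hk
    have hkn : k ≠ n := (Finset.mem_erase.1 hk).1
    set a : ℝ := |(n:ℝ) - k| with ha
    have ha1 : (1:ℝ) ≤ a := by
      have hne : (n:ℤ) ≠ (k:ℤ) := by exact_mod_cast (Ne.symm hkn)
      have h := Int.one_le_abs (sub_ne_zero.mpr hne)
      rw [ha]
      exact_mod_cast h
    have hb1 : (1:ℝ) ≤ Δ k := hΔ1 k
    have ha0 : (0:ℝ) < a := lt_of_lt_of_le one_pos ha1
    have hb0 : (0:ℝ) < Δ k := hΔpos k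
    have hy : |((n:ℝ)-k) * Δ k| = a * Δ k := by
      rw [abs_mul, abs_of_pos hb0]
    have hdec := hdecay (((n:ℝ)-k) * Δ k)
    rw [norm_iteratedFDeriv_zero] at hdec
    have hφle : ‖φ (((n:ℝ)-k) * Δ k)‖ ≤ C / (a * Δ k)^(2*M+2) := by
      rw [le_div_iff₀ (by positivity)]
      calc ‖φ (((n:ℝ)-k) * Δ k)‖ * (a * Δ k)^(2*M+2)
          = ‖((n:ℝ)-k) * Δ k‖^(2*M+2) * ‖φ (((n:ℝ)-k) * Δ k)‖ := by
            simp only [Real.norm_eq_abs, hy]; ring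
        _ ≤ C := hdec
    have hinv : (a * Δ k)⁻¹ ≤ 2 * P := by
      rcases le_or_gt (n/2 : ℕ) k with hhalf | hhalf
      · have hD : (Δ k)⁻¹ ≤ (Δ (n/2))⁻¹ := by
          apply inv_anti₀ (hΔpos _) (hΔmono hhalf)
        have h1 : a⁻¹ ≤ 1 := by
          rw [inv_le_one_iff₀]; right; exact ha1
        have hPle : (Δ (n/2))⁻¹ ≤ P := by
          rw [hP]; exact le_add_of_nonneg_left (by positivity)
        calc (a * Δ k)⁻¹ = a⁻¹ * (Δ k)⁻¹ := by rw [mul_inv]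
          _ ≤ 1 * (Δ (n/2))⁻¹ :=
            mul_le_mul h1 hD (le_of_lt (inv_pos.2 hb0)) one_pos.le
          _ = (Δ (n/2))⁻¹ := one_mul _
          _ ≤ 2 * P := by linarith
      · have hk1 : (k+1 : ℕ) ≤ n/2 := hhalf
        have hcastd : ((n/2 : ℕ):ℝ) ≤ (n:ℝ)/2 := by
          have := Nat.cast_div_le (α := ℝ) (m := n) (n := 2)
          simpa using this
        have hkn' : (k:ℝ) + 1 ≤ (n:ℝ)/2 := by
          calc (k:ℝ)+1 = ((k+1:ℕ):ℝ) := by push_cast; ring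
            _ ≤ ((n/2:ℕ):ℝ) := by exact_mod_cast hk1
            _ ≤ (n:ℝ)/2 := hcastd
        have hna : (n:ℝ)/2 ≤ a := by
          rw [ha, abs_of_pos (by linarith)]
          linarith
        have hainv : a⁻¹ ≤ 2 * (n:ℝ)⁻¹ := by
          have h := inv_anti₀ (by linarith : (0:ℝ) < (n:ℝ)/2) hna
          rw [inv_div] at h
          calc a⁻¹ ≤ 2/(n:ℝ) := h
            _ = 2 * (n:ℝ)⁻¹ := by rw [div_eq_mul_inv]
        have hDinv : (Δ k)⁻¹ ≤ 1 := by
          rw [inv_le_one_iff₀]; right; exact hb1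
        have hPle : (n:ℝ)⁻¹ ≤ P := by
          rw [hP]; exact le_add_of_nonneg_right (le_of_lt (inv_pos.2 (hΔpos _)))
        calc (a * Δ k)⁻¹ = a⁻¹ * (Δ k)⁻¹ := by rw [mul_inv]
          _ ≤ (2 * (n:ℝ)⁻¹) * 1 :=
            mul_le_mul hainv hDinv (le_of_lt (inv_pos.2 hb0)) (by positivity)
          _ = 2 * (n:ℝ)⁻¹ := mul_one _
          _ ≤ 2 * P := by linarith
    have hpow : ((a * Δ k)^M)⁻¹ ≤ (2*P)^M := by
      rw [← inv_pow]
      exact pow_le_pow_left₀ (by positivity) hinv M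
    have hkey : Δ k * (a^2 * (a * Δ k)^M) ≤ (a * Δ k)^(2*M+2) := by
      have hA : a^2 ≤ a^(M+2) := pow_le_pow_right₀ ha1 (by omega)
      have hB : Δ k ^ 1 ≤ Δ k ^(M+2) := pow_le_pow_right₀ hb1 (by omega)
      have h1 : Δ k * a^2 ≤ a^(M+2) * Δ k^(M+2) := by
        calc Δ k * a^2 = a^2 * Δ k^1 := by ring
          _ ≤ a^(M+2) * Δ k^(M+2) := mul_le_mul hA hB (by positivity) (by positivity)
      calc Δ k * (a^2 * (a * Δ k)^M) = (Δ k * a^2) * (a * Δ k)^M := by ring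
        _ ≤ (a^(M+2) * Δ k^(M+2)) * (a * Δ k)^M :=
          mul_le_mul_of_nonneg_right h1 (by positivity)
        _ = (a * Δ k)^(2*M+2) := by
          rw [← mul_pow, ← pow_add]
          congr 1
          omega
    have step1 : Δ k * (C/(a * Δ k)^(2*M+2)) ≤ C / (a^2 * (a * Δ k)^M) := by
      rw [mul_div_assoc', div_le_div_iff₀ (by positivity) (by positivity)]
      calc Δ k * C * (a^2 * (a * Δ k)^M) = C * (Δ k * (a^2 * (a * Δ k)^M)) := by ring
        _ ≤ C * (a * Δ k)^(2*M+2) := mul_le_mul_of_nonneg_left hkey hC.le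
    have step2 : C / (a^2 * (a * Δ k)^M) ≤ C * 2^M * P^M / a^2 := by
      have he : C / (a^2 * (a * Δ k)^M) = (C/a^2) * ((a * Δ k)^M)⁻¹ := by
        field_simp
      rw [he]
      calc (C/a^2) * ((a * Δ k)^M)⁻¹ ≤ (C/a^2) * (2*P)^M :=
            mul_le_mul_of_nonneg_left hpow (by positivity)
        _ = C * 2^M * P^M / a^2 := by rw [mul_pow]; ring
    have hmain : Δ k * ‖φ (((n:ℝ)-k) * Δ k)‖ ≤ C * 2^M * P^M / a^2 := by
      calc Δ k * ‖φ (((n:ℝ)-k) * Δ k)‖ ≤ Δ k * (C/(a * Δ k)^(2*M+2)) :=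
            mul_le_mul_of_nonneg_left hφle hb0.le
        _ ≤ C / (a^2 * (a * Δ k)^M) := step1
        _ ≤ C * 2^M * P^M / a^2 := step2
    calc ‖c k * (Δ k : ℂ) * ((φ (((n : ℝ) - k) * Δ k) : ℝ) : ℂ)‖
        = ‖c k‖ * (Δ k * ‖φ (((n:ℝ)-k) * Δ k)‖) := by
          rw [norm_mul, norm_mul, Complex.norm_real, Complex.norm_real,
            Real.norm_eq_abs (Δ k), abs_of_pos hb0]
          ring
      _ ≤ Cb * (C * 2^M * P^M / a^2) :=
          mul_le_mul (hCb k) hmain (by positivity) hCb0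
      _ = (Cb * (C * 2^M * P^M)) * (1/(((n:ℝ)-k)^2)) := by
          rw [ha, sq_abs]; ring
  have hsplit : (∑ k ∈ Finset.range (N + 1),
        c k * (Δ k : ℂ) * ((φ (((n : ℝ) - k) * Δ k) : ℝ) : ℂ))
      - ((φ 0 : ℝ) : ℂ) * (Δ n : ℂ) * c n
      = ∑ k ∈ (Finset.range (N+1)).erase n,
        c k * (Δ k : ℂ) * ((φ (((n : ℝ) - k) * Δ k) : ℝ) : ℂ) := by
    rcases le_or_gt n N with hnN | hnN
    · have hmem : n ∈ Finset.range (N+1) := Finset.mem_range.2 (by omega)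
      rw [← Finset.add_sum_erase _ _ hmem]
      simp only [sub_self, zero_mul]
      ring
    · have he : (Finset.range (N+1)).erase n = Finset.range (N+1) :=
        Finset.erase_eq_of_notMem (by simp only [Finset.mem_range]; omega)
      rw [he, hc0 n hnN]
      ring
  rw [hsplit]
  calc ‖∑ k ∈ (Finset.range (N+1)).erase n,
        c k * (Δ k : ℂ) * ((φ (((n : ℝ) - k) * Δ k) : ℝ) : ℂ)‖
      ≤ ∑ k ∈ (Finset.range (N+1)).erase n,
        ‖c k * (Δ k : ℂ) * ((φ (((n : ℝ) - k) * Δ k) : ℝ) : ℂ)‖ := norm_sum_le _ _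
    _ ≤ ∑ k ∈ (Finset.range (N+1)).erase n,
        (Cb * (C * 2^M * P^M)) * (1/(((n:ℝ)-k)^2)) := Finset.sum_le_sum hterm
    _ = (Cb * (C * 2^M * P^M)) * ∑ k ∈ (Finset.range (N+1)).erase n,
        (1:ℝ)/(((n:ℝ)-k)^2) := by rw [← Finset.mul_sum]
    _ ≤ (Cb * (C * 2^M * P^M)) * 4 :=
        mul_le_mul_of_nonneg_left (sum_inv_sq N n) (by positivity)
    _ = C * 2^M * 4 * Cb * P^M := by ring
end

section
/- Let φ̂ : ℝ → ℝ be even, non-increasing on [0,∞), supported in (-1,1), equal to 1 on [-1/2,1/2], and Lipschitz with constant L. Let q ≥ 1, β ∈ ℝ with βq + 1 ≥ 0, and let 1 ≤ Δ' ≤ Δ with Δ ≤ CΔ'. Then for every ξ ∈ [0,1], Σ_{j∈ℤ} |ξ+j|^{βq} |φ̂((ξ+j)/Δ) - φ̂((ξ+j)/Δ')| ≤ C' Δ^{βq}(Δ - Δ'), where C' depends only on β, q, C, L. -/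
open MeasureTheory Real Filter FourierTransform Topology
open scoped ENNReal NNReal

/-- kernel estimate Σ_j |ξ+j|^{βq} |φ̂((ξ+j)/Δ) - φ̂((ξ+j)/Δ')| ≤ C' Δ^{βq}(Δ-Δ'). -/
theorem stmt8 (β q C : ℝ) (L : ℝ≥0) (hq : 1 ≤ q) (hβq : 0 ≤ β * q + 1) (hC : 1 ≤ C) :
    ∃ C' : ℝ, ∀ φhat : ℝ → ℝ, (∀ x, φhat (-x) = φhat x) →
      AntitoneOn φhat (Set.Ici 0) →
      Function.support φhat ⊆ Set.Ioo (-1) 1 →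
      (∀ x ∈ Set.Icc (-(1/2) : ℝ) (1/2), φhat x = 1) →
      LipschitzWith L φhat →
      ∀ Δ Δ' : ℝ, 1 ≤ Δ' → Δ' ≤ Δ → Δ ≤ C * Δ' →
      ∀ ξ ∈ Set.Icc (0 : ℝ) 1,
        (Summable fun j : ℤ =>
          |ξ + j| ^ (β * q) * |φhat ((ξ + j) / Δ) - φhat ((ξ + j) / Δ')|) ∧
        ∑' j : ℤ, |ξ + j| ^ (β * q) * |φhat ((ξ + j) / Δ) - φhat ((ξ + j) / Δ')| ≤
          C' * Δ ^ (β * q) * (Δ - Δ') := by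
  refine ⟨(2*C+2) * (2*C*(L:ℝ)), ?_⟩
  intro φhat heven hanti hsupp hone hlip Δ Δ' hΔ'1 hΔ'Δ hΔC ξ hξ
  obtain ⟨hξ0, hξ1⟩ := hξ
  have hΔ1 : (1:ℝ) ≤ Δ := le_trans hΔ'1 hΔ'Δ
  have hΔ0 : (0:ℝ) < Δ := by linarith
  have hΔ'0 : (0:ℝ) < Δ' := by linarith
  have hL0 : (0:ℝ) ≤ (L:ℝ) := L.coe_nonneg
  set f : ℤ → ℝ := fun j => |ξ + j| ^ (β*q) * |φhat ((ξ + j)/Δ) - φhat ((ξ + j)/Δ')|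
    with hf
  have hΔpow : (0:ℝ) < Δ ^ (β*q) := Real.rpow_pos_of_pos hΔ0 _
  set B : ℝ := 2*C*(L:ℝ) * Δ ^ (β*q) * ((Δ - Δ')/Δ') with hB
  have hB0 : 0 ≤ B := by
    apply mul_nonneg
    · positivity
    · apply div_nonneg <;> linarith
  -- φhat vanishes when |x| ≥ 1
  have hzero : ∀ x : ℝ, 1 ≤ |x| → φhat x = 0 := by
    intro x hx
    by_contra h
    have hx2 := hsupp (Function.mem_support.2 h)
    rw [Set.mem_Ioo] at hx2
    have := abs_lt.2 ⟨hx2.1, hx2.2⟩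
    linarith
  -- nonzero terms satisfy Δ'/2 ≤ |ξ+j| ≤ Δ
  have hvan : ∀ j : ℤ, f j ≠ 0 → Δ'/2 ≤ |ξ + (j:ℝ)| ∧ |ξ + (j:ℝ)| ≤ Δ := by
    intro j hj
    set t : ℝ := ξ + j
    constructor
    · by_contra h
      push_neg at h
      have h1 : φhat (t/Δ) = 1 := by
        apply hone
        have habs : |t/Δ| ≤ 1/2 := by
          rw [abs_div, abs_of_pos hΔ0, div_le_iff₀ hΔ0]
          nlinarith [abs_nonneg t]
        exact ⟨by linarith [(abs_le.1 habs).1], by linarith [(abs_le.1 habs).2]⟩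
      have h2 : φhat (t/Δ') = 1 := by
        apply hone
        have habs : |t/Δ'| ≤ 1/2 := by
          rw [abs_div, abs_of_pos hΔ'0, div_le_iff₀ hΔ'0]
          linarith
        exact ⟨by linarith [(abs_le.1 habs).1], by linarith [(abs_le.1 habs).2]⟩
      apply hj
      change |t| ^ (β*q) * |φhat (t/Δ) - φhat (t/Δ')| = 0
      simp only [f, h1, h2, sub_self, abs_zero, mul_zero]
    · by_contra h
      push_neg at h
      have h1 : φhat (t/Δ) = 0 := by
        apply hzero
        rw [abs_div, abs_of_pos hΔ0, le_div_iff₀ hΔ0]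
        linarith
      have h2 : φhat (t/Δ') = 0 := by
        apply hzero
        rw [abs_div, abs_of_pos hΔ'0, le_div_iff₀ hΔ'0]
        linarith
      apply hj
      change |t| ^ (β*q) * |φhat (t/Δ) - φhat (t/Δ')| = 0
      simp only [f, h1, h2, sub_self, abs_zero, mul_zero]
  -- pointwise bound
  have hbound : ∀ j : ℤ, f j ≤ B := by
    intro j
    by_cases hj : f j = 0
    · rw [hj]; exact hB0
    · obtain ⟨hlo, hhi⟩ := hvan j hj
      set t : ℝ := ξ + j
      -- Lipschitz bound
      have hdiff : |φhat (t/Δ) - φhat (t/Δ')| ≤ (L:ℝ) * ((Δ - Δ')/Δ') := by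
        have h1 := hlip.dist_le_mul (t/Δ) (t/Δ')
        rw [Real.dist_eq, Real.dist_eq] at h1
        refine h1.trans ?_
        have h2 : |t/Δ - t/Δ'| = |t| * ((Δ - Δ')/(Δ*Δ')) := by
          rw [div_sub_div _ _ (ne_of_gt hΔ0) (ne_of_gt hΔ'0)]
          rw [abs_div, abs_of_pos (by positivity : (0:ℝ) < Δ*Δ')]
          rw [show t * Δ' - Δ * t = t * (Δ' - Δ) by ring, abs_mul,
            abs_of_nonpos (by linarith : Δ' - Δ ≤ 0)]
          ring
        rw [h2]
        apply mul_le_mul_of_nonneg_left _ hL0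
        calc |t| * ((Δ - Δ')/(Δ*Δ')) ≤ Δ * ((Δ - Δ')/(Δ*Δ')) :=
            mul_le_mul_of_nonneg_right hhi
              (div_nonneg (by linarith) (by positivity))
          _ = (Δ - Δ')/Δ' := by field_simp
      -- power bound
      have hpow : |t| ^ (β*q) ≤ 2*C * Δ ^ (β*q) := by
        rcases le_or_gt 0 (β*q) with hbq | hbq
        · calc |t| ^ (β*q) ≤ Δ ^ (β*q) :=
                Real.rpow_le_rpow (abs_nonneg t) hhi hbq
            _ ≤ 2*C * Δ ^ (β*q) := by nlinarith
        · have hC2 : (1:ℝ) ≤ 2*C := by linarith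
          have hlo' : Δ/(2*C) ≤ |t| := by
            rw [div_le_iff₀ (by linarith : (0:ℝ) < 2*C)]
            nlinarith
          have h1 : |t| ^ (β*q) ≤ (Δ/(2*C)) ^ (β*q) :=
            Real.rpow_le_rpow_of_nonpos (by positivity) hlo' (le_of_lt hbq)
          refine h1.trans ?_
          have h2 : (Δ/(2*C)) ^ (β*q) = Δ ^ (β*q) * (2*C) ^ (-(β*q)) := by
            rw [Real.div_rpow hΔ0.le (by linarith : (0:ℝ) ≤ 2*C),
              Real.rpow_neg (by linarith : (0:ℝ) ≤ 2*C), div_eq_mul_inv]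
          have h3 : (2*C) ^ (-(β*q)) ≤ (2*C) ^ (1:ℝ) :=
            Real.rpow_le_rpow_of_exponent_le hC2 (by linarith)
          rw [Real.rpow_one] at h3
          rw [h2]
          calc Δ ^ (β*q) * (2*C) ^ (-(β*q)) ≤ Δ ^ (β*q) * (2*C) :=
              mul_le_mul_of_nonneg_left h3 hΔpow.le
            _ = 2*C * Δ ^ (β*q) := by ring
      -- combine
      calc f j = |t| ^ (β*q) * |φhat (t/Δ) - φhat (t/Δ')| := rfl
        _ ≤ (2*C * Δ ^ (β*q)) * ((L:ℝ) * ((Δ - Δ')/Δ')) :=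
            mul_le_mul hpow hdiff (abs_nonneg _) (by positivity)
        _ = B := by rw [hB]; ring
  -- finite support
  set s : Finset ℤ := Finset.Icc ⌈-Δ-1⌉ ⌊Δ⌋ with hs
  have hns : ∀ j ∉ s, f j = 0 := by
    intro j hj
    by_contra h
    obtain ⟨_, hhi⟩ := hvan j h
    apply hj
    rw [hs, Finset.mem_Icc]
    obtain ⟨ha, hb⟩ := abs_le.1 hhi
    constructor
    · rw [Int.ceil_le]; push_cast; linarith
    · rw [Int.le_floor]; push_cast; linarith
  have hsummable : Summable f := summable_of_ne_finset_zero hns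
  refine ⟨hsummable, ?_⟩
  rw [tsum_eq_sum hns]
  have hcard : (s.card : ℝ) ≤ 2*Δ + 2 := by
    rw [hs, Int.card_Icc]
    have h0 : ((⌊Δ⌋ + 1 - ⌈-Δ-1⌉).toNat : ℤ) = max (⌊Δ⌋ + 1 - ⌈-Δ-1⌉) 0 :=
      Int.toNat_eq_max _
    have h0' := congrArg (Int.cast : ℤ → ℝ) h0
    push_cast at h0'
    rw [h0']
    have h1 : (⌊Δ⌋ : ℝ) ≤ Δ := Int.floor_le _
    have h2 : (-Δ-1 : ℝ) ≤ ⌈-Δ-1⌉ := Int.le_ceil _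
    apply max_le <;> linarith
  calc ∑ j ∈ s, f j ≤ s.card • B := Finset.sum_le_card_nsmul s f B (fun j _ => hbound j)
    _ = (s.card : ℝ) * B := nsmul_eq_mul _ _
    _ ≤ (2*Δ+2) * B := mul_le_mul_of_nonneg_right hcard hB0
    _ ≤ ((2*C+2)*Δ') * B := by
        apply mul_le_mul_of_nonneg_right _ hB0
        nlinarith
    _ = (2*C+2) * (2*C*(L:ℝ)) * Δ ^ (β*q) * (Δ - Δ') := by
        rw [hB]; field_simp
end

section
/- Let q ∈ [1,∞), N ∈ ℕ, and let (w_k)_{k=0}^N be non-negative reals and (c_k)_{k=0}^N complex numbers. For signs ε ∈ {-1,1}^{N+1}, put S_n^ε(x) = Σ_{k=0}^n ε_k c_k e^{2πi k x}. Then there exists a choice of signs ε such that (Σ_{k=0}^N w_k ‖S_k^ε‖_{L^q(𝕋)}^q)^{1/q} ≤ C_q (Σ_{k=0}^N w_k ‖S_k^ε‖_{L^2(𝕋)}^q)^{1/q}, where ‖S_k^ε‖_{L^2(𝕋)}^2 = Σ_{j=0}^k |c_j|^2 does not depend on ε and C_q depends only on q. -/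
open MeasureTheory Real Filter FourierTransform Topology
open scoped ENNReal NNReal

noncomputable def sg10 (n : ℕ) (ε : Fin n → Bool) (j : ℕ) : ℝ :=
  if h : j < n then (if ε ⟨j, h⟩ then 1 else -1) else 1

lemma sg10_sq (n : ℕ) (ε : Fin n → Bool) (j : ℕ) : sg10 n ε j ^ 2 = 1 := by
  unfold sg10; split_ifs <;> norm_num

lemma sg10_cases (n : ℕ) (ε : Fin n → Bool) (j : ℕ) : sg10 n ε j = 1 ∨ sg10 n ε j = -1 := by
  unfold sg10; split_ifs <;> simp

lemma kh_even_aux (f : ℕ → ℝ) : ∀ p : ℕ, (∀ i, Odd i → i ≤ 2*p → f i = 0) →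
    ∑ i ∈ Finset.range (2*p+1), f i = ∑ i ∈ Finset.range (p+1), f (2*i) := by
  intro p
  induction p with
  | zero => simp
  | succ p ih =>
    intro hf
    have h1 : 2*(p+1)+1 = (2*p+1) + 1 + 1 := by ring
    rw [h1, Finset.sum_range_succ, Finset.sum_range_succ,
      ih (fun i hi hle => hf i hi (by omega)),
      hf (2*p+1) ⟨p, by ring⟩ (by omega)]
    have h2 : 2*p+1+1 = 2*(p+1) := by ring
    rw [h2, Finset.sum_range_succ, Finset.sum_range_succ, Finset.sum_range_succ]
    ring

lemma even_binom (X u : ℝ) (p : ℕ) :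
    (X + u)^(2*p) + (X - u)^(2*p)
      = 2 * ∑ i ∈ Finset.range (p+1), X^(2*i) * u^(2*(p-i)) * (Nat.choose (2*p) (2*i) : ℝ) := by
  rw [add_pow, sub_eq_add_neg, add_pow, ← Finset.sum_add_distrib]
  have h := kh_even_aux (fun i => X^i * u^(2*p - i) * (Nat.choose (2*p) i : ℝ)
      + X^i * (-u)^(2*p-i) * (Nat.choose (2*p) i : ℝ)) p ?_
  · rw [h, Finset.mul_sum]
    refine Finset.sum_congr rfl fun i hi => ?_
    have hi' : i ≤ p := Nat.lt_succ_iff.mp (Finset.mem_range.mp hi)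
    have he : 2*p - 2*i = 2*(p-i) := by omega
    have hev : (-u)^(2*p-2*i) = u^(2*p-2*i) := Even.neg_pow ⟨p-i, by omega⟩ u
    rw [hev, he]; ring
  · intro i hi hile
    have hodd : Odd (2*p - i) := Nat.Even.sub_odd hile ⟨p, by ring⟩ hi
    have : (-u)^(2*p-i) = -(u^(2*p-i)) := Odd.neg_pow hodd u
    simp only [this]; ring

lemma kh_real (n : ℕ) (a : ℕ → ℝ) :
    ∀ m, m ≤ n → ∀ p : ℕ,
    ∑ ε : Fin n → Bool, (∑ j ∈ Finset.range m, sg10 n ε j * a j)^(2*p)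
      ≤ 2^n * (Nat.factorial (2*p) : ℝ) * (∑ j ∈ Finset.range m, (a j)^2)^p := by
  intro m
  induction m with
  | zero =>
    intro _ p
    simp only [Finset.sum_range_zero]
    rcases Nat.eq_zero_or_pos p with hp | hp
    · subst hp
      simp [Fintype.card_fun]
    · rw [zero_pow (by omega), zero_pow (by omega)]
      simp
  | succ m ih =>
    intro hm1 p
    have hm : m < n := hm1
    have hmn : m ≤ n := le_of_lt hm
    set i : Fin n := ⟨m, hm⟩
    set σ : (Fin n → Bool) → (Fin n → Bool) := fun ε => Function.update ε i (!(ε i)) with hσdef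
    have hσ : Function.Involutive σ := by
      intro ε; funext j
      by_cases h : j = i
      · subst h; simp [σ, Function.update_self]
      · simp [σ, Function.update_of_ne h]
    have hsum : ∀ g : (Fin n → Bool) → ℝ,
        ∑ ε : Fin n → Bool, g (σ ε) = ∑ ε : Fin n → Bool, g ε :=
      fun g => Fintype.sum_bijective σ hσ.bijective _ _ (fun ε => rfl)
    have hsg1 : ∀ (ε : Fin n → Bool) (j : ℕ), j ≠ m → sg10 n (σ ε) j = sg10 n ε j := by
      intro ε j hj
      unfold sg10
      by_cases h : j < n
      · have hne : (⟨j, h⟩ : Fin n) ≠ i := by simp [i, Fin.ext_iff, hj]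
        simp only [dif_pos h]
        rw [show σ ε ⟨j, h⟩ = ε ⟨j, h⟩ from Function.update_of_ne hne _ _]
      · simp [h]
    have hsg2 : ∀ ε : Fin n → Bool, sg10 n (σ ε) m = - sg10 n ε m := by
      intro ε
      unfold sg10
      simp only [dif_pos hm]
      rw [show (⟨m, hm⟩ : Fin n) = i from rfl,
        show σ ε i = !(ε i) from Function.update_self _ _ _]
      cases ε i <;> simp
    set X : (Fin n → Bool) → ℝ := fun ε => ∑ j ∈ Finset.range m, sg10 n ε j * a j with hX
    set t : ℝ := a m with ht
    set S : ℝ := ∑ j ∈ Finset.range m, (a j)^2 with hS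
    have hS0 : 0 ≤ S := Finset.sum_nonneg fun j _ => sq_nonneg _
    have hXσ : ∀ ε, X (σ ε) = X ε := by
      intro ε
      refine Finset.sum_congr rfl fun j hj => ?_
      rw [hsg1 ε j (by have := Finset.mem_range.mp hj; omega)]
    have hL : ∀ ε : Fin n → Bool,
        (∑ j ∈ Finset.range (m+1), sg10 n ε j * a j) = X ε + sg10 n ε m * t :=
      fun ε => Finset.sum_range_succ _ m
    have hdouble : (2:ℝ) * ∑ ε : Fin n → Bool, (X ε + sg10 n ε m * t)^(2*p)
        = ∑ ε : Fin n → Bool,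
            ((X ε + sg10 n ε m * t)^(2*p) + (X ε - sg10 n ε m * t)^(2*p)) := by
      rw [Finset.sum_add_distrib, two_mul]
      congr 1
      calc ∑ ε : Fin n → Bool, (X ε + sg10 n ε m * t)^(2*p)
          = ∑ ε : Fin n → Bool, (X (σ ε) + sg10 n (σ ε) m * t)^(2*p) :=
            (hsum fun ε => (X ε + sg10 n ε m * t)^(2*p)).symm
        _ = ∑ ε : Fin n → Bool, (X ε - sg10 n ε m * t)^(2*p) := by
            refine Finset.sum_congr rfl fun ε _ => ?_
            rw [hXσ, hsg2]; ring_nf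
    have hexp : ∀ ε : Fin n → Bool,
        (X ε + sg10 n ε m * t)^(2*p) + (X ε - sg10 n ε m * t)^(2*p)
          = 2 * ∑ k ∈ Finset.range (p+1),
              (X ε)^(2*k) * t^(2*(p-k)) * (Nat.choose (2*p) (2*k) : ℝ) := by
      intro ε
      rw [even_binom]
      congr 1
      refine Finset.sum_congr rfl fun k _ => ?_
      rw [mul_pow, pow_mul (sg10 n ε m), sg10_sq, one_pow, one_mul]
    have hmain : ∑ ε : Fin n → Bool, (X ε + sg10 n ε m * t)^(2*p)
        = ∑ k ∈ Finset.range (p+1),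
            (∑ ε : Fin n → Bool, (X ε)^(2*k)) * (t^(2*(p-k)) * (Nat.choose (2*p) (2*k) : ℝ)) := by
      have h2 : (2:ℝ) * ∑ ε : Fin n → Bool, (X ε + sg10 n ε m * t)^(2*p)
          = 2 * ∑ k ∈ Finset.range (p+1),
              (∑ ε : Fin n → Bool, (X ε)^(2*k)) * (t^(2*(p-k)) * (Nat.choose (2*p) (2*k) : ℝ)) := by
        rw [hdouble]
        rw [Finset.sum_congr rfl fun ε _ => hexp ε, ← Finset.mul_sum]
        congr 1
        rw [Finset.sum_comm]
        refine Finset.sum_congr rfl fun k _ => ?_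
        rw [Finset.sum_mul]
        refine Finset.sum_congr rfl fun ε _ => by ring
      exact mul_left_cancel₀ two_ne_zero h2
    calc ∑ ε : Fin n → Bool, (∑ j ∈ Finset.range (m+1), sg10 n ε j * a j)^(2*p)
        = ∑ k ∈ Finset.range (p+1),
            (∑ ε : Fin n → Bool, (X ε)^(2*k)) * (t^(2*(p-k)) * (Nat.choose (2*p) (2*k) : ℝ)) := by
          rw [Finset.sum_congr rfl fun ε _ => by rw [hL ε]]; exact hmain
      _ ≤ ∑ k ∈ Finset.range (p+1),
            (2^n * (Nat.factorial (2*k) : ℝ) * S^k) * (t^(2*(p-k)) * (Nat.choose (2*p) (2*k) : ℝ)) := by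
          refine Finset.sum_le_sum fun k _ => ?_
          have hfac : (0:ℝ) ≤ t^(2*(p-k)) * (Nat.choose (2*p) (2*k) : ℝ) := by
            have : (0:ℝ) ≤ t^(2*(p-k)) := by
              rw [pow_mul]; exact pow_nonneg (sq_nonneg t) _
            positivity
          exact mul_le_mul_of_nonneg_right (ih hmn k) hfac
      _ ≤ 2^n * (Nat.factorial (2*p) : ℝ) * (∑ j ∈ Finset.range (m+1), (a j)^2)^p := by
          have hsplit : (∑ j ∈ Finset.range (m+1), (a j)^2) = S + a m^2 :=
            Finset.sum_range_succ _ m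
          rw [hsplit, add_pow, Finset.mul_sum]
          refine Finset.sum_le_sum fun k hk => ?_
          have hk' : k ≤ p := Nat.lt_succ_iff.mp (Finset.mem_range.mp hk)
          have hnat : (Nat.factorial (2*k)) * (Nat.choose (2*p) (2*k)) ≤
              (Nat.factorial (2*p)) * (Nat.choose p k) := by
            have hcc := Nat.choose_mul_factorial_mul_factorial (show 2*k ≤ 2*p by omega)
            calc Nat.factorial (2*k) * Nat.choose (2*p) (2*k)
                = Nat.choose (2*p) (2*k) * Nat.factorial (2*k) := by ring
              _ ≤ Nat.choose (2*p) (2*k) * Nat.factorial (2*k) * Nat.factorial (2*p - 2*k) :=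
                  Nat.le_mul_of_pos_right _ (Nat.factorial_pos _)
              _ = Nat.factorial (2*p) := hcc
              _ ≤ Nat.factorial (2*p) * Nat.choose p k :=
                  Nat.le_mul_of_pos_right _ (Nat.choose_pos hk')
          have ht2 : t^(2*(p-k)) = (t^2)^(p-k) := pow_mul t 2 (p-k)
          have hSk : (0:ℝ) ≤ S^k := pow_nonneg hS0 k
          have h2n : (0:ℝ) ≤ 2^n := by positivity
          calc 2^n * (Nat.factorial (2*k) : ℝ) * S^k * (t^(2*(p-k)) * (Nat.choose (2*p) (2*k) : ℝ))
              = (2^n * S^k * (t^2)^(p-k)) * ((Nat.factorial (2*k) : ℝ) * (Nat.choose (2*p) (2*k) : ℝ)) := by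
                rw [ht2]; ring
            _ ≤ (2^n * S^k * (t^2)^(p-k)) * ((Nat.factorial (2*p) : ℝ) * (Nat.choose p k : ℝ)) := by
                refine mul_le_mul_of_nonneg_left ?_ (by positivity)
                exact_mod_cast hnat
            _ = 2^n * (Nat.factorial (2*p) : ℝ) * (S^k * (a m^2)^(p-k) * (Nat.choose p k : ℝ)) := by
                rw [ht]; ring

lemma pow_add_le10 {x y : ℝ} (hx : 0 ≤ x) (hy : 0 ≤ y) (p : ℕ) :
    (x + y)^p ≤ 2^p * (x^p + y^p) := by
  rcases le_total x y with h | h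
  · calc (x+y)^p ≤ (2*y)^p := pow_le_pow_left₀ (by linarith) (by linarith) p
      _ = 2^p * y^p := mul_pow 2 y p
      _ ≤ 2^p * (x^p + y^p) := by nlinarith [pow_nonneg hx p, pow_pos (show (0:ℝ) < 2 by norm_num) p]
  · calc (x+y)^p ≤ (2*x)^p := pow_le_pow_left₀ (by linarith) (by linarith) p
      _ = 2^p * x^p := mul_pow 2 x p
      _ ≤ 2^p * (x^p + y^p) := by nlinarith [pow_nonneg hy p, pow_pos (show (0:ℝ) < 2 by norm_num) p]

lemma kh_complex (n m p : ℕ) (hm : m ≤ n) (z : ℕ → ℂ) :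
    ∑ ε : Fin n → Bool, ‖∑ j ∈ Finset.range m, (sg10 n ε j : ℂ) * z j‖^(2*p)
      ≤ 2^n * (2^(p+1) * (Nat.factorial (2*p) : ℝ)) * (∑ j ∈ Finset.range m, ‖z j‖^2)^p := by
  set S : ℝ := ∑ j ∈ Finset.range m, ‖z j‖^2 with hS
  have hS0 : 0 ≤ S := Finset.sum_nonneg fun j _ => sq_nonneg _
  have hre : ∀ ε : Fin n → Bool,
      (∑ j ∈ Finset.range m, (sg10 n ε j : ℂ) * z j).re
        = ∑ j ∈ Finset.range m, sg10 n ε j * (z j).re := by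
    intro ε
    rw [Complex.re_sum]
    exact Finset.sum_congr rfl fun j _ => by simp [Complex.mul_re]
  have him : ∀ ε : Fin n → Bool,
      (∑ j ∈ Finset.range m, (sg10 n ε j : ℂ) * z j).im
        = ∑ j ∈ Finset.range m, sg10 n ε j * (z j).im := by
    intro ε
    rw [Complex.im_sum]
    exact Finset.sum_congr rfl fun j _ => by simp [Complex.mul_im]
  have hnorm : ∀ ε : Fin n → Bool,
      ‖∑ j ∈ Finset.range m, (sg10 n ε j : ℂ) * z j‖^(2*p)
        ≤ 2^p * ((∑ j ∈ Finset.range m, sg10 n ε j * (z j).re)^(2*p)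
              + (∑ j ∈ Finset.range m, sg10 n ε j * (z j).im)^(2*p)) := by
    intro ε
    set Z := ∑ j ∈ Finset.range m, (sg10 n ε j : ℂ) * z j with hZ
    have h1 : ‖Z‖^2 = Z.re^2 + Z.im^2 := by
      rw [Complex.sq_norm, Complex.normSq_apply]; ring
    calc ‖Z‖^(2*p) = (‖Z‖^2)^p := by rw [← pow_mul]
      _ = (Z.re^2 + Z.im^2)^p := by rw [h1]
      _ ≤ 2^p * ((Z.re^2)^p + (Z.im^2)^p) := pow_add_le10 (sq_nonneg _) (sq_nonneg _) p
      _ = 2^p * ((∑ j ∈ Finset.range m, sg10 n ε j * (z j).re)^(2*p)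
              + (∑ j ∈ Finset.range m, sg10 n ε j * (z j).im)^(2*p)) := by
          rw [← pow_mul, ← pow_mul, mul_comm 2 p, hre, him]
  have hRe2 : (∑ j ∈ Finset.range m, ((z j).re)^2) ≤ S := by
    refine Finset.sum_le_sum fun j _ => ?_
    have : ‖z j‖^2 = (z j).re^2 + (z j).im^2 := by
      rw [Complex.sq_norm, Complex.normSq_apply]; ring
    nlinarith [sq_nonneg ((z j).im)]
  have hIm2 : (∑ j ∈ Finset.range m, ((z j).im)^2) ≤ S := by
    refine Finset.sum_le_sum fun j _ => ?_
    have : ‖z j‖^2 = (z j).re^2 + (z j).im^2 := by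
      rw [Complex.sq_norm, Complex.normSq_apply]; ring
    nlinarith [sq_nonneg ((z j).re)]
  have hReBound := kh_real n (fun j => (z j).re) m hm p
  have hImBound := kh_real n (fun j => (z j).im) m hm p
  have hRe2p : (∑ j ∈ Finset.range m, ((z j).re)^2)^p ≤ S^p :=
    pow_le_pow_left₀ (Finset.sum_nonneg fun j _ => sq_nonneg _) hRe2 p
  have hIm2p : (∑ j ∈ Finset.range m, ((z j).im)^2)^p ≤ S^p :=
    pow_le_pow_left₀ (Finset.sum_nonneg fun j _ => sq_nonneg _) hIm2 p
  calc ∑ ε : Fin n → Bool, ‖∑ j ∈ Finset.range m, (sg10 n ε j : ℂ) * z j‖^(2*p)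
      ≤ ∑ ε : Fin n → Bool, 2^p * ((∑ j ∈ Finset.range m, sg10 n ε j * (z j).re)^(2*p)
              + (∑ j ∈ Finset.range m, sg10 n ε j * (z j).im)^(2*p)) :=
        Finset.sum_le_sum fun ε _ => hnorm ε
    _ = 2^p * ((∑ ε : Fin n → Bool, (∑ j ∈ Finset.range m, sg10 n ε j * (z j).re)^(2*p))
            + (∑ ε : Fin n → Bool, (∑ j ∈ Finset.range m, sg10 n ε j * (z j).im)^(2*p))) := by
        rw [← Finset.mul_sum, Finset.sum_add_distrib]
    _ ≤ 2^p * ((2^n * (Nat.factorial (2*p) : ℝ) * S^p) + (2^n * (Nat.factorial (2*p) : ℝ) * S^p)) := by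
        have hb1 := le_trans hReBound (by
          exact mul_le_mul_of_nonneg_left hRe2p (by positivity))
        have hb2 := le_trans hImBound (by
          exact mul_le_mul_of_nonneg_left hIm2p (by positivity))
        have h2p : (0:ℝ) ≤ 2^p := by positivity
        nlinarith [hb1, hb2]
    _ = 2^n * (2^(p+1) * (Nat.factorial (2*p) : ℝ)) * S^p := by ring

noncomputable def kconst10 (q : ℝ) : ℝ :=
  1 + 2^(⌈q⌉₊+1) * (Nat.factorial (2*⌈q⌉₊) : ℝ)

lemma kconst10_one_le (q : ℝ) : 1 ≤ kconst10 q := by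
  unfold kconst10
  have : (0:ℝ) < 2^(⌈q⌉₊+1) * (Nat.factorial (2*⌈q⌉₊) : ℝ) := by positivity
  linarith

lemma rpow_le_one_add_pow10 {t : ℝ} (ht : 0 ≤ t) {q : ℝ} (hq0 : 0 ≤ q) {p : ℕ}
    (h : q ≤ 2*p) : t ^ q ≤ 1 + t ^ (2*p) := by
  rcases le_total t 1 with h1 | h1
  · have h2 := Real.rpow_le_one ht h1 hq0
    have h3 : (0:ℝ) ≤ t ^ (2*p) := pow_nonneg ht _
    linarith
  · have h2 : t ^ q ≤ t ^ ((2*p : ℕ) : ℝ) :=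
      Real.rpow_le_rpow_of_exponent_le h1 (by push_cast; push_cast at h; linarith)
    rw [Real.rpow_natCast] at h2
    linarith

set_option maxHeartbeats 1000000 in
lemma kh_q (n m : ℕ) (hm : m ≤ n) (q : ℝ) (hq : 1 ≤ q) (z : ℕ → ℂ) :
    ∑ ε : Fin n → Bool, ‖∑ j ∈ Finset.range m, (sg10 n ε j : ℂ) * z j‖ ^ q
      ≤ 2^n * kconst10 q * (∑ j ∈ Finset.range m, ‖z j‖^2) ^ (q/2) := by
  set p : ℕ := ⌈q⌉₊ with hp
  have hq0 : (0:ℝ) ≤ q := by linarith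
  have hqne : q ≠ 0 := by linarith
  have hqp : q ≤ 2*(p:ℝ) := by
    have h1 := Nat.le_ceil q
    have h2 : (0:ℝ) ≤ (p:ℝ) := Nat.cast_nonneg p
    rw [← hp] at h1
    linarith
  set S : ℝ := ∑ j ∈ Finset.range m, ‖z j‖^2 with hS
  have hS0 : 0 ≤ S := Finset.sum_nonneg fun j _ => sq_nonneg _
  rcases eq_or_lt_of_le hS0 with hS0' | hSpos
  · -- S = 0
    have hz : ∀ j ∈ Finset.range m, z j = 0 := by
      intro j hj
      have h0 := (Finset.sum_eq_zero_iff_of_nonneg (fun j _ => sq_nonneg ‖z j‖)).mp hS0'.symm j hj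
      have : ‖z j‖ = 0 := by nlinarith [norm_nonneg (z j)]
      exact norm_eq_zero.mp this
    have hLHS : ∑ ε : Fin n → Bool, ‖∑ j ∈ Finset.range m, (sg10 n ε j : ℂ) * z j‖ ^ q = 0 := by
      refine Finset.sum_eq_zero fun ε _ => ?_
      rw [Finset.sum_eq_zero fun j hj => by rw [hz j hj, mul_zero]]
      rw [norm_zero, Real.zero_rpow hqne]
    rw [hLHS, ← hS0', Real.zero_rpow (by positivity : q/2 ≠ 0), mul_zero]
  · -- 0 < S
    set T : ℝ := Real.sqrt S with hT
    have hTpos : 0 < T := Real.sqrt_pos.mpr hSpos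
    have hTq : T ^ q = S ^ (q/2) := by
      rw [hT, Real.sqrt_eq_rpow, ← Real.rpow_mul hS0]
      congr 1
      ring
    have hT2p : T^(2*p) = S^p := by
      rw [pow_mul, hT, Real.sq_sqrt hS0]
    have hptwise : ∀ ε : Fin n → Bool,
        ‖∑ j ∈ Finset.range m, (sg10 n ε j : ℂ) * z j‖ ^ q
          ≤ T^q * (1 + (‖∑ j ∈ Finset.range m, (sg10 n ε j : ℂ) * z j‖ / T)^(2*p)) := by
      intro ε
      set r : ℝ := ‖∑ j ∈ Finset.range m, (sg10 n ε j : ℂ) * z j‖ with hr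
      have hr0 : 0 ≤ r := norm_nonneg _
      have heq : r = T * (r / T) := by field_simp
      calc r ^ q = (T * (r/T)) ^ q := by rw [← heq]
        _ = T^q * (r/T)^q := Real.mul_rpow hTpos.le (div_nonneg hr0 hTpos.le)
        _ ≤ T^q * (1 + (r/T)^(2*p)) := by
            refine mul_le_mul_of_nonneg_left ?_ (Real.rpow_nonneg hTpos.le q)
            exact rpow_le_one_add_pow10 (div_nonneg hr0 hTpos.le) hq0 hqp
    have hcard : (Finset.univ : Finset (Fin n → Bool)).card = 2^n := by
      rw [Finset.card_univ]
      simp [Fintype.card_fun]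
    calc ∑ ε : Fin n → Bool, ‖∑ j ∈ Finset.range m, (sg10 n ε j : ℂ) * z j‖ ^ q
        ≤ ∑ ε : Fin n → Bool,
            T^q * (1 + (‖∑ j ∈ Finset.range m, (sg10 n ε j : ℂ) * z j‖ / T)^(2*p)) :=
          Finset.sum_le_sum fun ε _ => hptwise ε
      _ = T^q * ((2^n : ℝ) + (∑ ε : Fin n → Bool,
            ‖∑ j ∈ Finset.range m, (sg10 n ε j : ℂ) * z j‖^(2*p)) / T^(2*p)) := by
          rw [← Finset.mul_sum]
          congr 1
          rw [Finset.sum_add_distrib, Finset.sum_const, hcard, nsmul_eq_mul]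
          congr 1
          · norm_num
          · rw [Finset.sum_congr rfl fun ε _ => div_pow
                ‖∑ j ∈ Finset.range m, (sg10 n ε j : ℂ) * z j‖ T (2*p), Finset.sum_div]
      _ ≤ T^q * ((2^n : ℝ) + (2^n * (2^(p+1) * (Nat.factorial (2*p) : ℝ)) * S^p) / T^(2*p)) := by
          refine mul_le_mul_of_nonneg_left ?_ (Real.rpow_nonneg hTpos.le q)
          have hb := kh_complex n m p hm z
          rw [← hS] at hb
          have hTp : (0:ℝ) < T^(2*p) := pow_pos hTpos _
          refine add_le_add le_rfl ?_
          exact div_le_div_of_nonneg_right hb hTp.le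
      _ = 2^n * kconst10 q * S ^ (q/2) := by
          rw [hT2p]
          have hSp : S^p ≠ 0 := by positivity
          rw [mul_div_assoc, div_self hSp, mul_one, ← hTq]
          unfold kconst10
          rw [← hp]
          ring

noncomputable def G10 (q : ℝ) (c : ℕ → ℂ) (n : ℕ) (ε : Fin n → Bool) (k : ℕ) (x : ℝ) : ℝ :=
  ‖∑ j ∈ Finset.range (k + 1),
    (sg10 n ε j : ℂ) * c j * Complex.exp (2 * Real.pi * Complex.I * j * x)‖ ^ q

lemma G10_cont (q : ℝ) (hq : 1 ≤ q) (c : ℕ → ℂ) (n : ℕ) (ε : Fin n → Bool) (k : ℕ) :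
    Continuous (G10 q c n ε k) := by
  unfold G10
  apply Continuous.rpow_const
  · apply Continuous.norm
    apply continuous_finset_sum
    intro j _
    exact continuous_const.mul (Complex.continuous_exp.comp (by continuity))
  · intro x; right; linarith

lemma G10_int (q : ℝ) (hq : 1 ≤ q) (c : ℕ → ℂ) (n : ℕ) (ε : Fin n → Bool) (k : ℕ) :
    IntervalIntegrable (G10 q c n ε k) MeasureTheory.volume 0 1 :=
  (G10_cont q hq c n ε k).intervalIntegrable 0 1

lemma G10_nonneg (q : ℝ) (c : ℕ → ℂ) (n : ℕ) (ε : Fin n → Bool) (k : ℕ) (x : ℝ) :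
    0 ≤ G10 q c n ε k x := by unfold G10; exact Real.rpow_nonneg (norm_nonneg _) q

lemma hexp1 (j : ℕ) (x : ℝ) : ‖Complex.exp (2 * Real.pi * Complex.I * j * x)‖ = 1 := by
  have h : (2 * (Real.pi:ℂ) * Complex.I * j * x) = ((2 * Real.pi * j * x : ℝ) : ℂ) * Complex.I := by
    push_cast; ring
  rw [h, Complex.norm_exp_ofReal_mul_I]

set_option maxHeartbeats 1600000 in
lemma hkey10 (q : ℝ) (hq : 1 ≤ q) (c : ℕ → ℂ) (n k : ℕ) (hk : k < n) :
    ∑ ε : Fin n → Bool, (∫ x in (0:ℝ)..1, G10 q c n ε k x)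
      ≤ 2^n * (kconst10 q * (∑ j ∈ Finset.range (k + 1), ‖c j‖ ^ 2) ^ (q / 2)) := by
  have hswap : ∑ ε : Fin n → Bool, (∫ x in (0:ℝ)..1, G10 q c n ε k x)
      = ∫ x in (0:ℝ)..1, ∑ ε : Fin n → Bool, G10 q c n ε k x :=
    (intervalIntegral.integral_finset_sum fun ε _ => G10_int q hq c n ε k).symm
  have hptwise : ∀ x : ℝ, ∑ ε : Fin n → Bool, G10 q c n ε k x
      ≤ 2^n * kconst10 q * (∑ j ∈ Finset.range (k + 1), ‖c j‖ ^ 2) ^ (q / 2) := by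
    intro x
    have hb := kh_q n (k+1) hk q hq (fun j => c j * Complex.exp (2 * Real.pi * Complex.I * j * x))
    have he1 : ∀ ε : Fin n → Bool, G10 q c n ε k x
        = ‖∑ j ∈ Finset.range (k + 1),
            (sg10 n ε j : ℂ) * (c j * Complex.exp (2 * Real.pi * Complex.I * j * x))‖ ^ q := by
      intro ε
      unfold G10
      rw [Finset.sum_congr rfl fun j _ => mul_assoc ((sg10 n ε j : ℂ)) (c j) _]
    have he2 : (∑ j ∈ Finset.range (k + 1),
        ‖c j * Complex.exp (2 * Real.pi * Complex.I * j * x)‖ ^ 2)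
        = ∑ j ∈ Finset.range (k + 1), ‖c j‖ ^ 2 := by
      refine Finset.sum_congr rfl fun j _ => ?_
      rw [norm_mul, hexp1 j x, mul_one]
    rw [Finset.sum_congr rfl fun ε _ => he1 ε, ← he2]
    exact hb
  have hint : IntervalIntegrable (fun x => ∑ ε : Fin n → Bool, G10 q c n ε k x)
      MeasureTheory.volume 0 1 := by
    have h := IntervalIntegrable.sum (μ := MeasureTheory.volume) (a := (0:ℝ)) (b := 1)
      Finset.univ (f := fun ε : Fin n → Bool => G10 q c n ε k) (fun ε _ => G10_int q hq c n ε k)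
    have heq : (∑ ε : Fin n → Bool, G10 q c n ε k)
        = fun x => ∑ ε : Fin n → Bool, G10 q c n ε k x := by
      funext x; exact Finset.sum_apply _ _ _
    rwa [heq] at h
  rw [hswap]
  calc ∫ x in (0:ℝ)..1, ∑ ε : Fin n → Bool, G10 q c n ε k x
      ≤ ∫ x in (0:ℝ)..1,
          (2^n * kconst10 q * (∑ j ∈ Finset.range (k + 1), ‖c j‖ ^ 2) ^ (q / 2) : ℝ) :=
        intervalIntegral.integral_mono_on (by norm_num) hint intervalIntegrable_const
          (fun x _ => hptwise x)
    _ = 2^n * (kconst10 q * (∑ j ∈ Finset.range (k + 1), ‖c j‖ ^ 2) ^ (q / 2)) := by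
        rw [intervalIntegral.integral_const]; simp; ring

set_option maxHeartbeats 1600000 in
/-- randomization: some choice of signs ε makes the weighted ℓ^q average
of ‖S_k^ε‖_{L^q(𝕋)} controlled by that of ‖S_k‖_{L^2(𝕋)}. -/
theorem stmt10 (q : ℝ) (hq : 1 ≤ q) :
    ∃ Cq : ℝ, ∀ (N : ℕ) (w : ℕ → ℝ) (c : ℕ → ℂ), (∀ k, 0 ≤ w k) →
      ∃ ε : ℕ → ℝ, (∀ k, ε k = 1 ∨ ε k = -1) ∧
        (∑ k ∈ Finset.range (N + 1), w k *
            ∫ x in (0:ℝ)..1, ‖∑ j ∈ Finset.range (k + 1),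
              (ε j : ℂ) * c j * Complex.exp (2 * Real.pi * Complex.I * j * x)‖ ^ q) ^ (1/q) ≤
        Cq * (∑ k ∈ Finset.range (N + 1), w k *
            (∑ j ∈ Finset.range (k + 1), ‖c j‖ ^ 2) ^ (q / 2)) ^ (1/q) := by
  refine ⟨kconst10 q, fun N w c hw => ?_⟩
  set n : ℕ := N + 1 with hn
  set R : ℝ := ∑ k ∈ Finset.range n, w k *
      (∑ j ∈ Finset.range (k + 1), ‖c j‖ ^ 2) ^ (q / 2) with hR
  have hR0 : 0 ≤ R := by
    refine Finset.sum_nonneg fun k _ => mul_nonneg (hw k) ?_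
    exact Real.rpow_nonneg (Finset.sum_nonneg fun j _ => sq_nonneg _) _
  set F : (Fin n → Bool) → ℝ := fun ε =>
      ∑ k ∈ Finset.range n, w k * ∫ x in (0:ℝ)..1, G10 q c n ε k x with hF
  have havg : ∑ ε : Fin n → Bool, F ε ≤ ∑ ε : Fin n → Bool, kconst10 q * R := by
    have hcard : (Finset.univ : Finset (Fin n → Bool)).card = 2^n := by
      rw [Finset.card_univ]; simp [Fintype.card_fun]
    have h1 : ∑ ε : Fin n → Bool, F ε
        = ∑ k ∈ Finset.range n, w k * ∑ ε : Fin n → Bool, (∫ x in (0:ℝ)..1, G10 q c n ε k x) := by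
      rw [hF, Finset.sum_comm]
      exact Finset.sum_congr rfl fun k _ => by rw [Finset.mul_sum]
    have h2 : ∑ _ε : Fin n → Bool, (kconst10 q * R : ℝ) = 2^n * (kconst10 q * R) := by
      rw [Finset.sum_const, hcard, nsmul_eq_mul]; push_cast; ring
    rw [h1, h2]
    calc ∑ k ∈ Finset.range n, w k * ∑ ε : Fin n → Bool, (∫ x in (0:ℝ)..1, G10 q c n ε k x)
        ≤ ∑ k ∈ Finset.range n,
            w k * (2^n * (kconst10 q * (∑ j ∈ Finset.range (k + 1), ‖c j‖ ^ 2) ^ (q / 2))) := by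
          refine Finset.sum_le_sum fun k hk => ?_
          exact mul_le_mul_of_nonneg_left (hkey10 q hq c n k (Finset.mem_range.mp hk)) (hw k)
      _ = 2^n * (kconst10 q * R) := by
          rw [hR, Finset.mul_sum, Finset.mul_sum]
          exact Finset.sum_congr rfl fun k _ => by ring
  obtain ⟨ε₀, -, hε₀⟩ := Finset.exists_le_of_sum_le Finset.univ_nonempty havg
  refine ⟨fun j => sg10 n ε₀ j, fun k => sg10_cases n ε₀ k, ?_⟩
  have hF0 : 0 ≤ F ε₀ := by
    refine Finset.sum_nonneg fun k _ => mul_nonneg (hw k) ?_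
    exact intervalIntegral.integral_nonneg (by norm_num) (fun x _ => G10_nonneg q c n ε₀ k x)
  have hk0 : (0:ℝ) ≤ kconst10 q := le_trans zero_le_one (kconst10_one_le q)
  have step1 : (F ε₀) ^ (1/q) ≤ (kconst10 q * R) ^ (1/q) :=
    Real.rpow_le_rpow hF0 hε₀ (by positivity)
  have step2 : (kconst10 q * R) ^ (1/q) = (kconst10 q) ^ (1/q) * R ^ (1/q) :=
    Real.mul_rpow hk0 hR0
  have step3 : (kconst10 q) ^ (1/q) ≤ kconst10 q := by
    have h1q : 1/q ≤ 1 := by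
      rw [div_le_one (by linarith)]; linarith
    calc (kconst10 q) ^ (1/q) ≤ (kconst10 q) ^ (1:ℝ) :=
          Real.rpow_le_rpow_of_exponent_le (kconst10_one_le q) h1q
      _ = kconst10 q := Real.rpow_one _
  calc (F ε₀) ^ (1/q) ≤ (kconst10 q) ^ (1/q) * R ^ (1/q) := by rw [← step2]; exact step1
    _ ≤ kconst10 q * R ^ (1/q) :=
        mul_le_mul_of_nonneg_right step3 (Real.rpow_nonneg hR0 _)
end

section
/- Let 1 < q < ∞, B = (1/q)/(β - 1/q') with β > 1/q', A = β/(β - 1/q'), and set c_j = (j+1)^{-(1+B)} (log(j+2))^{-A}. Then for the tail sums one has Σ_{j=k}^{∞} c_j^q (j - k + 1)^{q-2} ≤ C k^{-Bq - 1} (log(k+2))^{-qA} for all k ≥ 1, with C depending only on q, A, B. -/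
set_option maxHeartbeats 1000000

open MeasureTheory Real Filter FourierTransform Topology
open scoped ENNReal NNReal

section helpers
open Real Finset

private lemma tele_inc {x p : ℝ} (hx : 1 ≤ x) (hp : 0 < p) :
    min 1 p / 2 * x ^ (p - 1) ≤ (x + 1) ^ p - x ^ p := by
  have hx0 : (0:ℝ) < x := lt_of_lt_of_le one_pos hx
  have hx1 : (0:ℝ) < x + 1 := by linarith
  have hxp : (0:ℝ) < x ^ (p-1) := rpow_pos_of_pos hx0 _
  rcases le_total p 1 with h1 | h1
  · -- p ≤ 1
    have hmin : min 1 p = p := min_eq_right h1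
    have hs : (-1:ℝ) ≤ -(1/(x+1)) := by
      have : 1/(x+1) ≤ 1 := by rw [div_le_one hx1]; linarith
      linarith
    have hber := rpow_one_add_le_one_add_mul_self hs hp.le h1
    have ht : (1:ℝ) + -(1/(x+1)) = x/(x+1) := by field_simp; ring
    rw [ht] at hber
    have hxsplit : x ^ p = (x+1) ^ p * (x/(x+1)) ^ p := by
      rw [← mul_rpow hx1.le (by positivity)]
      congr 1; field_simp
    have h2 : (x+1) ^ p - x ^ p ≥ (x+1) ^ p * (p/(x+1)) := by
      rw [hxsplit]
      have hm := mul_le_mul_of_nonneg_left hber (rpow_pos_of_pos hx1 p).le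
      have key : (x+1)^p * (1 + p * -(1/(x+1))) = (x+1)^p - (x+1)^p * (p/(x+1)) := by
        field_simp; ring
      linarith [key ▸ hm]
    have h3 : (x+1) ^ p * (p/(x+1)) = p * (x+1) ^ (p-1) := by
      rw [rpow_sub hx1, rpow_one]; ring
    have h4 : (2*x) ^ (p-1) ≤ (x+1) ^ (p-1) :=
      rpow_le_rpow_of_nonpos hx1 (by linarith) (by linarith)
    have h5 : (2*x) ^ (p-1) = 2 ^ (p-1) * x ^ (p-1) := mul_rpow (by norm_num) hx0.le
    have h6 : (2:ℝ) ^ (-1:ℝ) ≤ 2 ^ (p-1) :=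
      rpow_le_rpow_of_exponent_le (by norm_num) (by linarith)
    rw [rpow_neg_one] at h6
    rw [hmin]
    have hfin : p/2 * x ^ (p-1) ≤ p * (x+1)^(p-1) := by
      have : (2:ℝ)⁻¹ * x^(p-1) ≤ (x+1)^(p-1) := by
        calc (2:ℝ)⁻¹ * x^(p-1) ≤ 2^(p-1) * x^(p-1) :=
              mul_le_mul_of_nonneg_right h6 hxp.le
          _ = (2*x)^(p-1) := h5.symm
          _ ≤ (x+1)^(p-1) := h4
      nlinarith
    linarith [h3 ▸ h2]
  · -- 1 ≤ p
    have hmin : min 1 p = 1 := min_eq_left h1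
    have hs : (-1:ℝ) ≤ 1/x := by
      have : (0:ℝ) ≤ 1/x := by positivity
      linarith
    have hber := one_add_mul_self_le_rpow_one_add hs h1
    have hxsplit : (x+1) ^ p = x ^ p * (1 + 1/x) ^ p := by
      rw [← mul_rpow hx0.le (by positivity)]
      congr 1; field_simp
    have h2 : x ^ p * (1 + p * (1/x)) ≤ (x+1) ^ p := by
      rw [hxsplit]
      exact mul_le_mul_of_nonneg_left hber (rpow_pos_of_pos hx0 p).le
    have h3 : x ^ p * (p * (1/x)) = p * x ^ (p-1) := by
      rw [rpow_sub hx0, rpow_one]; ring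
    rw [hmin]
    nlinarith [rpow_pos_of_pos hx0 p]

private lemma tele_dec {x r : ℝ} (hx : 1 ≤ x) (hr : 0 < r) :
    min 1 r * (x + 1) ^ (-(r+1)) ≤ x ^ (-r) - (x + 1) ^ (-r) := by
  have hx0 : (0:ℝ) < x := lt_of_lt_of_le one_pos hx
  have hx1 : (0:ℝ) < x + 1 := by linarith
  have ht0 : (0:ℝ) < x/(x+1) := by positivity
  have ht1 : x/(x+1) ≤ 1 := by rw [div_le_one hx1]; linarith
  have hxr := rpow_pos_of_pos hx0 r
  have hx1r := rpow_pos_of_pos hx1 r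
  have hsplit : (x+1) ^ (-r) = x ^ (-r) * (x/(x+1)) ^ r := by
    rw [div_rpow hx0.le hx1.le, rpow_neg hx0.le, rpow_neg hx1.le]
    field_simp
  -- 1 - t^r ≥ min 1 r / (x+1)
  have hbound : min 1 r * (1/(x+1)) ≤ 1 - (x/(x+1)) ^ r := by
    rcases le_total r 1 with h1 | h1
    · have hmin : min 1 r = r := min_eq_right h1
      have hs : (-1:ℝ) ≤ -(1/(x+1)) := by
        have : 1/(x+1) ≤ 1 := by rw [div_le_one hx1]; linarith
        linarith
      have hber := rpow_one_add_le_one_add_mul_self hs hr.le h1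
      have ht : (1:ℝ) + -(1/(x+1)) = x/(x+1) := by field_simp; ring
      rw [ht] at hber
      rw [hmin]; linarith
    · have hmin : min 1 r = 1 := min_eq_left h1
      have h2 : (x/(x+1)) ^ r ≤ (x/(x+1)) ^ (1:ℝ) :=
        rpow_le_rpow_of_exponent_ge ht0 ht1 h1
      rw [rpow_one] at h2
      rw [hmin]
      have : 1 - x/(x+1) = 1/(x+1) := by field_simp; ring
      linarith
  have hmono : (x+1) ^ (-r) ≤ x ^ (-r) :=
    rpow_le_rpow_of_nonpos hx0 (by linarith) (by linarith)
  have hxnr := rpow_pos_of_pos hx0 (-r)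
  have hkey : x ^ (-r) - (x+1) ^ (-r) = x ^ (-r) * (1 - (x/(x+1))^r) := by
    rw [hsplit]; ring
  have hstep : x ^ (-r) * (min 1 r * (1/(x+1))) ≤ x ^ (-r) * (1 - (x/(x+1))^r) :=
    mul_le_mul_of_nonneg_left hbound hxnr.le
  have hlast : min 1 r * (x+1) ^ (-(r+1)) ≤ x ^ (-r) * (min 1 r * (1/(x+1))) := by
    have e1 : (x+1) ^ (-(r+1)) = (x+1) ^ (-r) * (1/(x+1)) := by
      rw [show -(r+1) = -r + (-1) by ring, rpow_add hx1, rpow_neg_one]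
      simp [one_div]
    rw [e1]
    have hmin0 : (0:ℝ) ≤ min 1 r := le_min zero_le_one hr.le
    have := mul_le_mul_of_nonneg_right hmono (by positivity : (0:ℝ) ≤ 1/(x+1))
    nlinarith
  calc min 1 r * (x+1)^(-(r+1)) ≤ x ^ (-r) * (min 1 r * (1/(x+1))) := hlast
    _ ≤ x ^ (-r) * (1 - (x/(x+1))^r) := hstep
    _ = x ^ (-r) - (x+1) ^ (-r) := hkey.symm

private lemma headsum {p : ℝ} (hp : 0 < p) (k : ℕ)
    (htele : ∀ x : ℝ, 1 ≤ x → min 1 p / 2 * x ^ (p - 1) ≤ (x + 1) ^ p - x ^ p) :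
    ∑ j ∈ Finset.range k, ((j:ℝ)+1)^(p-1) ≤ 2/(min 1 p) * (((k:ℝ)+1)^p) := by
  have hm : (0:ℝ) < min 1 p := lt_min one_pos hp
  have step : ∀ j : ℕ, ((j:ℝ)+1)^(p-1) ≤
      2/(min 1 p) * ((((j+1:ℕ):ℝ)+1)^p - (((j:ℕ):ℝ)+1)^p) := by
    intro j
    have hx : (1:ℝ) ≤ (j:ℝ)+1 := by have : (0:ℝ) ≤ j := Nat.cast_nonneg j; linarith
    have h := htele ((j:ℝ)+1) hx
    have e : (((j+1:ℕ):ℝ)+1) = ((j:ℝ)+1) + 1 := by push_cast; ring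
    rw [e]
    have e2 : ((j:ℝ)+1)^(p-1) = 2/(min 1 p) * (min 1 p / 2 * ((j:ℝ)+1)^(p-1)) := by
      field_simp
    rw [e2]
    exact mul_le_mul_of_nonneg_left h (by positivity)
  calc ∑ j ∈ Finset.range k, ((j:ℝ)+1)^(p-1)
      ≤ ∑ j ∈ Finset.range k, 2/(min 1 p) * ((((j+1:ℕ):ℝ)+1)^p - (((j:ℕ):ℝ)+1)^p) :=
        Finset.sum_le_sum fun j _ => step j
    _ = 2/(min 1 p) * ∑ j ∈ Finset.range k, ((((j+1:ℕ):ℝ)+1)^p - (((j:ℕ):ℝ)+1)^p) :=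
        (Finset.mul_sum _ _ _).symm
    _ = 2/(min 1 p) * ((((k:ℕ):ℝ)+1)^p - (((0:ℕ):ℝ)+1)^p) := by
        rw [Finset.sum_range_sub (fun j : ℕ => (((j:ℕ):ℝ)+1)^p)]
    _ ≤ 2/(min 1 p) * (((k:ℝ)+1)^p) := by
        have : (((0:ℕ):ℝ)+1)^p = 1 := by norm_num
        rw [this]
        have : (0:ℝ) ≤ 2/(min 1 p) := by positivity
        nlinarith

private lemma tailsum {r : ℝ} (hr : 0 < r) {k : ℕ} (hk : 1 ≤ k)
    (htele : ∀ x : ℝ, 1 ≤ x → min 1 r * (x + 1) ^ (-(r+1)) ≤ x ^ (-r) - (x + 1) ^ (-r)) :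
    Summable (fun j : ℕ => ((j:ℝ)+(k:ℝ)+1)^(-(r+1))) ∧
    ∑' j : ℕ, ((j:ℝ)+(k:ℝ)+1)^(-(r+1)) ≤ (min 1 r)⁻¹ * (k:ℝ)^(-r) := by
  have hm : (0:ℝ) < min 1 r := lt_min one_pos hr
  have hk1 : (1:ℝ) ≤ (k:ℝ) := by exact_mod_cast hk
  set g : ℕ → ℝ := fun j => ((j:ℝ)+(k:ℝ))^(-r) with hg
  have step : ∀ j : ℕ, ((j:ℝ)+(k:ℝ)+1)^(-(r+1)) ≤ (min 1 r)⁻¹ * (g j - g (j+1)) := by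
    intro j
    have hx : (1:ℝ) ≤ (j:ℝ)+(k:ℝ) := by
      have : (0:ℝ) ≤ j := Nat.cast_nonneg j
      linarith
    have h := htele ((j:ℝ)+(k:ℝ)) hx
    have e : g (j+1) = ((j:ℝ)+(k:ℝ)+1)^(-r) := by
      simp only [hg]; push_cast; ring_nf
    have e0 : g j = ((j:ℝ)+(k:ℝ))^(-r) := rfl
    have e2 : ((j:ℝ)+(k:ℝ)+1)^(-(r+1)) =
        (min 1 r)⁻¹ * (min 1 r * ((j:ℝ)+(k:ℝ)+1)^(-(r+1))) := by
      field_simp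
    rw [e2, e, e0]
    exact mul_le_mul_of_nonneg_left h (by positivity)
  have hbound : ∀ n : ℕ, ∑ j ∈ Finset.range n, ((j:ℝ)+(k:ℝ)+1)^(-(r+1)) ≤
      (min 1 r)⁻¹ * (k:ℝ)^(-r) := by
    intro n
    calc ∑ j ∈ Finset.range n, ((j:ℝ)+(k:ℝ)+1)^(-(r+1))
        ≤ ∑ j ∈ Finset.range n, (min 1 r)⁻¹ * (g j - g (j+1)) :=
          Finset.sum_le_sum fun j _ => step j
      _ = (min 1 r)⁻¹ * (g 0 - g n) := by
          rw [← Finset.mul_sum, Finset.sum_range_sub' g]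
      _ ≤ (min 1 r)⁻¹ * (k:ℝ)^(-r) := by
          have hg0 : g 0 = (k:ℝ)^(-r) := by simp [hg]
          have hgn : 0 ≤ g n := rpow_nonneg (by positivity) _
          rw [hg0]
          have : (0:ℝ) ≤ (min 1 r)⁻¹ := by positivity
          nlinarith
  have hnn : ∀ j : ℕ, 0 ≤ ((j:ℝ)+(k:ℝ)+1)^(-(r+1)) := fun j => rpow_nonneg (by positivity) _
  exact ⟨summable_of_sum_range_le hnn hbound, Real.tsum_le_of_sum_range_le hnn hbound⟩

private lemma main_est (q A B : ℝ) (hq : 1 < q) (hA0 : 0 < A) (hB0 : 0 < B) :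
    ∃ C : ℝ, ∀ k : ℕ, 1 ≤ k →
      (Summable fun j : ℕ =>
        ((((j : ℝ) + k + 1) ^ (-(1 + B)) * (Real.log ((j : ℝ) + k + 2)) ^ (-A)) ^ q) *
          ((j : ℝ) + 1) ^ (q - 2)) ∧
      ∑' j : ℕ, ((((j : ℝ) + k + 1) ^ (-(1 + B)) * (Real.log ((j : ℝ) + k + 2)) ^ (-A)) ^ q) *
          ((j : ℝ) + 1) ^ (q - 2) ≤
        C * (k : ℝ) ^ (-(B * q) - 1) * (Real.log ((k : ℝ) + 2)) ^ (-(q * A)) := by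
  have hq0 : (0:ℝ) < q := lt_trans one_pos hq
  have hp : (0:ℝ) < q - 1 := by linarith
  have hBq : (0:ℝ) < B * q := mul_pos hB0 hq0
  have hqA : (0:ℝ) < q * A := mul_pos hq0 hA0
  refine ⟨2/(min 1 (q-1)) * 2 ^ q + 1, fun k hk => ?_⟩
  set K : ℝ := (k : ℝ) with hKdef
  have hK1 : (1:ℝ) ≤ K := by rw [hKdef]; exact_mod_cast hk
  have hK0 : (0:ℝ) < K := lt_of_lt_of_le one_pos hK1
  set L : ℝ := Real.log (K + 2) with hLdef
  have hL : (0:ℝ) < L := Real.log_pos (by linarith)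
  set F : ℝ → ℝ := fun u =>
    (((u + K + 1) ^ (-(1 + B)) * (Real.log (u + K + 2)) ^ (-A)) ^ q) * (u + 1) ^ (q - 2)
    with hFdef
  -- basic facts about F
  have hFeq : ∀ u : ℝ, 0 ≤ u → F u =
      (u + K + 1) ^ (-((1+B)*q)) * (Real.log (u + K + 2)) ^ (-(q*A)) * (u + 1) ^ (q - 2) := by
    intro u hu
    have hx : (0:ℝ) < u + K + 1 := by linarith
    have hy : (0:ℝ) ≤ Real.log (u + K + 2) := Real.log_nonneg (by linarith)
    simp only [hFdef]
    rw [mul_rpow (rpow_nonneg hx.le _) (rpow_nonneg hy _),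
      ← rpow_mul hx.le, ← rpow_mul hy,
      show (-(1+B))*q = -((1+B)*q) by ring, show (-A)*q = -(q*A) by ring]
  have hFnn : ∀ u : ℝ, 0 ≤ u → 0 ≤ F u := by
    intro u hu
    have hx : (0:ℝ) < u + K + 1 := by linarith
    have hy : (0:ℝ) ≤ Real.log (u + K + 2) := Real.log_nonneg (by linarith)
    exact mul_nonneg (rpow_nonneg (mul_nonneg (rpow_nonneg hx.le _) (rpow_nonneg hy _)) _)
      (rpow_nonneg (by linarith) _)
  have hlogbound : ∀ u : ℝ, 0 ≤ u →
      (Real.log (u + K + 2)) ^ (-(q*A)) ≤ L ^ (-(q*A)) := by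
    intro u hu
    exact rpow_le_rpow_of_nonpos hL
      (Real.log_le_log (by linarith) (by linarith)) (by linarith)
  -- bound 2 : F u ≤ L^(-(q*A)) * (u+1)^(-(B*q+2))
  have hF2 : ∀ u : ℝ, 0 ≤ u → F u ≤ L ^ (-(q*A)) * (u + 1) ^ (-(B*q+2)) := by
    intro u hu
    have hu1 : (0:ℝ) < u + 1 := by linarith
    have hx : (0:ℝ) < u + K + 1 := by linarith
    have h1 : (u + K + 1) ^ (-((1+B)*q)) ≤ (u + 1) ^ (-((1+B)*q)) :=
      rpow_le_rpow_of_nonpos hu1 (by linarith) (by nlinarith)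
    have h2 := hlogbound u hu
    rw [hFeq u hu]
    calc (u + K + 1) ^ (-((1+B)*q)) * (Real.log (u + K + 2)) ^ (-(q*A)) * (u + 1) ^ (q - 2)
        ≤ (u + 1) ^ (-((1+B)*q)) * L ^ (-(q*A)) * (u + 1) ^ (q - 2) := by
          apply mul_le_mul_of_nonneg_right _ (rpow_nonneg hu1.le _)
          exact mul_le_mul h1 h2 (rpow_nonneg (Real.log_nonneg (by linarith)) _)
            (rpow_nonneg hu1.le _)
      _ = L ^ (-(q*A)) * (u + 1) ^ (-(B*q+2)) := by
          have e : (u+1) ^ (-((1+B)*q)) * (u+1) ^ (q-2) = (u+1) ^ (-(B*q+2)) := by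
            rw [← rpow_add hu1, show -((1+B)*q) + (q-2) = -(B*q+2) by ring]
          rw [← e]; ring
  -- bound 1 : F u ≤ K^(-((1+B)*q)) * L^(-(q*A)) * (u+1)^(q-2)
  have hF1 : ∀ u : ℝ, 0 ≤ u →
      F u ≤ K ^ (-((1+B)*q)) * L ^ (-(q*A)) * (u + 1) ^ (q - 2) := by
    intro u hu
    have hu1 : (0:ℝ) < u + 1 := by linarith
    have hx : (0:ℝ) < u + K + 1 := by linarith
    have h1 : (u + K + 1) ^ (-((1+B)*q)) ≤ K ^ (-((1+B)*q)) :=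
      rpow_le_rpow_of_nonpos hK0 (by linarith) (by nlinarith)
    have h2 := hlogbound u hu
    rw [hFeq u hu]
    apply mul_le_mul_of_nonneg_right _ (rpow_nonneg hu1.le _)
    exact mul_le_mul h1 h2 (rpow_nonneg (Real.log_nonneg (by linarith)) _)
      (rpow_nonneg hK0.le _)
  -- the sequence
  have hTeqF : ∀ j : ℕ,
      ((((j : ℝ) + K + 1) ^ (-(1 + B)) * (Real.log ((j : ℝ) + K + 2)) ^ (-A)) ^ q) *
        ((j : ℝ) + 1) ^ (q - 2) = F (j : ℝ) := fun j => rfl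
  -- summability
  have hsum0 : Summable (fun n : ℕ => ((n:ℝ)) ^ (-(B*q+2))) :=
    Real.summable_nat_rpow.mpr (by linarith)
  have hsum1 : Summable (fun n : ℕ => ((n:ℝ)+1) ^ (-(B*q+2))) := by
    have := (summable_nat_add_iff 1).mpr hsum0
    simpa using this
  have hT : Summable (fun j : ℕ => F (j : ℝ)) := by
    apply Summable.of_nonneg_of_le (fun j => hFnn _ (Nat.cast_nonneg j))
      (fun j => hF2 _ (Nat.cast_nonneg j))
    exact hsum1.mul_left _
  constructor
  · exact hT
  -- the tsum bound
  have hsplit := hT.sum_add_tsum_nat_add k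
  -- head bound
  have hm : (0:ℝ) < min 1 (q-1) := lt_min one_pos hp
  have hhead : ∑ i ∈ Finset.range k, F (i:ℝ) ≤
      (2/(min 1 (q-1)) * 2 ^ q) * K ^ (-(B*q) - 1) * L ^ (-(q*A)) := by
    have step1 : ∑ i ∈ Finset.range k, F (i:ℝ) ≤
        ∑ i ∈ Finset.range k, (K ^ (-((1+B)*q)) * L ^ (-(q*A))) * ((i:ℝ) + 1) ^ (q - 2) := by
      apply Finset.sum_le_sum
      intro i _
      have := hF1 (i:ℝ) (Nat.cast_nonneg i)
      linarith [this]
    have step2 : ∑ i ∈ Finset.range k, ((i:ℝ) + 1) ^ (q - 2) ≤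
        2/(min 1 (q-1)) * ((K+1) ^ (q-1)) := by
      have := headsum hp k (fun x hx => tele_inc hx hp)
      simpa [show (q-1) - 1 = q - 2 by ring] using this
    have step3 : (K+1) ^ (q-1) ≤ 2 ^ q * K ^ (q-1) := by
      calc (K+1) ^ (q-1) ≤ (2*K) ^ (q-1) :=
            rpow_le_rpow (by linarith) (by linarith) (by linarith)
        _ = 2 ^ (q-1) * K ^ (q-1) := mul_rpow (by norm_num) hK0.le
        _ ≤ 2 ^ q * K ^ (q-1) := by
            apply mul_le_mul_of_nonneg_right _ (rpow_nonneg hK0.le _)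
            exact rpow_le_rpow_of_exponent_le (by norm_num) (by linarith)
    have hcnn : (0:ℝ) ≤ K ^ (-((1+B)*q)) * L ^ (-(q*A)) := by positivity
    calc ∑ i ∈ Finset.range k, F (i:ℝ)
        ≤ (K ^ (-((1+B)*q)) * L ^ (-(q*A))) * ∑ i ∈ Finset.range k, ((i:ℝ) + 1) ^ (q - 2) := by
          rw [← Finset.mul_sum] at step1
          exact step1
      _ ≤ (K ^ (-((1+B)*q)) * L ^ (-(q*A))) * (2/(min 1 (q-1)) * (2 ^ q * K ^ (q-1))) := by
          apply mul_le_mul_of_nonneg_left _ hcnn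
          calc ∑ i ∈ Finset.range k, ((i:ℝ) + 1) ^ (q - 2)
              ≤ 2/(min 1 (q-1)) * ((K+1) ^ (q-1)) := step2
            _ ≤ 2/(min 1 (q-1)) * (2 ^ q * K ^ (q-1)) :=
                mul_le_mul_of_nonneg_left step3 (by positivity)
      _ = (2/(min 1 (q-1)) * 2 ^ q) * (K ^ (-((1+B)*q)) * K ^ (q-1)) * L ^ (-(q*A)) := by
          ring
      _ = (2/(min 1 (q-1)) * 2 ^ q) * K ^ (-(B*q) - 1) * L ^ (-(q*A)) := by
          rw [← rpow_add hK0, show -((1+B)*q) + (q-1) = -(B*q) - 1 by ring]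
  -- tail bound
  have hr0 : (0:ℝ) < B*q + 1 := by linarith
  have htail : ∑' j : ℕ, F ((j + k : ℕ) : ℝ) ≤ 1 * K ^ (-(B*q) - 1) * L ^ (-(q*A)) := by
    obtain ⟨hts, htb⟩ := tailsum hr0 hk (fun x hx => tele_dec hx hr0)
    have hle : ∀ j : ℕ, F ((j + k : ℕ) : ℝ) ≤
        L ^ (-(q*A)) * ((j:ℝ) + K + 1) ^ (-(B*q+1+1)) := by
      intro j
      have hcast : ((j + k : ℕ) : ℝ) = (j:ℝ) + K := by push_cast; ring
      rw [hcast]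
      have h2 := hF2 ((j:ℝ) + K) (by positivity)
      have hjK : (0:ℝ) < (j:ℝ) + K + 1 := by positivity
      calc F ((j:ℝ) + K) ≤ L ^ (-(q*A)) * ((j:ℝ) + K + 1) ^ (-(B*q+2)) := by
            simpa [add_assoc] using h2
        _ = L ^ (-(q*A)) * ((j:ℝ) + K + 1) ^ (-(B*q+1+1)) := by
            rw [show -(B*q+2) = -(B*q+1+1) by ring]
    have hsummand : Summable (fun j : ℕ =>
        L ^ (-(q*A)) * ((j:ℝ) + K + 1) ^ (-(B*q+1+1))) := hts.mul_left _
    have hTs : Summable (fun j : ℕ => F ((j + k : ℕ) : ℝ)) :=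
      (summable_nat_add_iff k).mpr hT
    calc ∑' j : ℕ, F ((j + k : ℕ) : ℝ)
        ≤ ∑' j : ℕ, L ^ (-(q*A)) * ((j:ℝ) + K + 1) ^ (-(B*q+1+1)) :=
          Summable.tsum_le_tsum hle hTs hsummand
      _ = L ^ (-(q*A)) * ∑' j : ℕ, ((j:ℝ) + K + 1) ^ (-(B*q+1+1)) := tsum_mul_left
      _ ≤ L ^ (-(q*A)) * ((min 1 (B*q+1))⁻¹ * K ^ (-(B*q+1))) := by
          apply mul_le_mul_of_nonneg_left _ (rpow_nonneg hL.le _)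
          exact htb
      _ = 1 * K ^ (-(B*q) - 1) * L ^ (-(q*A)) := by
          rw [min_eq_left (by linarith : (1:ℝ) ≤ B*q+1), inv_one,
            show -(B*q+1) = -(B*q) - 1 by ring]
          ring
  -- combine
  have hfinal : ∑' j : ℕ, F ((j:ℕ) : ℝ) ≤
      (2/(min 1 (q-1)) * 2 ^ q + 1) * K ^ (-(B*q) - 1) * L ^ (-(q*A)) := by
    rw [← hsplit]
    calc (∑ i ∈ Finset.range k, F (i:ℝ)) + ∑' j : ℕ, F ((j + k : ℕ) : ℝ)
        ≤ (2/(min 1 (q-1)) * 2 ^ q) * K ^ (-(B*q) - 1) * L ^ (-(q*A))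
            + 1 * K ^ (-(B*q) - 1) * L ^ (-(q*A)) := add_le_add hhead htail
      _ = (2/(min 1 (q-1)) * 2 ^ q + 1) * K ^ (-(B*q) - 1) * L ^ (-(q*A)) := by ring
  exact hfinal

end helpers

/-- tail estimate Σ_{j≥k} c_j^q (j-k+1)^{q-2} ≤ C k^{-Bq-1} log(k+2)^{-qA}
for c_j = (j+1)^{-(1+B)} log(j+2)^{-A}, B = (1/q)/(β-1/q'), A = β/(β-1/q'). -/
theorem stmt14 (q q' β A B : ℝ) (hq : 1 < q) (hconj : 1/q + 1/q' = 1) (hβ : 1/q' < β)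
    (hA : A = β / (β - 1/q')) (hB : B = (1/q) / (β - 1/q')) :
    ∃ C : ℝ, ∀ k : ℕ, 1 ≤ k →
      (Summable fun j : ℕ =>
        ((((j : ℝ) + k + 1) ^ (-(1 + B)) * (Real.log ((j : ℝ) + k + 2)) ^ (-A)) ^ q) *
          ((j : ℝ) + 1) ^ (q - 2)) ∧
      ∑' j : ℕ, ((((j : ℝ) + k + 1) ^ (-(1 + B)) * (Real.log ((j : ℝ) + k + 2)) ^ (-A)) ^ q) *
          ((j : ℝ) + 1) ^ (q - 2) ≤
        C * (k : ℝ) ^ (-(B * q) - 1) * (Real.log ((k : ℝ) + 2)) ^ (-(q * A)) := by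
  have hq0 : (0:ℝ) < q := lt_trans one_pos hq
  have h1q : 1/q < 1 := by rw [div_lt_one hq0]; exact hq
  have hq' : 0 < 1/q' := by linarith
  have hd : (0:ℝ) < β - 1/q' := by linarith
  have hB0 : 0 < B := by rw [hB]; exact div_pos (by positivity) hd
  have hA0 : 0 < A := by rw [hA]; exact div_pos (by linarith) hd
  exact main_est q A B hq hA0 hB0
end

section
/- Let p = q = 1, α, β > 0 with αβ = 1. Then there is a constant C such that for every f : ℝ → ℂ with ‖f(x)(1+|x|)^α‖_{L¹} + ‖f̂(ξ)|ξ|^β‖_{L¹} < ∞, one has Σ_{n∈ℤ} |f(n)| ≤ C(‖f(x)(1+|x|)^α‖_{L¹} + ‖f̂(ξ)|ξ|^β‖_{L¹}). -/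
open MeasureTheory Real Filter FourierTransform Topology
open scoped ENNReal NNReal

lemma exists_plateau : ∃ (Φ : ℝ → ℂ) (M : ℝ), 1 ≤ M ∧
    Continuous Φ ∧ Continuous (𝓕 Φ) ∧ Integrable Φ ∧
    (∀ ξ : ℝ, ‖Φ ξ‖ ≤ 1) ∧ (∀ ξ : ℝ, ‖1 - Φ ξ‖ ≤ 1) ∧
    (∀ ξ : ℝ, |ξ| ≤ 1 → Φ ξ = 1) ∧ (∀ ξ : ℝ, 2 ≤ |ξ| → Φ ξ = 0) ∧
    (∀ y : ℝ, ‖𝓕 Φ y‖ ≤ M) ∧ (∀ y : ℝ, y ^ 2 * ‖𝓕 Φ y‖ ≤ M) := by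
  set b : ContDiffBump (0 : ℝ) := ⟨1, 2, one_pos, one_lt_two⟩ with hb
  have hbcd : ContDiff ℝ ((2:ℕ∞)) (b : ℝ → ℝ) := b.contDiff
  set Φ : ℝ → ℂ := fun ξ => (b ξ : ℂ) with hΦ
  have hΦcd : ContDiff ℝ ((2:ℕ∞)) Φ := Complex.ofRealCLM.contDiff.comp hbcd
  have hΦc : Continuous Φ := hΦcd.continuous
  have hΦcs : HasCompactSupport Φ := by
    have : Φ = (fun r : ℝ => (r : ℂ)) ∘ (b : ℝ → ℝ) := rfl
    rw [this]
    exact b.hasCompactSupport.comp_left (by simp)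
  have hΦi : Integrable Φ := hΦc.integrable_of_hasCompactSupport hΦcs
  have hFc : Continuous (𝓕 Φ) :=
    VectorFourier.fourierIntegral_continuous Real.continuous_fourierChar
      (by exact continuous_inner) hΦi
  have hint : ∀ (k n : ℕ), (k : ℕ∞) ≤ 0 → (n : ℕ∞) ≤ 2 →
      Integrable (fun v : ℝ => ‖v‖ ^ k * ‖iteratedFDeriv ℝ n Φ v‖) := by
    intro k n _ hn
    apply Continuous.integrable_of_hasCompactSupport
    · exact (continuous_norm.pow k).mul (hΦcd.continuous_iteratedFDeriv (by exact_mod_cast hn)).norm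
    · exact ((hΦcs.iteratedFDeriv n).norm).mul_left
  have key : ∀ y : ℝ, y ^ 2 * ‖𝓕 Φ y‖ ≤
      2 ^ 2 * ∑ x ∈ Finset.range 3, ∫ v : ℝ, ‖iteratedFDeriv ℝ x Φ v‖ := by
    intro y
    have := Real.pow_mul_norm_iteratedFDeriv_fourier_le
      (K := 0) (N := 2) hΦcd hint (k := 0) (n := 2) le_rfl le_rfl y
    simpa [Real.norm_eq_abs, _root_.sq_abs] using this
  set M₂ : ℝ := 2 ^ 2 * ∑ x ∈ Finset.range 3, ∫ v : ℝ, ‖iteratedFDeriv ℝ x Φ v‖ with hM₂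
  set M₀ : ℝ := ∫ ξ : ℝ, ‖Φ ξ‖ with hM₀
  refine ⟨Φ, max 1 (max M₀ M₂), le_max_left _ _, hΦc, hFc, hΦi, ?_, ?_, ?_, ?_, ?_, ?_⟩
  · intro ξ
    have : ‖Φ ξ‖ = |b ξ| := Complex.norm_real _
    rw [this, _root_.abs_of_nonneg b.nonneg]
    exact b.le_one
  · intro ξ
    have h1 : (1 : ℂ) - Φ ξ = ((1 - b ξ : ℝ) : ℂ) := by push_cast [hΦ]; ring
    rw [h1, Complex.norm_real, Real.norm_eq_abs,
      _root_.abs_of_nonneg (by linarith [b.le_one (x := ξ)])]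
    linarith [b.nonneg (x := ξ)]
  · intro ξ hξ
    have : b ξ = 1 := b.one_of_mem_closedBall (by simpa [Real.dist_eq] using hξ)
    simp [hΦ, this]
  · intro ξ hξ
    have : b ξ = 0 := b.zero_of_le_dist (by simpa [Real.dist_eq] using hξ)
    simp [hΦ, this]
  · intro y
    refine le_trans ?_ ((le_max_left M₀ M₂).trans (le_max_right _ _))
    exact VectorFourier.norm_fourierIntegral_le_integral_norm _ volume _ Φ y
  · intro y
    exact (key y).trans ((le_max_right M₀ M₂).trans (le_max_right _ _))

lemma key_bound_s16 (Φ : ℝ → ℂ) (hΦc : Continuous Φ) (hΦi : Integrable Φ)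
    (hΦ1 : ∀ ξ : ℝ, ‖Φ ξ‖ ≤ 1) (hΦ1' : ∀ ξ : ℝ, ‖1 - Φ ξ‖ ≤ 1)
    (hΦeq : ∀ ξ : ℝ, |ξ| ≤ 1 → Φ ξ = 1) (hΦ0 : ∀ ξ : ℝ, 2 ≤ |ξ| → Φ ξ = 0)
    (hFΦc : Continuous (𝓕 Φ))
    (f : ℝ → ℂ) (hfc : Continuous f) (hfi : Integrable f) (hFi : Integrable (𝓕 f))
    (hFc : Continuous (𝓕 f))
    (n : ℤ) (Δ : ℝ) (hΔ : 1 ≤ Δ) :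
    ‖f n‖ ≤ (∫ ξ : ℝ, ‖𝓕 f ξ‖ * ({ξ : ℝ | Δ < |ξ|}.indicator (fun _ => (1:ℝ)) ξ))
      + ∫ x : ℝ, ‖f x‖ * (Δ * ‖𝓕 Φ (Δ * (x - n))‖) := by
  have hΔ0 : 0 < Δ := lt_of_lt_of_le one_pos hΔ
  set g : ℝ → ℂ := fun ξ => 𝐞 ((n : ℝ) * ξ) • Φ (Δ⁻¹ * ξ) with hg
  have hgc : Continuous g := by
    apply Continuous.smul
    · exact continuous_subtype_val.comp (Real.continuous_fourierChar.comp (continuous_const.mul continuous_id))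
    · exact hΦc.comp (continuous_const.mul continuous_id)
  have hgcs : HasCompactSupport g := by
    apply HasCompactSupport.intro (isCompact_closedBall (0:ℝ) (2*Δ))
    intro x hx
    simp only [Metric.mem_closedBall, Real.dist_eq, sub_zero, not_le] at hx
    have h2 : Φ (Δ⁻¹ * x) = 0 := by
      apply hΦ0
      rw [abs_mul, abs_of_pos (inv_pos.2 hΔ0)]
      calc (2:ℝ) = Δ⁻¹ * (2 * Δ) := by field_simp
      _ ≤ Δ⁻¹ * |x| := by
        apply mul_le_mul_of_nonneg_left hx.le (inv_nonneg.2 hΔ0.le)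
    simp [hg, h2]
  have hgi : Integrable g := hgc.integrable_of_hasCompactSupport hgcs
  -- compute 𝓕 g
  have hFg : ∀ x : ℝ, 𝓕 g x = Δ • 𝓕 Φ (Δ * (x - n)) := by
    intro x
    have h1 : 𝓕 g x = ∫ ξ : ℝ, 𝐞 (-(ξ * (x - (n:ℝ)))) • Φ (Δ⁻¹ * ξ) := by
      rw [Real.fourier_real_eq]
      congr 1 with ξ
      rw [hg, smul_smul, ← AddChar.map_add_eq_mul]
      congr 2
      ring
    have h2 := MeasureTheory.Measure.integral_comp_mul_left
      (fun ξ : ℝ => 𝐞 (-(ξ * (x - (n:ℝ)))) • Φ (Δ⁻¹ * ξ)) Δ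
    have h3 : (∫ u : ℝ, 𝐞 (-(Δ * u * (x - (n:ℝ)))) • Φ (Δ⁻¹ * (Δ * u)))
        = 𝓕 Φ (Δ * (x - n)) := by
      rw [Real.fourier_real_eq]
      congr 1 with u
      have h4 : Δ⁻¹ * (Δ * u) = u := by field_simp
      rw [h4]
      congr 2
      ring
    simp only [h3] at h2
    rw [h1, h2, abs_of_pos (inv_pos.2 hΔ0), smul_smul,
      mul_inv_cancel₀ hΔ0.ne', one_smul]
  -- multiplication formula
  have hmult : (∫ ξ : ℝ, 𝓕 f ξ • g ξ) = ∫ x : ℝ, f x • 𝓕 g x := by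
    have := VectorFourier.integral_fourierIntegral_smul_eq_flip (L := innerₗ ℝ)
      Real.continuous_fourierChar (by exact continuous_inner) hfi hgi
    simp at this ⊢; exact this
  -- Fourier inversion
  have hinv : f n = ∫ ξ : ℝ, 𝐞 ((n : ℝ) * ξ) • 𝓕 f ξ := by
    have h1 : 𝓕⁻ (𝓕 f) = f := hfc.fourierInv_fourier_eq hfi hFi
    have h2 : 𝓕⁻ (𝓕 f) (n : ℝ) = ∫ ξ : ℝ, 𝐞 (ξ * (n:ℝ)) • 𝓕 f ξ :=
      by rw [Real.fourierInv_eq]; congr 1 with ξ; congr 2; simp [mul_comm]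
    calc f ↑n = 𝓕⁻ (𝓕 f) ↑n := by rw [h1]
    _ = ∫ ξ : ℝ, 𝐞 (ξ * (n:ℝ)) • 𝓕 f ξ := h2
    _ = ∫ ξ : ℝ, 𝐞 ((n:ℝ) * ξ) • 𝓕 f ξ := by
        congr 1 with ξ
        rw [mul_comm]
  -- integrands
  have hint1 : Integrable (fun ξ : ℝ => 𝐞 ((n : ℝ) * ξ) • 𝓕 f ξ) := by
    have B : Continuous fun p : ℝ × ℝ => (-(innerₗ ℝ)) p.1 p.2 := by
      exact (continuous_inner (𝕜 := ℝ) (E := ℝ)).neg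
    have := (VectorFourier.fourierIntegral_convergent_iff (E := ℂ)
      Real.continuous_fourierChar B ((n:ℝ))).2 hFi
    apply this.congr
    filter_upwards with ξ
    have : (-(innerₗ ℝ)) ξ ((n:ℝ)) = -(ξ * (n:ℝ)) := by
      simp [real_inner_comm]; ring
    rw [this]
    congr 2
    ring
  have hint2 : Integrable (fun ξ : ℝ => 𝓕 f ξ • g ξ) := by
    apply hFi.mono ((hFc.smul hgc).aestronglyMeasurable)
    filter_upwards with ξ
    rw [Pi.smul_apply', smul_eq_mul, norm_mul]
    calc ‖𝓕 f ξ‖ * ‖g ξ‖ ≤ ‖𝓕 f ξ‖ * 1 := by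
          apply mul_le_mul_of_nonneg_left _ (norm_nonneg _)
          simp only [hg, Circle.norm_smul]
          exact hΦ1 (Δ⁻¹ * ξ)
    _ = ‖𝓕 f ξ‖ := mul_one _
  have hIndInt : Integrable (fun ξ : ℝ => ‖𝓕 f ξ‖ * ({ξ : ℝ | Δ < |ξ|}.indicator (fun _ => (1:ℝ)) ξ)) := by
    apply (hFi.norm).mono'
    · apply AEStronglyMeasurable.mul hFc.norm.aestronglyMeasurable
      exact (Measurable.indicator measurable_const
        (measurableSet_lt measurable_const continuous_abs.measurable)).aestronglyMeasurable
    · filter_upwards with ξ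
      rw [Real.norm_eq_abs, _root_.abs_of_nonneg
        (mul_nonneg (norm_nonneg _) (Set.indicator_nonneg (fun _ _ => zero_le_one) _))]
      by_cases h : Δ < |ξ| <;>
        simp [Set.indicator_apply, h, norm_nonneg]
  -- main estimate
  have hsplit : ‖f n‖ ≤ ‖(∫ ξ : ℝ, 𝐞 ((n : ℝ) * ξ) • 𝓕 f ξ) - ∫ ξ : ℝ, 𝓕 f ξ • g ξ‖
      + ‖∫ x : ℝ, f x • 𝓕 g x‖ := by
    rw [hinv, ← hmult]
    calc ‖∫ ξ : ℝ, 𝐞 ((n : ℝ) * ξ) • 𝓕 f ξ‖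
        = ‖((∫ ξ : ℝ, 𝐞 ((n : ℝ) * ξ) • 𝓕 f ξ) - ∫ ξ : ℝ, 𝓕 f ξ • g ξ)
            + ∫ ξ : ℝ, 𝓕 f ξ • g ξ‖ := by rw [sub_add_cancel]
    _ ≤ _ := norm_add_le _ _
  refine hsplit.trans (add_le_add ?_ ?_)
  · rw [← integral_sub hint1 hint2]
    refine (norm_integral_le_integral_norm _).trans ?_
    apply integral_mono_of_nonneg (ae_of_all _ fun ξ => norm_nonneg _) hIndInt
    filter_upwards with ξ
    have heq : 𝐞 ((n : ℝ) * ξ) • 𝓕 f ξ - 𝓕 f ξ • g ξ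
        = 𝐞 ((n : ℝ) * ξ) • (𝓕 f ξ * (1 - Φ (Δ⁻¹ * ξ))) := by
      simp only [hg, Circle.smul_def, smul_eq_mul]
      ring
    rw [heq, Circle.norm_smul, norm_mul]
    by_cases h : Δ < |ξ|
    · have : {ξ : ℝ | Δ < |ξ|}.indicator (fun _ => (1:ℝ)) ξ = 1 := by
        simp [Set.indicator_apply, h]
      rw [this, mul_one]
      exact (mul_le_mul_of_nonneg_left (hΦ1' _) (norm_nonneg _)).trans
        (le_of_eq (mul_one _))
    · have h1 : Φ (Δ⁻¹ * ξ) = 1 := by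
        apply hΦeq
        rw [abs_mul, abs_of_pos (inv_pos.2 hΔ0)]
        rw [not_lt] at h
        calc Δ⁻¹ * |ξ| ≤ Δ⁻¹ * Δ := by
              apply mul_le_mul_of_nonneg_left h (inv_nonneg.2 hΔ0.le)
        _ = 1 := inv_mul_cancel₀ hΔ0.ne'
      have : {ξ : ℝ | Δ < |ξ|}.indicator (fun _ => (1:ℝ)) ξ = 0 := by
        simp [Set.indicator_apply, h]
      simp [h1, this]
  · refine (norm_integral_le_integral_norm _).trans ?_
    apply le_of_eq
    congr 1 with x
    rw [hFg x, norm_smul, norm_smul, Real.norm_eq_abs, abs_of_pos hΔ0]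

lemma count_bound (α β : ℝ) (hα : 0 < α) (hβ : 0 < β) (hαβ : α * β = 1)
    (s : Finset ℤ) (ξ : ℝ) :
    ∑ n ∈ s, ({η : ℝ | (1 + |(n:ℝ)|) ^ α < |η|}.indicator (fun _ => (1:ℝ)) ξ)
      ≤ 5 * |ξ| ^ β := by
  classical
  set P : ℤ → Prop := fun n => (1 + |(n:ℝ)|) ^ α < |ξ| with hP
  have hsum : ∑ n ∈ s, ({η : ℝ | (1 + |(n:ℝ)|) ^ α < |η|}.indicator (fun _ => (1:ℝ)) ξ)
      = ((s.filter P).card : ℝ) := by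
    rw [Finset.card_filter]
    push_cast
    apply Finset.sum_congr rfl
    intro n _
    by_cases h : P n <;> simp [Set.indicator_apply, h, hP]
  rw [hsum]
  by_cases hne : (s.filter P).Nonempty
  swap
  · rw [Finset.not_nonempty_iff_eq_empty.1 hne]
    simp
    positivity
  obtain ⟨n₀, hn₀⟩ := hne
  have hn₀P : P n₀ := (Finset.mem_filter.1 hn₀).2
  have hξ1 : 1 < |ξ| :=
    lt_of_le_of_lt (Real.one_le_rpow (le_add_of_nonneg_right (abs_nonneg _)) hα.le) hn₀P
  set T : ℝ := |ξ| ^ β with hT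
  have hT1 : 1 < T := Real.one_lt_rpow_iff_of_pos (by linarith) |>.2 (Or.inl ⟨hξ1, hβ⟩)
  have hsub : s.filter P ⊆ Finset.Icc (-⌈T⌉) ⌈T⌉ := by
    intro n hn
    have hPn : P n := (Finset.mem_filter.1 hn).2
    have h0 : (0:ℝ) ≤ 1 + |(n:ℝ)| := by positivity
    have h1 : ((1 + |(n:ℝ)|) ^ α) ^ β < |ξ| ^ β :=
      Real.rpow_lt_rpow (Real.rpow_nonneg h0 α) hPn hβ
    rw [← Real.rpow_mul h0, hαβ, Real.rpow_one] at h1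
    have h2 : |(n:ℝ)| < T := by rw [hT]; linarith
    have h3 : |(n:ℝ)| ≤ (⌈T⌉ : ℝ) := h2.le.trans (Int.le_ceil T)
    rw [abs_le] at h3
    rw [Finset.mem_Icc]
    constructor
    · exact_mod_cast h3.1
    · exact_mod_cast h3.2
  have hcard : ((s.filter P).card : ℝ) ≤ ((Finset.Icc (-⌈T⌉) ⌈T⌉).card : ℝ) := by
    exact_mod_cast Finset.card_le_card hsub
  refine hcard.trans ?_
  have hceil : (1:ℤ) ≤ ⌈T⌉ := by
    rw [Int.le_ceil_iff]
    norm_num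
    linarith
  have hcardIcc : ((Finset.Icc (-⌈T⌉) ⌈T⌉).card : ℝ) = 2 * (⌈T⌉ : ℝ) + 1 := by
    rw [Int.card_Icc]
    have h4 : (((⌈T⌉ + 1 - -⌈T⌉).toNat : ℤ)) = 2 * ⌈T⌉ + 1 := by omega
    exact_mod_cast h4
  rw [hcardIcc]
  have hceilR : (⌈T⌉ : ℝ) ≤ T + 1 := by
    have := Int.ceil_lt_add_one T
    linarith
  linarith

lemma spatial_bound (α : ℝ) (hα : 0 < α) (M S : ℝ) (hM : 1 ≤ M)
    (K : ℝ → ℂ) (hK0 : ∀ y : ℝ, ‖K y‖ ≤ M) (hK2 : ∀ y : ℝ, y ^ 2 * ‖K y‖ ≤ M)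
    (hS : ∀ t : Finset ℤ, ∑ k ∈ t, 5 / (1 + (k:ℝ) ^ 2) ≤ S)
    (s : Finset ℤ) (x : ℝ) :
    ∑ n ∈ s, (1 + |(n:ℝ)|) ^ α * ‖K ((1 + |(n:ℝ)|) ^ α * (x - n))‖
      ≤ (2 * 2 ^ α * M + M * S) * (1 + |x|) ^ α := by
  classical
  have hM0 : (0:ℝ) < M := lt_of_lt_of_le one_pos hM
  have hS0 : (0:ℝ) ≤ S := by simpa using hS ∅
  have hΔ1 : ∀ n : ℤ, (1:ℝ) ≤ (1 + |(n:ℝ)|) ^ α := fun n =>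
    Real.one_le_rpow (le_add_of_nonneg_right (abs_nonneg _)) hα.le
  have hΔ0 : ∀ n : ℤ, (0:ℝ) < (1 + |(n:ℝ)|) ^ α := fun n => lt_of_lt_of_le one_pos (hΔ1 n)
  have hx1 : (1:ℝ) ≤ (1 + |x|) ^ α :=
    Real.one_le_rpow (le_add_of_nonneg_right (abs_nonneg _)) hα.le
  have hGnn : ∀ n : ℤ, 0 ≤ (1 + |(n:ℝ)|) ^ α * ‖K ((1 + |(n:ℝ)|) ^ α * (x - n))‖ := fun n =>
    mul_nonneg (hΔ0 n).le (norm_nonneg _)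
  rw [← Finset.sum_filter_add_sum_filter_not s (fun n : ℤ => |x - (n:ℝ)| < 1)]
  have partA : ∑ n ∈ s.filter (fun n : ℤ => |x - (n:ℝ)| < 1),
        (1 + |(n:ℝ)|) ^ α * ‖K ((1 + |(n:ℝ)|) ^ α * (x - n))‖
      ≤ 2 * (2 ^ α * (1 + |x|) ^ α * M) := by
    have hsub : s.filter (fun n : ℤ => |x - (n:ℝ)| < 1) ⊆ ({⌊x⌋, ⌊x⌋ + 1} : Finset ℤ) := by
      intro n hn
      have h : |x - (n:ℝ)| < 1 := (Finset.mem_filter.1 hn).2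
      rw [abs_sub_lt_iff] at h
      have hfl : (⌊x⌋ : ℝ) ≤ x := Int.floor_le x
      have hfl' : x < (⌊x⌋ : ℝ) + 1 := Int.lt_floor_add_one x
      have h1 : ((⌊x⌋ - 1 : ℤ) : ℝ) < (n:ℝ) := by push_cast; linarith
      have h2 : (n:ℝ) < ((⌊x⌋ + 2 : ℤ) : ℝ) := by push_cast; linarith
      have h1' : ⌊x⌋ - 1 < n := by exact_mod_cast h1
      have h2' : n < ⌊x⌋ + 2 := by exact_mod_cast h2
      simp only [Finset.mem_insert, Finset.mem_singleton]
      omega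
    have hbound : ∀ n ∈ s.filter (fun n : ℤ => |x - (n:ℝ)| < 1),
        (1 + |(n:ℝ)|) ^ α * ‖K ((1 + |(n:ℝ)|) ^ α * (x - n))‖
          ≤ 2 ^ α * (1 + |x|) ^ α * M := by
      intro n hn
      have h : |x - (n:ℝ)| < 1 := (Finset.mem_filter.1 hn).2
      have hn' : |(n:ℝ)| < 1 + |x| := by
        have habs : |(n:ℝ)| ≤ |x| + |x - (n:ℝ)| := by
          calc |(n:ℝ)| = |x - (x - (n:ℝ))| := by congr 1; ring
          _ ≤ |x| + |x - (n:ℝ)| := abs_sub _ _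
        linarith
      have hΔle : (1 + |(n:ℝ)|) ^ α ≤ 2 ^ α * (1 + |x|) ^ α := by
        rw [← Real.mul_rpow (by norm_num) (by positivity)]
        exact Real.rpow_le_rpow (by positivity) (by linarith [abs_nonneg x]) hα.le
      calc (1 + |(n:ℝ)|) ^ α * ‖K ((1 + |(n:ℝ)|) ^ α * (x - n))‖
          ≤ (1 + |(n:ℝ)|) ^ α * M := mul_le_mul_of_nonneg_left (hK0 _) (hΔ0 n).le
      _ ≤ (2 ^ α * (1 + |x|) ^ α) * M := mul_le_mul_of_nonneg_right hΔle hM0.le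
    calc ∑ n ∈ s.filter (fun n : ℤ => |x - (n:ℝ)| < 1),
          (1 + |(n:ℝ)|) ^ α * ‖K ((1 + |(n:ℝ)|) ^ α * (x - n))‖
        ≤ (s.filter (fun n : ℤ => |x - (n:ℝ)| < 1)).card • (2 ^ α * (1 + |x|) ^ α * M) :=
          Finset.sum_le_card_nsmul _ _ _ hbound
    _ ≤ 2 • (2 ^ α * (1 + |x|) ^ α * M) := by
          apply nsmul_le_nsmul_left (by positivity)
          calc (s.filter (fun n : ℤ => |x - (n:ℝ)| < 1)).card
              ≤ ({⌊x⌋, ⌊x⌋ + 1} : Finset ℤ).card := Finset.card_le_card hsub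
          _ ≤ 2 := Finset.card_insert_le _ _ |>.trans (by simp)
    _ = 2 * (2 ^ α * (1 + |x|) ^ α * M) := by rw [nsmul_eq_mul]; norm_num
  have partB : ∑ n ∈ s.filter (fun n : ℤ => ¬ |x - (n:ℝ)| < 1),
        (1 + |(n:ℝ)|) ^ α * ‖K ((1 + |(n:ℝ)|) ^ α * (x - n))‖ ≤ M * S := by
    have hbound : ∀ n ∈ s.filter (fun n : ℤ => ¬ |x - (n:ℝ)| < 1),
        (1 + |(n:ℝ)|) ^ α * ‖K ((1 + |(n:ℝ)|) ^ α * (x - n))‖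
          ≤ M * (5 / (1 + ((n - ⌊x⌋ : ℤ):ℝ) ^ 2)) := by
      intro n hn
      have h : 1 ≤ |x - (n:ℝ)| := not_lt.1 (Finset.mem_filter.1 hn).2
      have hxn2 : 1 ≤ (x - (n:ℝ)) ^ 2 := by
        rw [← sq_abs]
        exact one_le_pow₀ h
      have hy2 : (x - (n:ℝ)) ^ 2 ≤ ((1 + |(n:ℝ)|) ^ α * (x - n)) ^ 2 := by
        rw [mul_pow]
        have hΔsq : (1:ℝ) ≤ ((1 + |(n:ℝ)|) ^ α) ^ 2 := one_le_pow₀ (hΔ1 n)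
        nlinarith [mul_le_mul_of_nonneg_right hΔsq (sq_nonneg (x - (n:ℝ)))]
      have hy2' : (1:ℝ) ≤ ((1 + |(n:ℝ)|) ^ α * (x - n)) ^ 2 := le_trans hxn2 hy2
      have hKy : ‖K ((1 + |(n:ℝ)|) ^ α * (x - n))‖ ≤ M / ((1 + |(n:ℝ)|) ^ α * (x - n)) ^ 2 := by
        rw [le_div_iff₀ (by linarith)]
        calc ‖K ((1 + |(n:ℝ)|) ^ α * (x - n))‖ * ((1 + |(n:ℝ)|) ^ α * (x - n)) ^ 2
            = ((1 + |(n:ℝ)|) ^ α * (x - n)) ^ 2 * ‖K ((1 + |(n:ℝ)|) ^ α * (x - n))‖ := by ring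
        _ ≤ M := hK2 _
      have hG1 : (1 + |(n:ℝ)|) ^ α * ‖K ((1 + |(n:ℝ)|) ^ α * (x - n))‖
          ≤ M / (x - (n:ℝ)) ^ 2 := by
        calc (1 + |(n:ℝ)|) ^ α * ‖K ((1 + |(n:ℝ)|) ^ α * (x - n))‖
            ≤ (1 + |(n:ℝ)|) ^ α * (M / ((1 + |(n:ℝ)|) ^ α * (x - n)) ^ 2) :=
              mul_le_mul_of_nonneg_left hKy (hΔ0 n).le
        _ = M / ((1 + |(n:ℝ)|) ^ α * (x - (n:ℝ)) ^ 2) := by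
            rw [mul_pow]
            rw [eq_div_iff (by positivity)]
            have hxn0 : x - (n:ℝ) ≠ 0 := fun h0 => by rw [h0] at hxn2; norm_num at hxn2
            field_simp
        _ ≤ M / (x - (n:ℝ)) ^ 2 := by
            apply div_le_div_of_nonneg_left hM0.le (by linarith)
            nlinarith [hΔ1 n, hxn2]
      refine hG1.trans ?_
      rw [mul_div_assoc' M 5 _, div_le_div_iff₀ (by linarith) (by positivity)]
      have hk : |((n - ⌊x⌋ : ℤ):ℝ)| ≤ |x - (n:ℝ)| + 1 := by
        push_cast
        have hfr1 : (0:ℝ) ≤ x - ⌊x⌋ := by linarith [Int.floor_le x]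
        have hfr2 : x - (⌊x⌋:ℝ) < 1 := by linarith [Int.lt_floor_add_one x]
        calc |(n:ℝ) - (⌊x⌋:ℝ)| = |(x - ⌊x⌋) - (x - n)| := by congr 1; ring
        _ ≤ |x - (⌊x⌋:ℝ)| + |x - (n:ℝ)| := abs_sub _ _
        _ ≤ |x - (n:ℝ)| + 1 := by
            rw [abs_of_nonneg hfr1]; linarith
      have hk2 : ((n - ⌊x⌋ : ℤ):ℝ) ^ 2 ≤ 4 * (x - (n:ℝ)) ^ 2 := by
        have h2 : |((n - ⌊x⌋ : ℤ):ℝ)| ≤ 2 * |x - (n:ℝ)| := by linarith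
        calc ((n - ⌊x⌋ : ℤ):ℝ) ^ 2 = |((n - ⌊x⌋ : ℤ):ℝ)| ^ 2 := (sq_abs _).symm
        _ ≤ (2 * |x - (n:ℝ)|) ^ 2 := by
            apply pow_le_pow_left₀ (abs_nonneg _) h2
        _ = 4 * (x - (n:ℝ)) ^ 2 := by rw [mul_pow, sq_abs]; ring
      nlinarith [hxn2, hM0]
    calc ∑ n ∈ s.filter (fun n : ℤ => ¬ |x - (n:ℝ)| < 1),
          (1 + |(n:ℝ)|) ^ α * ‖K ((1 + |(n:ℝ)|) ^ α * (x - n))‖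
        ≤ ∑ n ∈ s.filter (fun n : ℤ => ¬ |x - (n:ℝ)| < 1),
            M * (5 / (1 + ((n - ⌊x⌋ : ℤ):ℝ) ^ 2)) := Finset.sum_le_sum hbound
    _ = M * ∑ n ∈ s.filter (fun n : ℤ => ¬ |x - (n:ℝ)| < 1),
          5 / (1 + ((n - ⌊x⌋ : ℤ):ℝ) ^ 2) := by rw [Finset.mul_sum]
    _ = M * ∑ k ∈ (s.filter (fun n : ℤ => ¬ |x - (n:ℝ)| < 1)).image (fun n => n - ⌊x⌋),
          5 / (1 + (k:ℝ) ^ 2) := by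
          congr 1
          rw [Finset.sum_image (by intro a _ b _ h; have h' : a - ⌊x⌋ = b - ⌊x⌋ := h; omega)]
    _ ≤ M * S := mul_le_mul_of_nonneg_left (hS _) hM0.le
  calc ∑ n ∈ s.filter (fun n : ℤ => |x - (n:ℝ)| < 1),
        (1 + |(n:ℝ)|) ^ α * ‖K ((1 + |(n:ℝ)|) ^ α * (x - n))‖
      + ∑ n ∈ s.filter (fun n : ℤ => ¬ |x - (n:ℝ)| < 1),
        (1 + |(n:ℝ)|) ^ α * ‖K ((1 + |(n:ℝ)|) ^ α * (x - n))‖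
      ≤ 2 * (2 ^ α * (1 + |x|) ^ α * M) + M * S := add_le_add partA partB
  _ ≤ (2 * 2 ^ α * M + M * S) * (1 + |x|) ^ α := by
      nlinarith [mul_nonneg hM0.le hS0, hx1, Real.rpow_nonneg (show (0:ℝ) ≤ 2 by norm_num) α,
        mul_nonneg (mul_nonneg hM0.le hS0) (sub_nonneg.2 hx1)]

lemma summable_h : Summable (fun k : ℤ => 5 / (1 + (k:ℝ) ^ 2)) := by
  have h2 : Summable (fun k : ℤ => 5 * (1 / (k:ℝ) ^ 2)) :=
    (summable_one_div_int_pow.2 (by norm_num)).mul_left 5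
  apply h2.of_norm_bounded_eventually
  rw [Filter.eventually_cofinite]
  apply Set.Finite.subset (Set.finite_singleton (0:ℤ))
  intro k hk
  simp only [Set.mem_setOf_eq, not_le] at hk
  simp only [Set.mem_singleton_iff]
  by_contra hk0
  apply absurd hk
  push_neg
  have hk2 : (0:ℝ) < (k:ℝ) ^ 2 := by
    have : (k:ℝ) ≠ 0 := Int.cast_ne_zero.2 hk0
    positivity
  rw [Real.norm_eq_abs, abs_of_nonneg (by positivity), mul_one_div]
  apply div_le_div_of_nonneg_left (by norm_num) hk2
  linarith

/-- endpoint absolute convergence case p = q = 1, αβ = 1: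
Σ_{n∈ℤ} |f(n)| ≤ C (‖f(x)(1+|x|)^α‖₁ + ‖𝓕f(ξ)|ξ|^β‖₁). -/
theorem stmt16 (α β : ℝ) (hα : 0 < α) (hβ : 0 < β) (hαβ : α * β = 1) :
    ∃ C : ℝ, 0 < C ∧ ∀ f : ℝ → ℂ, Continuous f →
      Integrable (fun x : ℝ => f x * (((1 + |x|) ^ α : ℝ) : ℂ)) →
      Integrable (fun ξ : ℝ => 𝓕 f ξ * ((|ξ| ^ β : ℝ) : ℂ)) →
      (Summable fun n : ℤ => ‖f n‖) ∧
      ∑' n : ℤ, ‖f n‖ ≤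
        C * ((∫ x : ℝ, ‖f x * (((1 + |x|) ^ α : ℝ) : ℂ)‖)
          + ∫ ξ : ℝ, ‖𝓕 f ξ * ((|ξ| ^ β : ℝ) : ℂ)‖) := by
  classical
  obtain ⟨Φ, M, hM1, hΦc, hFΦc, hΦi, hΦ1, hΦ1', hΦeq, hΦ0, hK0, hK2⟩ := exists_plateau
  have hM0 : (0:ℝ) < M := lt_of_lt_of_le one_pos hM1
  have hsumh : Summable (fun k : ℤ => 5 / (1 + (k:ℝ) ^ 2)) := summable_h
  set S : ℝ := ∑' k : ℤ, 5 / (1 + (k:ℝ) ^ 2) with hSdef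
  have hS : ∀ t : Finset ℤ, ∑ k ∈ t, 5 / (1 + (k:ℝ) ^ 2) ≤ S := fun t =>
    hsumh.sum_le_tsum t (fun k _ => by positivity)
  have hS0 : (0:ℝ) ≤ S := by simpa using hS ∅
  have h2α : (0:ℝ) < 2 ^ α := Real.rpow_pos_of_pos two_pos α
  set C : ℝ := 5 + (2 * 2 ^ α * M + M * S) with hCdef
  have hC0 : 0 < C := by nlinarith
  refine ⟨C, hC0, ?_⟩
  intro f hfc h1 h2
  have hx1 : ∀ x : ℝ, (1:ℝ) ≤ (1 + |x|) ^ α := fun x =>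
    Real.one_le_rpow (le_add_of_nonneg_right (abs_nonneg _)) hα.le
  have hwx : ∀ x : ℝ, ‖f x * (((1 + |x|) ^ α : ℝ) : ℂ)‖ = ‖f x‖ * (1 + |x|) ^ α := by
    intro x
    rw [norm_mul, Complex.norm_real, Real.norm_eq_abs, _root_.abs_of_nonneg (by positivity)]
  have hwξ : ∀ ξ : ℝ, ‖𝓕 f ξ * ((|ξ| ^ β : ℝ) : ℂ)‖ = ‖𝓕 f ξ‖ * |ξ| ^ β := by
    intro ξ
    rw [norm_mul, Complex.norm_real, Real.norm_eq_abs,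
      _root_.abs_of_nonneg (Real.rpow_nonneg (abs_nonneg _) β)]
  set A : ℝ := ∫ x : ℝ, ‖f x * (((1 + |x|) ^ α : ℝ) : ℂ)‖ with hA
  set B : ℝ := ∫ ξ : ℝ, ‖𝓕 f ξ * ((|ξ| ^ β : ℝ) : ℂ)‖ with hB
  have hA0 : 0 ≤ A := integral_nonneg (fun x => norm_nonneg _)
  have hB0 : 0 ≤ B := integral_nonneg (fun x => norm_nonneg _)
  have hfi : Integrable f := by
    apply (h1.norm).mono' hfc.aestronglyMeasurable
    filter_upwards with x
    rw [hwx x]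
    exact le_mul_of_one_le_right (norm_nonneg _) (hx1 x)
  have hFc : Continuous (𝓕 f) :=
    VectorFourier.fourierIntegral_continuous Real.continuous_fourierChar
      (by exact continuous_inner) hfi
  have hCb : ∀ ξ : ℝ, ‖𝓕 f ξ‖ ≤ ∫ x : ℝ, ‖f x‖ := fun ξ =>
    VectorFourier.norm_fourierIntegral_le_integral_norm _ _ _ _ _
  have hCb0 : (0:ℝ) ≤ ∫ x : ℝ, ‖f x‖ := integral_nonneg (fun x => norm_nonneg _)
  have hFi : Integrable (𝓕 f) := by
    apply Integrable.mono' (g := fun ξ : ℝ => ‖𝓕 f ξ * ((|ξ| ^ β : ℝ) : ℂ)‖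
      + (Set.Icc (-1:ℝ) 1).indicator (fun _ => ∫ x : ℝ, ‖f x‖) ξ)
    · exact h2.norm.add ((integrable_indicator_iff measurableSet_Icc).2
        (integrableOn_const measure_Icc_lt_top.ne))
    · exact hFc.aestronglyMeasurable
    · filter_upwards with ξ
      by_cases hξ : |ξ| ≤ 1
      · have hmem : ξ ∈ Set.Icc (-1:ℝ) 1 := by rw [Set.mem_Icc, ← abs_le]; exact hξ
        rw [Set.indicator_of_mem hmem]
        exact (hCb ξ).trans (le_add_of_nonneg_left (norm_nonneg _))
      · rw [Set.indicator_of_notMem (by rw [Set.mem_Icc, ← abs_le]; exact hξ), add_zero]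
        have hβ1 : 1 ≤ |ξ| ^ β := Real.one_le_rpow (not_le.1 hξ).le hβ.le
        rw [hwξ]
        exact le_mul_of_one_le_right (norm_nonneg _) hβ1
  have hΔ1 : ∀ n : ℤ, (1:ℝ) ≤ (1 + |(n:ℝ)|) ^ α := fun n => hx1 _
  have hkey : ∀ n : ℤ, ‖f n‖ ≤
      (∫ ξ : ℝ, ‖𝓕 f ξ‖ * ({η : ℝ | (1 + |(n:ℝ)|) ^ α < |η|}.indicator (fun _ => (1:ℝ)) ξ))
      + ∫ x : ℝ, ‖f x‖ * ((1 + |(n:ℝ)|) ^ α * ‖𝓕 Φ ((1 + |(n:ℝ)|) ^ α * (x - n))‖) :=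
    fun n => key_bound_s16 Φ hΦc hΦi hΦ1 hΦ1' hΦeq hΦ0 hFΦc f hfc hfi hFi hFc n _ (hΔ1 n)
  have hFn_int : ∀ n : ℤ, Integrable (fun ξ : ℝ =>
      ‖𝓕 f ξ‖ * ({η : ℝ | (1 + |(n:ℝ)|) ^ α < |η|}.indicator (fun _ => (1:ℝ)) ξ)) := by
    intro n
    apply (hFi.norm).mono'
    · exact hFc.norm.aestronglyMeasurable.mul (Measurable.indicator measurable_const
        (measurableSet_lt measurable_const continuous_abs.measurable)).aestronglyMeasurable
    · filter_upwards with ξ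
      rw [Real.norm_eq_abs, _root_.abs_of_nonneg
        (mul_nonneg (norm_nonneg _) (Set.indicator_nonneg (fun _ _ => zero_le_one) _))]
      by_cases hc : (1 + |(n:ℝ)|) ^ α < |ξ| <;> simp [Set.indicator_apply, hc, norm_nonneg]
  have hGn_int : ∀ n : ℤ, Integrable (fun x : ℝ =>
      ‖f x‖ * ((1 + |(n:ℝ)|) ^ α * ‖𝓕 Φ ((1 + |(n:ℝ)|) ^ α * (x - n))‖)) := by
    intro n
    apply Integrable.mono' (hfi.norm.mul_const ((1 + |(n:ℝ)|) ^ α * M))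
    · exact (hfc.norm.mul (continuous_const.mul ((hFΦc.comp
        (continuous_const.mul (continuous_id.sub continuous_const))).norm))).aestronglyMeasurable
    · filter_upwards with x
      rw [Real.norm_eq_abs, _root_.abs_of_nonneg (by positivity)]
      apply mul_le_mul_of_nonneg_left _ (norm_nonneg _)
      exact mul_le_mul_of_nonneg_left (hK0 _) (by positivity)
  have hfin : ∀ s : Finset ℤ, ∑ n ∈ s, ‖f n‖ ≤ C * (A + B) := by
    intro s
    have step1 : ∑ n ∈ s, ‖f n‖ ≤
        (∑ n ∈ s, ∫ ξ : ℝ, ‖𝓕 f ξ‖ *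
          ({η : ℝ | (1 + |(n:ℝ)|) ^ α < |η|}.indicator (fun _ => (1:ℝ)) ξ))
        + ∑ n ∈ s, ∫ x : ℝ, ‖f x‖ *
          ((1 + |(n:ℝ)|) ^ α * ‖𝓕 Φ ((1 + |(n:ℝ)|) ^ α * (x - n))‖) := by
      rw [← Finset.sum_add_distrib]
      exact Finset.sum_le_sum fun n _ => hkey n
    have step2 : (∑ n ∈ s, ∫ ξ : ℝ, ‖𝓕 f ξ‖ *
        ({η : ℝ | (1 + |(n:ℝ)|) ^ α < |η|}.indicator (fun _ => (1:ℝ)) ξ)) ≤ 5 * B := by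
      rw [← integral_finset_sum s (fun n _ => hFn_int n)]
      have : (∫ ξ : ℝ, ∑ n ∈ s, ‖𝓕 f ξ‖ *
          ({η : ℝ | (1 + |(n:ℝ)|) ^ α < |η|}.indicator (fun _ => (1:ℝ)) ξ))
          ≤ ∫ ξ : ℝ, 5 * ‖𝓕 f ξ * ((|ξ| ^ β : ℝ) : ℂ)‖ := by
        apply integral_mono_of_nonneg
        · filter_upwards with ξ
          exact Finset.sum_nonneg fun n _ =>
            mul_nonneg (norm_nonneg _) (Set.indicator_nonneg (fun _ _ => zero_le_one) _)
        · exact h2.norm.const_mul 5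
        · filter_upwards with ξ
          rw [← Finset.mul_sum]
          calc ‖𝓕 f ξ‖ * ∑ n ∈ s,
              ({η : ℝ | (1 + |(n:ℝ)|) ^ α < |η|}.indicator (fun _ => (1:ℝ)) ξ)
              ≤ ‖𝓕 f ξ‖ * (5 * |ξ| ^ β) :=
                mul_le_mul_of_nonneg_left (count_bound α β hα hβ hαβ s ξ) (norm_nonneg _)
          _ = 5 * ‖𝓕 f ξ * ((|ξ| ^ β : ℝ) : ℂ)‖ := by rw [hwξ]; ring
      refine this.trans ?_
      rw [integral_const_mul]
    have step3 : (∑ n ∈ s, ∫ x : ℝ, ‖f x‖ *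
        ((1 + |(n:ℝ)|) ^ α * ‖𝓕 Φ ((1 + |(n:ℝ)|) ^ α * (x - n))‖))
        ≤ (2 * 2 ^ α * M + M * S) * A := by
      rw [← integral_finset_sum s (fun n _ => hGn_int n)]
      have : (∫ x : ℝ, ∑ n ∈ s, ‖f x‖ *
          ((1 + |(n:ℝ)|) ^ α * ‖𝓕 Φ ((1 + |(n:ℝ)|) ^ α * (x - n))‖))
          ≤ ∫ x : ℝ, (2 * 2 ^ α * M + M * S) * ‖f x * (((1 + |x|) ^ α : ℝ) : ℂ)‖ := by
        apply integral_mono_of_nonneg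
        · filter_upwards with x
          exact Finset.sum_nonneg fun n _ => mul_nonneg (norm_nonneg _)
            (mul_nonneg (Real.rpow_nonneg (by positivity) _) (norm_nonneg _))
        · exact h1.norm.const_mul _
        · filter_upwards with x
          rw [← Finset.mul_sum]
          calc ‖f x‖ * ∑ n ∈ s,
              ((1 + |(n:ℝ)|) ^ α * ‖𝓕 Φ ((1 + |(n:ℝ)|) ^ α * (x - n))‖)
              ≤ ‖f x‖ * ((2 * 2 ^ α * M + M * S) * (1 + |x|) ^ α) :=
                mul_le_mul_of_nonneg_left
                  (spatial_bound α hα M S hM1 (𝓕 Φ) hK0 hK2 hS s x) (norm_nonneg _)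
          _ = (2 * 2 ^ α * M + M * S) * ‖f x * (((1 + |x|) ^ α : ℝ) : ℂ)‖ := by
              rw [hwx]; ring
      refine this.trans ?_
      rw [integral_const_mul]
    calc ∑ n ∈ s, ‖f n‖ ≤ _ := step1
    _ ≤ 5 * B + (2 * 2 ^ α * M + M * S) * A := add_le_add step2 step3
    _ ≤ C * (A + B) := by
        have hD0 : (0:ℝ) ≤ 2 * 2 ^ α * M + M * S :=
          add_nonneg (mul_nonneg (by positivity) hM0.le) (mul_nonneg hM0.le hS0)
        nlinarith [mul_nonneg hD0 hB0, hA0, hB0]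
  have hsummable : Summable fun n : ℤ => ‖f n‖ :=
    summable_of_sum_le (fun n => norm_nonneg _) hfin
  exact ⟨hsummable, Summable.tsum_le_of_sum_le hsummable hfin⟩
end

section
/- (Salem–Zygmund sign choice) Let (c_k)_{k=0}^N be complex numbers and S_n^ε(x) = Σ_{k=0}^n ε_k c_k e^{2πi k x} for signs ε_k = ±1. Then there exist a universal constant C and a choice of signs ε such that for every 0 ≤ n ≤ N, ‖S_n^ε‖_{L^∞(𝕋)} ≤ C (log(n+2))^{1/2} (Σ_{j=0}^n |c_j|^2)^{1/2}. -/
open MeasureTheory Real Filter FourierTransform Topology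
open scoped ENNReal NNReal


open Finset

namespace SZ

noncomputable def sg (b : Bool) : ℝ := if b then 1 else -1

lemma sg_eq (b : Bool) : sg b = 1 ∨ sg b = -1 := by cases b <;> simp [sg]

lemma abs_sg (b : Bool) : |sg b| = 1 := by rcases sg_eq b with h | h <;> rw [h] <;> norm_num

lemma sum_exp_le (m : ℕ) (b : Fin m → ℝ) (l : ℝ) :
    ∑ s : Fin m → Bool, Real.exp (∑ k, l * (sg (s k) * b k))
      ≤ 2 ^ m * Real.exp (l ^ 2 * (∑ k, (b k) ^ 2) / 2) := by
  have h1 : ∀ s : Fin m → Bool, Real.exp (∑ k, l * (sg (s k) * b k))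
      = ∏ k, Real.exp (l * (sg (s k) * b k)) := fun s => Real.exp_sum _ _
  simp only [h1]
  have h2 : ∑ s : Fin m → Bool, ∏ k, Real.exp (l * (sg (s k) * b k))
      = ∏ k, ∑ y : Bool, Real.exp (l * (sg y * b k)) := by
    rw [Finset.prod_univ_sum]
    rw [Fintype.piFinset_univ]
  rw [h2]
  have h3 : ∀ k : Fin m, ∑ y : Bool, Real.exp (l * (sg y * b k))
      ≤ 2 * Real.exp ((l * b k) ^ 2 / 2) := by
    intro k
    rw [Fintype.sum_bool]
    norm_num [sg]
    rw [show Real.exp (l * b k) + Real.exp (-(l * b k))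
        = 2 * Real.cosh (l * b k) by rw [Real.cosh_eq]; ring]
    have := Real.cosh_le_exp_half_sq (l * b k)
    linarith
  calc ∏ k, ∑ y : Bool, Real.exp (l * (sg y * b k))
      ≤ ∏ k : Fin m, 2 * Real.exp ((l * b k) ^ 2 / 2) := by
        apply Finset.prod_le_prod
        · intro k _
          apply Finset.sum_nonneg; intro y _; positivity
        · intro k _; exact h3 k
    _ = 2 ^ m * Real.exp (l ^ 2 * (∑ k, (b k) ^ 2) / 2) := by
        rw [Finset.prod_mul_distrib, Finset.prod_const, Finset.card_univ, Fintype.card_fin,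
          ← Real.exp_sum]
        rw [Finset.mul_sum, ← Finset.sum_div]
        have : (∑ i : Fin m, (l * b i) ^ 2) = ∑ i : Fin m, l ^ 2 * b i ^ 2 :=
          Finset.sum_congr rfl fun k _ => by ring
        rw [this]


lemma tail_count (m : ℕ) (b : Fin m → ℝ) (σ u : ℝ) (hσ : 0 < σ)
    (hb : ∑ k, (b k) ^ 2 ≤ σ ^ 2) (hu : 0 ≤ u) :
    ((Finset.univ.filter fun s : Fin m → Bool => u < ∑ k, sg (s k) * b k).card : ℝ)
      ≤ 2 ^ m * Real.exp (-(u ^ 2) / (2 * σ ^ 2)) := by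
  classical
  set l := u / σ ^ 2 with hl
  have hl0 : 0 ≤ l := div_nonneg hu (by positivity)
  have step1 : ((Finset.univ.filter fun s : Fin m → Bool =>
        u < ∑ k, sg (s k) * b k).card : ℝ)
      ≤ ∑ s : Fin m → Bool, Real.exp (l * ((∑ k, sg (s k) * b k) - u)) := by
    calc ((Finset.univ.filter fun s : Fin m → Bool => u < ∑ k, sg (s k) * b k).card : ℝ)
        = ∑ s ∈ Finset.univ.filter fun s : Fin m → Bool => u < ∑ k, sg (s k) * b k,
            (1 : ℝ) := by simp
      _ ≤ ∑ s ∈ Finset.univ.filter fun s : Fin m → Bool => u < ∑ k, sg (s k) * b k,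
            Real.exp (l * ((∑ k, sg (s k) * b k) - u)) := by
          apply Finset.sum_le_sum
          intro s hs
          have hlt := (Finset.mem_filter.mp hs).2
          have : 0 ≤ l * ((∑ k, sg (s k) * b k) - u) :=
            mul_nonneg hl0 (by linarith)
          exact Real.one_le_exp this
      _ ≤ ∑ s : Fin m → Bool, Real.exp (l * ((∑ k, sg (s k) * b k) - u)) := by
          apply Finset.sum_le_sum_of_subset_of_nonneg (Finset.filter_subset _ _)
          intro s _ _; positivity
  have exp_eq : ∀ s : Fin m → Bool, Real.exp (l * ((∑ k, sg (s k) * b k) - u))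
      = Real.exp (∑ k, l * (sg (s k) * b k)) * Real.exp (-(l * u)) := by
    intro s
    rw [← Real.exp_add]
    congr 1
    rw [← Finset.mul_sum]
    ring
  have step2 : ∑ s : Fin m → Bool, Real.exp (l * ((∑ k, sg (s k) * b k) - u))
      ≤ 2 ^ m * Real.exp (l ^ 2 * (∑ k, (b k) ^ 2) / 2) * Real.exp (-(l * u)) := by
    simp only [exp_eq]
    rw [← Finset.sum_mul]
    apply mul_le_mul_of_nonneg_right (sum_exp_le m b l) (Real.exp_pos _).le
  refine le_trans (le_trans step1 step2) ?_
  rw [mul_assoc, ← Real.exp_add]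
  apply mul_le_mul_of_nonneg_left _ (by positivity)
  apply Real.exp_le_exp.mpr
  have h1 : l ^ 2 * (∑ k, (b k) ^ 2) / 2 ≤ l ^ 2 * σ ^ 2 / 2 := by nlinarith [sq_nonneg l]
  have h2 : l ^ 2 * σ ^ 2 / 2 + -(l * u) = -(u ^ 2) / (2 * σ ^ 2) := by
    rw [hl]; field_simp; ring
  linarith

lemma ctail (m : ℕ) (b : Fin m → ℂ) (σ U : ℝ) (hσ : 0 < σ)
    (hb : ∑ k, ‖b k‖ ^ 2 ≤ σ ^ 2) (hU : 0 ≤ U) :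
    ((Finset.univ.filter fun s : Fin m → Bool =>
        U < ‖∑ k, (sg (s k) : ℂ) * b k‖).card : ℝ)
      ≤ 4 * 2 ^ m * Real.exp (-(U ^ 2) / (4 * σ ^ 2)) := by
  classical
  set u := U / Real.sqrt 2 with hud
  have hu : 0 ≤ u := div_nonneg hU (Real.sqrt_nonneg _)
  have hu2 : u ^ 2 = U ^ 2 / 2 := by
    rw [hud, div_pow, Real.sq_sqrt (by norm_num : (0:ℝ) ≤ 2)]
  -- the four real events
  set A1 := Finset.univ.filter fun s : Fin m → Bool => u < ∑ k, sg (s k) * (b k).re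
  set A2 := Finset.univ.filter fun s : Fin m → Bool => u < ∑ k, sg (s k) * (-(b k).re)
  set A3 := Finset.univ.filter fun s : Fin m → Bool => u < ∑ k, sg (s k) * (b k).im
  set A4 := Finset.univ.filter fun s : Fin m → Bool => u < ∑ k, sg (s k) * (-(b k).im)
  have hsub : (Finset.univ.filter fun s : Fin m → Bool =>
      U < ‖∑ k, (sg (s k) : ℂ) * b k‖) ⊆ (A1 ∪ A2) ∪ (A3 ∪ A4) := by
    intro s hs
    have hlt := (Finset.mem_filter.mp hs).2
    set z := ∑ k, (sg (s k) : ℂ) * b k with hz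
    have hre : z.re = ∑ k, sg (s k) * (b k).re := by
      rw [hz, Complex.re_sum]
      exact Finset.sum_congr rfl fun k _ => by simp [Complex.mul_re]
    have him : z.im = ∑ k, sg (s k) * (b k).im := by
      rw [hz, Complex.im_sum]
      exact Finset.sum_congr rfl fun k _ => by simp [Complex.mul_im]
    have hnorm : ‖z‖ ^ 2 = z.re ^ 2 + z.im ^ 2 := by
      rw [Complex.sq_norm, Complex.normSq_apply]; ring
    have hU2 : U ^ 2 < z.re ^ 2 + z.im ^ 2 := by
      rw [← hnorm]
      have h0 : 0 ≤ ‖z‖ := norm_nonneg _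
      nlinarith
    have key : u < z.re ∨ u < -z.re ∨ u < z.im ∨ u < -z.im := by
      by_contra h
      push_neg at h
      obtain ⟨h1, h2, h3, h4⟩ := h
      have : z.re ^ 2 ≤ u ^ 2 := by nlinarith
      have : z.im ^ 2 ≤ u ^ 2 := by nlinarith
      rw [hu2] at *
      nlinarith
    simp only [Finset.mem_union, A1, A2, A3, A4, Finset.mem_filter, Finset.mem_univ, true_and]
    have hre2 : (∑ k, sg (s k) * (-(b k).re)) = -z.re := by
      rw [hre, ← Finset.sum_neg_distrib]
      exact Finset.sum_congr rfl fun k _ => by ring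
    have him2 : (∑ k, sg (s k) * (-(b k).im)) = -z.im := by
      rw [him, ← Finset.sum_neg_distrib]
      exact Finset.sum_congr rfl fun k _ => by ring
    rw [← hre, hre2, ← him, him2]
    tauto
  have bound : ∀ (f : Fin m → ℝ), (∑ k, (f k) ^ 2 ≤ σ ^ 2) →
      ((Finset.univ.filter fun s : Fin m → Bool => u < ∑ k, sg (s k) * f k).card : ℝ)
        ≤ 2 ^ m * Real.exp (-(U ^ 2) / (4 * σ ^ 2)) := by
    intro f hf
    refine le_trans (tail_count m f σ u hσ hf hu) ?_
    apply mul_le_mul_of_nonneg_left _ (by positivity)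
    apply Real.exp_le_exp.mpr
    rw [hu2]
    rw [div_le_div_iff₀ (by positivity) (by positivity)]
    ring_nf
    nlinarith [sq_nonneg U, sq_nonneg σ]
  have hre_bd : ∀ g : Fin m → ℝ, (∀ k, (g k) ^ 2 ≤ ‖b k‖ ^ 2) → ∑ k, (g k) ^ 2 ≤ σ ^ 2 :=
    fun g hg => le_trans (Finset.sum_le_sum fun k _ => hg k) hb
  have hb1 : ∀ k, ((b k).re) ^ 2 ≤ ‖b k‖ ^ 2 := by
    intro k
    rw [Complex.sq_norm, Complex.normSq_apply]
    nlinarith [sq_nonneg (b k).im]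
  have hb2 : ∀ k, ((b k).im) ^ 2 ≤ ‖b k‖ ^ 2 := by
    intro k
    rw [Complex.sq_norm, Complex.normSq_apply]
    nlinarith [sq_nonneg (b k).re]
  have c1 := bound (fun k => (b k).re) (hre_bd _ hb1)
  have c2 := bound (fun k => -(b k).re) (hre_bd _ (fun k => by simpa using hb1 k))
  have c3 := bound (fun k => (b k).im) (hre_bd _ hb2)
  have c4 := bound (fun k => -(b k).im) (hre_bd _ (fun k => by simpa using hb2 k))
  have hcard : ((Finset.univ.filter fun s : Fin m → Bool =>
      U < ‖∑ k, (sg (s k) : ℂ) * b k‖).card : ℝ)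
      ≤ (A1.card : ℝ) + A2.card + A3.card + A4.card := by
    have h1 := Finset.card_le_card hsub
    have h2 := Finset.card_union_le (A1 ∪ A2) (A3 ∪ A4)
    have h3 := Finset.card_union_le A1 A2
    have h4 := Finset.card_union_le A3 A4
    have h5 : (Finset.univ.filter fun s : Fin m → Bool =>
        U < ‖∑ k, (sg (s k) : ℂ) * b k‖).card
        ≤ A1.card + A2.card + A3.card + A4.card := by
      refine le_trans h1 (le_trans h2 ?_)
      refine le_trans (Nat.add_le_add h3 h4) (le_of_eq ?_)
      ring
    exact_mod_cast h5
  calc ((Finset.univ.filter fun s : Fin m → Bool =>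
      U < ‖∑ k, (sg (s k) : ℂ) * b k‖).card : ℝ)
      ≤ (A1.card : ℝ) + A2.card + A3.card + A4.card := hcard
    _ ≤ 4 * 2 ^ m * Real.exp (-(U ^ 2) / (4 * σ ^ 2)) := by
        have := c1; have := c2; have := c3; have := c4
        simp only [A1, A2, A3, A4] at *
        linarith


lemma norm_exp_I_sub_one (t : ℝ) : ‖Complex.exp (t * Complex.I) - 1‖ ≤ |t| := by
  rw [Complex.exp_mul_I]
  have h0 : (Complex.cos t + Complex.sin t * Complex.I) - 1
      = Complex.ofReal (Real.cos t - 1) + Complex.ofReal (Real.sin t) * Complex.I := by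
    rw [← Complex.ofReal_cos, ← Complex.ofReal_sin]
    push_cast
    ring
  rw [h0, Complex.norm_add_mul_I]
  have hc : Real.cos t = 1 - 2 * Real.sin (t / 2) ^ 2 := by
    have h1 : t = 2 * (t / 2) := by ring
    rw [h1, Real.cos_two_mul, Real.cos_sq']
    ring
  have hs : |Real.sin (t / 2)| ≤ |t / 2| := Real.abs_sin_le_abs
  have hss : Real.sin (t / 2) ^ 2 ≤ (t / 2) ^ 2 := by
    rw [← sq_abs, ← sq_abs (t / 2)]
    exact pow_le_pow_left₀ (abs_nonneg _) hs 2
  have key : (Real.cos t - 1) ^ 2 + Real.sin t ^ 2 ≤ t ^ 2 := by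
    have hpy := Real.sin_sq_add_cos_sq t
    nlinarith
  calc Real.sqrt ((Real.cos t - 1) ^ 2 + Real.sin t ^ 2)
      ≤ Real.sqrt (t ^ 2) := Real.sqrt_le_sqrt key
    _ = |t| := Real.sqrt_sq_eq_abs t

lemma arg_eq (k : ℕ) (x : ℝ) :
    2 * (Real.pi : ℂ) * Complex.I * k * x = ((2 * Real.pi * k * x : ℝ) : ℂ) * Complex.I := by
  push_cast
  ring

lemma norm_e (k : ℕ) (x : ℝ) : ‖Complex.exp (2 * (Real.pi : ℂ) * Complex.I * k * x)‖ = 1 := by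
  rw [arg_eq, Complex.norm_exp_ofReal_mul_I]

lemma norm_e_sub (k : ℕ) (x y : ℝ) :
    ‖Complex.exp (2 * (Real.pi : ℂ) * Complex.I * k * x)
      - Complex.exp (2 * (Real.pi : ℂ) * Complex.I * k * y)‖
      ≤ 2 * Real.pi * k * |x - y| := by
  rw [arg_eq k x, arg_eq k y]
  have h1 : ((2 * Real.pi * k * x : ℝ) : ℂ) * Complex.I
      = ((2 * Real.pi * k * y : ℝ) : ℂ) * Complex.I
        + ((2 * Real.pi * k * (x - y) : ℝ) : ℂ) * Complex.I := by
    push_cast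
    ring
  rw [h1, Complex.exp_add]
  have h2 : Complex.exp (((2 * Real.pi * k * y : ℝ) : ℂ) * Complex.I)
        * Complex.exp (((2 * Real.pi * k * (x - y) : ℝ) : ℂ) * Complex.I)
      - Complex.exp (((2 * Real.pi * k * y : ℝ) : ℂ) * Complex.I)
      = Complex.exp (((2 * Real.pi * k * y : ℝ) : ℂ) * Complex.I)
        * (Complex.exp (((2 * Real.pi * k * (x - y) : ℝ) : ℂ) * Complex.I) - 1) := by
    ring
  rw [h2, norm_mul]
  rw [Complex.norm_exp_ofReal_mul_I, one_mul]
  refine le_trans (norm_exp_I_sub_one _) ?_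
  rw [abs_mul]
  have : |2 * Real.pi * (k : ℝ)| = 2 * Real.pi * k := by
    rw [abs_of_nonneg]
    positivity
  rw [this]

lemma e_fract (k : ℕ) (x : ℝ) :
    Complex.exp (2 * (Real.pi : ℂ) * Complex.I * k * x)
      = Complex.exp (2 * (Real.pi : ℂ) * Complex.I * k * (Int.fract x)) := by
  have hx : (x : ℂ) = (Int.fract x : ℝ) + ((⌊x⌋ : ℤ) : ℂ) := by
    have h := Int.fract_add_floor x
    rw [show (x : ℂ) = ((Int.fract x + (⌊x⌋ : ℝ) : ℝ) : ℂ) by rw [h]]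
    push_cast
    ring
  calc Complex.exp (2 * (Real.pi : ℂ) * Complex.I * k * x)
      = Complex.exp (2 * (Real.pi : ℂ) * Complex.I * k * (Int.fract x)
          + ((k * ⌊x⌋ : ℤ) : ℂ) * (2 * Real.pi * Complex.I)) := by
        congr 1
        rw [show ((x : ℝ) : ℂ) = (Int.fract x : ℝ) + ((⌊x⌋ : ℤ) : ℂ) from hx]
        push_cast
        ring
    _ = Complex.exp (2 * (Real.pi : ℂ) * Complex.I * k * (Int.fract x)) := by
        rw [Complex.exp_add, Complex.exp_int_mul_two_pi_mul_I, mul_one]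

lemma sum_inv_sq_le (K : ℕ) :
    ∑ n ∈ Finset.range K, (1 : ℝ) / ((n : ℝ) + 2) ^ 2 ≤ 1 - 1 / ((K : ℝ) + 1) := by
  induction K with
  | zero => simp
  | succ K ih =>
    rw [Finset.sum_range_succ]
    have hK : (0 : ℝ) < (K : ℝ) + 1 := by positivity
    have hK2 : (0 : ℝ) < (K : ℝ) + 2 := by positivity
    have key : 1 / ((K : ℝ) + 2) ^ 2 ≤ 1 / ((K : ℝ) + 1) - 1 / ((K : ℝ) + 2) := by
      rw [div_sub_div _ _ (ne_of_gt hK) (ne_of_gt hK2)]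
      rw [div_le_div_iff₀ (by positivity) (by positivity)]
      ring_nf
      nlinarith
    push_cast
    have he : ((K : ℝ) + 1 + 1) = (K : ℝ) + 2 := by ring
    rw [he]
    linarith


noncomputable def εf (N : ℕ) (s : Fin (N + 1) → Bool) (k : ℕ) : ℝ :=
  if h : k < N + 1 then sg (s ⟨k, h⟩) else 1

lemma εf_eq (N : ℕ) (s : Fin (N + 1) → Bool) (k : ℕ) : εf N s k = 1 ∨ εf N s k = -1 := by
  unfold εf
  split
  · exact sg_eq _
  · left; rfl

lemma abs_εf (N : ℕ) (s : Fin (N + 1) → Bool) (k : ℕ) : |εf N s k| = 1 := by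
  rcases εf_eq N s k with h | h <;> rw [h] <;> norm_num

noncomputable def T (N : ℕ) (c : ℕ → ℂ) (s : Fin (N + 1) → Bool) (n : ℕ) (x : ℝ) : ℂ :=
  ∑ k ∈ Finset.range (n + 1),
    (εf N s k : ℂ) * c k * Complex.exp (2 * (Real.pi : ℂ) * Complex.I * k * x)

set_option maxHeartbeats 1000000 in
lemma cardP (N : ℕ) (c : ℕ → ℂ) (n : ℕ) (hn : n ≤ N) (x : ℝ) :
    ((Finset.univ.filter fun s : Fin (N + 1) → Bool =>
        8 * Real.sqrt (∑ i ∈ Finset.range (n + 1), ‖c i‖ ^ 2)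
            * Real.sqrt (Real.log ((n : ℝ) + 2))
          < ‖T N c s n x‖).card : ℝ)
      ≤ 4 * 2 ^ (N + 1) / ((n : ℝ) + 2) ^ 16 := by
  classical
  set σ2 := ∑ i ∈ Finset.range (n + 1), ‖c i‖ ^ 2 with hσ2def
  have hσ2 : 0 ≤ σ2 := Finset.sum_nonneg fun i _ => by positivity
  rcases hσ2.eq_or_lt with hz | hpos
  · -- all coefficients vanish
    have hc0 : ∀ i ∈ Finset.range (n + 1), c i = 0 := by
      intro i hi
      have h1 : ∀ j ∈ Finset.range (n + 1), (0 : ℝ) ≤ ‖c j‖ ^ 2 := fun j _ => by positivity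
      have h2 := (Finset.sum_eq_zero_iff_of_nonneg h1).mp hz.symm i hi
      have : ‖c i‖ = 0 := by nlinarith [norm_nonneg (c i)]
      exact norm_eq_zero.mp this
    have hT0 : ∀ s : Fin (N + 1) → Bool, T N c s n x = 0 := by
      intro s
      apply Finset.sum_eq_zero
      intro k hk
      rw [hc0 k hk]
      ring
    have hempty : (Finset.univ.filter fun s : Fin (N + 1) → Bool =>
        8 * Real.sqrt σ2 * Real.sqrt (Real.log ((n : ℝ) + 2)) < ‖T N c s n x‖) = ∅ := by
      apply Finset.filter_eq_empty_iff.mpr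
      intro s _
      rw [hT0 s, ← hz, Real.sqrt_zero]
      simp
    rw [hempty]
    simp only [Finset.card_empty, Nat.cast_zero]
    positivity
  · set σ := Real.sqrt σ2 with hσdef
    have hσ : 0 < σ := Real.sqrt_pos.mpr hpos
    have hσsq : σ ^ 2 = σ2 := Real.sq_sqrt hσ2
    set b : Fin (N + 1) → ℂ := fun k =>
      if (k : ℕ) < n + 1 then c k * Complex.exp (2 * (Real.pi : ℂ) * Complex.I * (k : ℕ) * x)
      else 0 with hbdef
    have hrange : ∀ s : Fin (N + 1) → Bool, ∑ k, (sg (s k) : ℂ) * b k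
        = ∑ k ∈ Finset.range (N + 1), (εf N s k : ℂ) *
            (if k < n + 1 then c k * Complex.exp (2 * (Real.pi : ℂ) * Complex.I * k * x)
             else 0) := by
      intro s
      rw [← Fin.sum_univ_eq_sum_range (fun k => (εf N s k : ℂ) *
        (if k < n + 1 then c k * Complex.exp (2 * (Real.pi : ℂ) * Complex.I * k * x) else 0))
        (N + 1)]
      apply Finset.sum_congr rfl
      intro k _
      congr 1
      rw [show εf N s (k : ℕ) = sg (s k) by unfold εf; rw [dif_pos k.isLt]]
    have hT : ∀ s : Fin (N + 1) → Bool, T N c s n x = ∑ k, (sg (s k) : ℂ) * b k := by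
      intro s
      rw [hrange s]
      unfold T
      calc ∑ k ∈ Finset.range (n + 1),
            (εf N s k : ℂ) * c k * Complex.exp (2 * (Real.pi : ℂ) * Complex.I * k * x)
          = ∑ k ∈ Finset.range (n + 1), (εf N s k : ℂ) *
              (if k < n + 1 then c k * Complex.exp (2 * (Real.pi : ℂ) * Complex.I * k * x)
               else 0) := by
            apply Finset.sum_congr rfl
            intro k hk
            rw [if_pos (Finset.mem_range.mp hk)]
            ring
        _ = ∑ k ∈ Finset.range (N + 1), (εf N s k : ℂ) *
              (if k < n + 1 then c k * Complex.exp (2 * (Real.pi : ℂ) * Complex.I * k * x)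
               else 0) := by
            apply Finset.sum_subset (Finset.range_subset_range.mpr (Nat.add_le_add_right hn 1))
            intro k _ hk
            rw [if_neg fun h => hk (Finset.mem_range.mpr h), mul_zero]
    have hbsum : ∑ k, ‖b k‖ ^ 2 = σ2 := by
      simp only [hbdef]
      rw [Fin.sum_univ_eq_sum_range (fun k => ‖if k < n + 1
        then c k * Complex.exp (2 * (Real.pi : ℂ) * Complex.I * k * x) else 0‖ ^ 2) (N + 1)]
      rw [hσ2def]
      calc ∑ k ∈ Finset.range (N + 1), ‖if k < n + 1
            then c k * Complex.exp (2 * (Real.pi : ℂ) * Complex.I * k * x) else 0‖ ^ 2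
          = ∑ k ∈ Finset.range (n + 1), ‖if k < n + 1
            then c k * Complex.exp (2 * (Real.pi : ℂ) * Complex.I * k * x) else 0‖ ^ 2 := by
            symm
            apply Finset.sum_subset (Finset.range_subset_range.mpr (Nat.add_le_add_right hn 1))
            intro k _ hk
            rw [if_neg fun h => hk (Finset.mem_range.mpr h)]
            simp
        _ = ∑ i ∈ Finset.range (n + 1), ‖c i‖ ^ 2 := by
            apply Finset.sum_congr rfl
            intro k hk
            rw [if_pos (Finset.mem_range.mp hk), norm_mul, norm_e, mul_one]
    have hfeq : (Finset.univ.filter fun s : Fin (N + 1) → Bool =>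
        8 * σ * Real.sqrt (Real.log ((n : ℝ) + 2)) < ‖T N c s n x‖)
        = Finset.univ.filter fun s : Fin (N + 1) → Bool =>
          8 * σ * Real.sqrt (Real.log ((n : ℝ) + 2)) < ‖∑ k, (sg (s k) : ℂ) * b k‖ := by
      apply Finset.filter_congr
      intro s _
      exact iff_of_eq (by rw [hT s])
    have hU : 0 ≤ 8 * σ * Real.sqrt (Real.log ((n : ℝ) + 2)) :=
      mul_nonneg (mul_nonneg (by norm_num) (Real.sqrt_nonneg _)) (Real.sqrt_nonneg _)
    have hball : ∑ k, ‖b k‖ ^ 2 ≤ σ ^ 2 := by rw [hbsum, hσsq]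
    have hct := ctail (N + 1) b σ _ hσ hball hU
    rw [hfeq]
    refine le_trans hct ?_
    have hlog : 0 ≤ Real.log ((n : ℝ) + 2) :=
      Real.log_nonneg (by have : (0:ℝ) ≤ (n:ℝ) := Nat.cast_nonneg n; linarith)
    have hU2 : (8 * σ * Real.sqrt (Real.log ((n : ℝ) + 2))) ^ 2
        = 64 * σ ^ 2 * Real.log ((n : ℝ) + 2) := by
      rw [mul_pow, mul_pow, Real.sq_sqrt hlog]
      ring
    have harg : -((8 * σ * Real.sqrt (Real.log ((n : ℝ) + 2))) ^ 2) / (4 * σ ^ 2)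
        = -(16 * Real.log ((n : ℝ) + 2)) := by
      rw [hU2]
      field_simp
      ring
    rw [harg]
    have hn2 : (0 : ℝ) < (n : ℝ) + 2 := by positivity
    have hexp : Real.exp (-(16 * Real.log ((n : ℝ) + 2))) = 1 / ((n : ℝ) + 2) ^ 16 := by
      rw [Real.exp_neg, show (16 : ℝ) * Real.log ((n : ℝ) + 2)
          = ((16 : ℕ) : ℝ) * Real.log ((n : ℝ) + 2) by norm_num,
        Real.exp_nat_mul, Real.exp_log hn2, one_div]
    rw [hexp]
    apply le_of_eq
    ring
  

set_option maxHeartbeats 1000000 in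
lemma good_signs (N : ℕ) (c : ℕ → ℂ) :
    ∃ s : Fin (N + 1) → Bool, ∀ n ∈ Finset.range (N + 1), ∀ j ∈ Finset.range (7 * (n + 1) ^ 3),
      ¬ (8 * Real.sqrt (∑ i ∈ Finset.range (n + 1), ‖c i‖ ^ 2)
            * Real.sqrt (Real.log ((n : ℝ) + 2))
          < ‖T N c s n ((j : ℝ) / ((7 * (n + 1) ^ 3 : ℕ) : ℝ))‖) := by
  classical
  by_contra hcon
  push_neg at hcon
  set P : ℕ → ℕ → (Fin (N + 1) → Bool) → Prop := fun n j s =>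
    8 * Real.sqrt (∑ i ∈ Finset.range (n + 1), ‖c i‖ ^ 2)
        * Real.sqrt (Real.log ((n : ℝ) + 2))
      < ‖T N c s n ((j : ℝ) / ((7 * (n + 1) ^ 3 : ℕ) : ℝ))‖ with hP
  set Bad := Finset.univ.filter (fun s : Fin (N + 1) → Bool =>
    ∃ n ∈ Finset.range (N + 1), ∃ j ∈ Finset.range (7 * (n + 1) ^ 3), P n j s) with hBad
  have hBadu : Bad = Finset.univ := by
    apply Finset.eq_univ_of_forall
    intro s
    apply Finset.mem_filter.mpr
    refine ⟨Finset.mem_univ s, ?_⟩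
    obtain ⟨n, hn, j, hj, h⟩ := hcon s
    exact ⟨n, hn, j, hj, h⟩
  have hsubB : Bad ⊆ (Finset.range (N + 1)).biUnion (fun n =>
      (Finset.range (7 * (n + 1) ^ 3)).biUnion (fun j =>
        Finset.univ.filter (P n j))) := by
    intro s hs
    obtain ⟨n, hn, j, hj, h⟩ := (Finset.mem_filter.mp hs).2
    exact Finset.mem_biUnion.mpr ⟨n, hn, Finset.mem_biUnion.mpr ⟨j, hj,
      Finset.mem_filter.mpr ⟨Finset.mem_univ s, h⟩⟩⟩
  have hcard1 : (Bad.card : ℝ)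
      ≤ ∑ n ∈ Finset.range (N + 1), ∑ j ∈ Finset.range (7 * (n + 1) ^ 3),
          ((Finset.univ.filter (P n j)).card : ℝ) := by
    have h1 := Finset.card_le_card hsubB
    have h2 := Finset.card_biUnion_le (s := Finset.range (N + 1)) (t := fun n =>
      (Finset.range (7 * (n + 1) ^ 3)).biUnion (fun j => Finset.univ.filter (P n j)))
    have h3 : ∑ n ∈ Finset.range (N + 1), ((Finset.range (7 * (n + 1) ^ 3)).biUnion
          (fun j => Finset.univ.filter (P n j))).card
        ≤ ∑ n ∈ Finset.range (N + 1), ∑ j ∈ Finset.range (7 * (n + 1) ^ 3),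
          (Finset.univ.filter (P n j)).card :=
      Finset.sum_le_sum fun n _ => Finset.card_biUnion_le
    have := le_trans h1 (le_trans h2 h3)
    calc (Bad.card : ℝ) ≤ ((∑ n ∈ Finset.range (N + 1), ∑ j ∈ Finset.range (7 * (n + 1) ^ 3),
          (Finset.univ.filter (P n j)).card : ℕ) : ℝ) := by exact_mod_cast this
      _ = ∑ n ∈ Finset.range (N + 1), ∑ j ∈ Finset.range (7 * (n + 1) ^ 3),
          ((Finset.univ.filter (P n j)).card : ℝ) := by push_cast; rfl
  have hcard2 : ∑ n ∈ Finset.range (N + 1), ∑ j ∈ Finset.range (7 * (n + 1) ^ 3),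
        ((Finset.univ.filter (P n j)).card : ℝ)
      ≤ ∑ n ∈ Finset.range (N + 1),
          (28 / 2048) * 2 ^ (N + 1) * (1 / ((n : ℝ) + 2) ^ 2) := by
    apply Finset.sum_le_sum
    intro n hn
    have hnN : n ≤ N := Nat.lt_succ_iff.mp (Finset.mem_range.mp hn)
    have hone : ∀ j ∈ Finset.range (7 * (n + 1) ^ 3),
        ((Finset.univ.filter (P n j)).card : ℝ) ≤ 4 * 2 ^ (N + 1) / ((n : ℝ) + 2) ^ 16 :=
      fun j _ => cardP N c n hnN _
    calc ∑ j ∈ Finset.range (7 * (n + 1) ^ 3), ((Finset.univ.filter (P n j)).card : ℝ)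
        ≤ ∑ j ∈ Finset.range (7 * (n + 1) ^ 3),
            (4 * 2 ^ (N + 1) / ((n : ℝ) + 2) ^ 16) := Finset.sum_le_sum hone
      _ = (7 * ((n : ℝ) + 1) ^ 3) * (4 * 2 ^ (N + 1) / ((n : ℝ) + 2) ^ 16) := by
          rw [Finset.sum_const, Finset.card_range, nsmul_eq_mul]
          push_cast
          ring
      _ ≤ (28 / 2048) * 2 ^ (N + 1) * (1 / ((n : ℝ) + 2) ^ 2) := by
          set t : ℝ := (n : ℝ) + 2 with ht
          have hn0 : (0 : ℝ) ≤ (n : ℝ) := Nat.cast_nonneg n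
          have ht2 : (2 : ℝ) ≤ t := by rw [ht]; linarith
          have ht0 : (0 : ℝ) < t := by linarith
          have h1 : ((n : ℝ) + 1) ^ 3 ≤ t ^ 3 := by
            apply pow_le_pow_left₀ (by linarith)
            rw [ht]; linarith
          have h4 : (2 : ℝ) ^ 11 ≤ t ^ 11 := pow_le_pow_left₀ (by norm_num) ht2 11
          have hkey : 2048 * (((n : ℝ) + 1) ^ 3 * t ^ 2) ≤ t ^ 16 := by
            have e1 : t ^ 16 = t ^ 11 * (t ^ 3 * t ^ 2) := by ring
            rw [e1]
            have h5 : ((n : ℝ) + 1) ^ 3 * t ^ 2 ≤ t ^ 3 * t ^ 2 :=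
              mul_le_mul_of_nonneg_right h1 (by positivity)
            have h6 : (2048 : ℝ) = 2 ^ 11 := by norm_num
            nlinarith [pow_pos ht0 3, pow_pos ht0 2, pow_pos ht0 11,
              mul_nonneg (pow_nonneg (by linarith : (0:ℝ) ≤ (n:ℝ)+1) 3) (pow_nonneg ht0.le 2)]
          rw [show 7 * ((n : ℝ) + 1) ^ 3 * (4 * 2 ^ (N + 1) / t ^ 16)
              = (28 * ((n : ℝ) + 1) ^ 3 * 2 ^ (N + 1)) / t ^ 16 by ring,
            show (28 / 2048 : ℝ) * 2 ^ (N + 1) * (1 / t ^ 2)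
              = (28 * 2 ^ (N + 1) / 2048) / t ^ 2 by ring,
            div_le_div_iff₀ (pow_pos ht0 16) (pow_pos ht0 2)]
          have hPpos : (0 : ℝ) < 2 ^ (N + 1) := by positivity
          have h7 := mul_le_mul_of_nonneg_left hkey (le_of_lt hPpos)
          ring_nf at h7 ⊢
          linarith
  have hsum : ∑ n ∈ Finset.range (N + 1),
      (28 / 2048) * 2 ^ (N + 1) * (1 / ((n : ℝ) + 2) ^ 2) < 2 ^ (N + 1) := by
    rw [← Finset.mul_sum]
    have h1 := sum_inv_sq_le (N + 1)
    have h2 : ∑ n ∈ Finset.range (N + 1), (1 : ℝ) / ((n : ℝ) + 2) ^ 2 ≤ 1 := by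
      have h3 : (0:ℝ) < (N : ℝ) + 1 + 1 := by positivity
      have := h1
      push_cast at this
      nlinarith [one_div_pos.mpr h3]
    have hP2 : (0 : ℝ) < 2 ^ (N + 1) := by positivity
    have hsum0 : 0 ≤ ∑ n ∈ Finset.range (N + 1), (1 : ℝ) / ((n : ℝ) + 2) ^ 2 :=
      Finset.sum_nonneg fun n _ => by positivity
    nlinarith
  have hcardu : ((Finset.univ : Finset (Fin (N + 1) → Bool)).card : ℝ) = 2 ^ (N + 1) := by
    rw [Finset.card_univ]
    rw [Fintype.card_fun]
    simp
  rw [hBadu, hcardu] at hcard1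
  linarith [le_trans hcard1 hcard2, hsum]

end SZ

open SZ in
set_option maxHeartbeats 1000000 in
/-- Salem–Zygmund sign choice: ‖S_n^ε‖_∞ ≤ C log(n+2)^{1/2} ‖S_n‖₂
simultaneously for all n ≤ N. -/
theorem stmt17 :
    ∃ C : ℝ, ∀ (N : ℕ) (c : ℕ → ℂ),
      ∃ ε : ℕ → ℝ, (∀ k, ε k = 1 ∨ ε k = -1) ∧
        ∀ n : ℕ, n ≤ N → ∀ x : ℝ,
          ‖∑ k ∈ Finset.range (n + 1),
              (ε k : ℂ) * c k * Complex.exp (2 * Real.pi * Complex.I * k * x)‖ ≤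
            C * Real.sqrt (Real.log ((n : ℝ) + 2)) *
              Real.sqrt (∑ j ∈ Finset.range (n + 1), ‖c j‖ ^ 2) := by
  refine ⟨10, fun N c => ?_⟩
  obtain ⟨s, hs⟩ := good_signs N c
  refine ⟨εf N s, fun k => εf_eq N s k, ?_⟩
  intro n hn x
  show ‖T N c s n x‖ ≤ _
  set σ2 := ∑ i ∈ Finset.range (n + 1), ‖c i‖ ^ 2 with hσ2def
  have hσ2 : 0 ≤ σ2 := Finset.sum_nonneg fun i _ => by positivity
  set L := Real.sqrt (Real.log ((n : ℝ) + 2)) with hLdef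
  have hL0 : 0 ≤ L := Real.sqrt_nonneg _
  rcases hσ2.eq_or_lt with hz | hpos
  · have hT0 : T N c s n x = 0 := by
      apply Finset.sum_eq_zero
      intro k hk
      have h1 : ∀ j ∈ Finset.range (n + 1), (0 : ℝ) ≤ ‖c j‖ ^ 2 := fun j _ => by positivity
      have h2 := (Finset.sum_eq_zero_iff_of_nonneg h1).mp hz.symm k hk
      have h3 : ‖c k‖ = 0 := by nlinarith [norm_nonneg (c k)]
      rw [norm_eq_zero.mp h3]
      ring
    rw [hT0, ← hz, norm_zero, Real.sqrt_zero, mul_zero]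
  · set σ := Real.sqrt σ2 with hσdef
    have hσ : 0 < σ := Real.sqrt_pos.mpr hpos
    have hσsq : σ ^ 2 = σ2 := Real.sq_sqrt hσ2
    set M : ℕ := 7 * (n + 1) ^ 3 with hMdef
    have hMR : ((M : ℕ) : ℝ) = 7 * ((n : ℝ) + 1) ^ 3 := by rw [hMdef]; push_cast; ring
    have hMpos : (0 : ℝ) < (M : ℝ) := by rw [hMR]; positivity
    set y := Int.fract x with hydef
    have hy0 : 0 ≤ y := Int.fract_nonneg x
    have hy1 : y < 1 := Int.fract_lt_one x
    set j : ℕ := ⌊(M : ℝ) * y⌋₊ with hjdef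
    have hjM : j < M := by
      have : (M : ℝ) * y < (M : ℝ) := by nlinarith
      have h2 : (M : ℝ) * y < ((M : ℕ) : ℝ) := this
      exact_mod_cast Nat.floor_lt (by positivity) |>.mpr h2
    have hjy : |y - (j : ℝ) / (M : ℝ)| ≤ 1 / (M : ℝ) := by
      have hfl : ((j : ℕ) : ℝ) ≤ (M : ℝ) * y := Nat.floor_le (by positivity)
      have hfu : (M : ℝ) * y < (j : ℝ) + 1 := Nat.lt_floor_add_one _
      have hd1 : (j : ℝ) / (M : ℝ) ≤ y := by rw [div_le_iff₀ hMpos]; nlinarith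
      have hd2 : y ≤ ((j : ℝ) + 1) / (M : ℝ) := by rw [le_div_iff₀ hMpos]; nlinarith
      have h3 : ((j : ℝ) + 1) / (M : ℝ) = (j : ℝ) / (M : ℝ) + 1 / (M : ℝ) := by ring
      have h4 : (0 : ℝ) < 1 / (M : ℝ) := by positivity
      rw [abs_le]
      constructor <;> [linarith; linarith]
    set xg : ℝ := (j : ℝ) / (M : ℝ) with hxgdef
    have hgood : ‖T N c s n xg‖ ≤ 8 * σ * L := by
      have := hs n (Finset.mem_range.mpr (Nat.lt_succ_of_le hn)) j (Finset.mem_range.mpr hjM)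
      rw [not_lt] at this
      exact this
    have hperiod : T N c s n x = T N c s n y := by
      apply Finset.sum_congr rfl
      intro k _
      rw [e_fract k x]
    -- Cauchy-Schwarz
    have hCS : ∑ k ∈ Finset.range (n + 1), ‖c k‖ ≤ Real.sqrt ((n : ℝ) + 1) * σ := by
      have h1 := sq_sum_le_card_mul_sum_sq (s := Finset.range (n + 1))
        (f := fun k => ‖c k‖)
      rw [Finset.card_range] at h1
      have h2 : (∑ k ∈ Finset.range (n + 1), ‖c k‖) ^ 2 ≤ ((n : ℝ) + 1) * σ2 := by
        rw [hσ2def]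
        exact_mod_cast h1
      have h3 : 0 ≤ ∑ k ∈ Finset.range (n + 1), ‖c k‖ :=
        Finset.sum_nonneg fun k _ => norm_nonneg _
      calc ∑ k ∈ Finset.range (n + 1), ‖c k‖
          = Real.sqrt ((∑ k ∈ Finset.range (n + 1), ‖c k‖) ^ 2) :=
            (Real.sqrt_sq h3).symm
        _ ≤ Real.sqrt (((n : ℝ) + 1) * σ2) := Real.sqrt_le_sqrt h2
        _ = Real.sqrt ((n : ℝ) + 1) * σ := by
            rw [Real.sqrt_mul (by positivity)]
    have hsqn : Real.sqrt ((n : ℝ) + 1) ≤ (n : ℝ) + 1 := by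
      have h1 : Real.sqrt ((n : ℝ) + 1) ≤ Real.sqrt (((n : ℝ) + 1) ^ 2) :=
        Real.sqrt_le_sqrt (by nlinarith [(by positivity : (0:ℝ) ≤ (n:ℝ))])
      rwa [Real.sqrt_sq (by positivity)] at h1
    have hdiff : ‖T N c s n y - T N c s n xg‖ ≤ σ := by
      have hterm : ∀ k ∈ Finset.range (n + 1),
          ‖(εf N s k : ℂ) * c k * Complex.exp (2 * (Real.pi : ℂ) * Complex.I * k * y)
            - (εf N s k : ℂ) * c k *
              Complex.exp (2 * (Real.pi : ℂ) * Complex.I * k * xg)‖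
          ≤ ‖c k‖ * (2 * Real.pi * n / (M : ℝ)) := by
        intro k hk
        have hkn : (k : ℝ) ≤ (n : ℝ) := by
          exact_mod_cast Nat.lt_succ_iff.mp (Finset.mem_range.mp hk)
        rw [show (εf N s k : ℂ) * c k * Complex.exp (2 * (Real.pi : ℂ) * Complex.I * k * y)
            - (εf N s k : ℂ) * c k *
              Complex.exp (2 * (Real.pi : ℂ) * Complex.I * k * xg)
            = (εf N s k : ℂ) * c k *
              (Complex.exp (2 * (Real.pi : ℂ) * Complex.I * k * y)
                - Complex.exp (2 * (Real.pi : ℂ) * Complex.I * k * xg))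
          by ring]
        rw [norm_mul, norm_mul, Complex.norm_real, Real.norm_eq_abs, abs_εf, one_mul]
        have hes := norm_e_sub k y xg
        have h2 : 2 * Real.pi * (k : ℝ) * |y - xg|
            ≤ 2 * Real.pi * n / (M : ℝ) := by
          have hπ : (0 : ℝ) < Real.pi := Real.pi_pos
          have habs : 0 ≤ |y - xg| := abs_nonneg _
          have hk0 : (0 : ℝ) ≤ (k : ℝ) := Nat.cast_nonneg k
          rw [div_eq_mul_inv]
          have h3 : 2 * Real.pi * (k : ℝ) * |y - xg|
              ≤ 2 * Real.pi * (n : ℝ) * (1 / (M : ℝ)) := by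
            apply mul_le_mul (by nlinarith) hjy habs (by positivity)
          calc 2 * Real.pi * (k : ℝ) * |y - xg|
              ≤ 2 * Real.pi * (n : ℝ) * (1 / (M : ℝ)) := h3
            _ = 2 * Real.pi * (n : ℝ) * ((M : ℝ))⁻¹ := by rw [one_div]
          
        calc ‖c k‖ * ‖Complex.exp (2 * (Real.pi : ℂ) * Complex.I * k * y)
              - Complex.exp (2 * (Real.pi : ℂ) * Complex.I * k * xg)‖
            ≤ ‖c k‖ * (2 * Real.pi * (k : ℝ) * |y - xg|) :=
              mul_le_mul_of_nonneg_left hes (norm_nonneg _)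
          _ ≤ ‖c k‖ * (2 * Real.pi * n / (M : ℝ)) :=
              mul_le_mul_of_nonneg_left h2 (norm_nonneg _)
      calc ‖T N c s n y - T N c s n xg‖
          = ‖∑ k ∈ Finset.range (n + 1),
              ((εf N s k : ℂ) * c k * Complex.exp (2 * (Real.pi : ℂ) * Complex.I * k * y)
                - (εf N s k : ℂ) * c k *
                  Complex.exp (2 * (Real.pi : ℂ) * Complex.I * k * xg))‖ := by
            unfold T
            rw [Finset.sum_sub_distrib]
        _ ≤ ∑ k ∈ Finset.range (n + 1),
              ‖(εf N s k : ℂ) * c k * Complex.exp (2 * (Real.pi : ℂ) * Complex.I * k * y)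
                - (εf N s k : ℂ) * c k *
                  Complex.exp (2 * (Real.pi : ℂ) * Complex.I * k * xg)‖ :=
            norm_sum_le _ _
        _ ≤ ∑ k ∈ Finset.range (n + 1), ‖c k‖ * (2 * Real.pi * n / (M : ℝ)) :=
            Finset.sum_le_sum hterm
        _ = (∑ k ∈ Finset.range (n + 1), ‖c k‖) * (2 * Real.pi * n / (M : ℝ)) := by
            rw [← Finset.sum_mul]
        _ ≤ (Real.sqrt ((n : ℝ) + 1) * σ) * (2 * Real.pi * n / (M : ℝ)) := by
            apply mul_le_mul_of_nonneg_right hCS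
            positivity
        _ ≤ σ := by
            have hπ : Real.pi < 3.15 := Real.pi_lt_d2
            have hπ0 : 0 < Real.pi := Real.pi_pos
            have hn0 : (0 : ℝ) ≤ (n : ℝ) := Nat.cast_nonneg n
            have hs0 : 0 ≤ Real.sqrt ((n : ℝ) + 1) := Real.sqrt_nonneg _
            rw [mul_div_assoc', div_le_iff₀ hMpos, hMR]
            have h1 : Real.sqrt ((n : ℝ) + 1) * (2 * Real.pi * (n : ℝ))
                ≤ ((n : ℝ) + 1) * (2 * Real.pi * (n : ℝ)) :=
              mul_le_mul_of_nonneg_right hsqn (by positivity)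
            have h2 : ((n : ℝ) + 1) * (2 * Real.pi * (n : ℝ)) ≤ 7 * ((n : ℝ) + 1) ^ 3 := by
              nlinarith
            have h3 := mul_le_mul_of_nonneg_left (h1.trans h2) hσ.le
            nlinarith
    have hL2 : 1 ≤ 2 * L := by
      have hlog2 : (1 / 4 : ℝ) ≤ Real.log ((n : ℝ) + 2) := by
        have h1 : Real.log 2 ≤ Real.log ((n : ℝ) + 2) := by
          apply Real.log_le_log (by norm_num)
          have : (0 : ℝ) ≤ (n : ℝ) := Nat.cast_nonneg n
          linarith
        have h2 := Real.log_two_gt_d9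
        linarith
      have h4 : (1 / 2 : ℝ) ≤ L := by
        rw [hLdef]
        have h3 : Real.sqrt (1 / 4) ≤ Real.sqrt (Real.log ((n : ℝ) + 2)) :=
          Real.sqrt_le_sqrt hlog2
        rwa [show (1 / 4 : ℝ) = (1 / 2) ^ 2 by norm_num, Real.sqrt_sq (by norm_num)] at h3
      linarith
    calc ‖T N c s n x‖ = ‖T N c s n y‖ := by rw [hperiod]
      _ = ‖T N c s n xg + (T N c s n y - T N c s n xg)‖ := congrArg norm (by ring)
      _ ≤ ‖T N c s n xg‖ + ‖T N c s n y - T N c s n xg‖ := norm_add_le _ _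
      _ ≤ 8 * σ * L + σ := add_le_add hgood hdiff
      _ ≤ 10 * L * σ := by
          nlinarith [mul_nonneg (by linarith : (0 : ℝ) ≤ 2 * L - 1) hσ.le]
end
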